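/- arXiv:1302.4235 — 10 statements merged into one kernel-verified Lean document; each statement's English description precedes it below -/
import Mathlib

section
/- Let K be a field, (a_k)_{k≥0} a sequence in K, and (b_k)_{k≥−1} a nondecreasing sequence of integers with b_{−1} = −1, b_0 = 0 and b_{k+2} − b_k ≥ 1 for all k ≥ −1. Suppose f = ∑_{n≥0} f_n x^n is a formal power series over K for which there exists a sequence of formal power series (F^{(k)})_{k≥0} with F^{(0)} = f and F^{(k)} · (1 − a_k x^{b_{k+1}−b_{k−1}} F^{(k+1)}) = 1 for all k ≥ 0. Let A_n(x), B_n(x) be the polynomials defined by A_0 = 0, A_1 = 1, B_0 = 1, B_1 = 1 and, for n ≥ 2, A_n = A_{n−1} − a_{n−2} x^{b_{n−1}−b_{n−3}} A_{n−2} and B_n = B_{n−1} − a_{n−2} x^{b_{n−1}−b_{n−3}} B_{n−2}. Then for every k ≥ 0, the coefficient of x^n in the power series B_k(x)·f(x) − A_k(x) is 0 for all n with b_{k−1} < n ≤ b_{k−1} + b_k, and the coefficient of x^{b_{k−1}+b_k+1} equals a_0 a_1 ⋯ a_{k−1}. -/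
/-- If `f` is given by the C-fraction with coefficients `a_k` and exponents
`b_{k+1} − b_{k−1}`, then the coefficients of `B_k(x)·f(x) − A_k(x)` vanish for
`b_{k−1} < n ≤ b_{k−1} + b_k`, and the coefficient of `x^{b_{k−1}+b_k+1}` equals
`a₀ a₁ ⋯ a_{k−1}`. -/
theorem cFrac_approximation {K : Type*} [Field K] (a : ℕ → K) (b : ℤ → ℤ)
    (hbneg : b (-1) = -1) (hb0 : b 0 = 0)
    (hmono : ∀ k : ℤ, -1 ≤ k → b k ≤ b (k + 1))
    (hgap : ∀ k : ℤ, -1 ≤ k → 1 ≤ b (k + 2) - b k)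
    (f : PowerSeries K) (F : ℕ → PowerSeries K) (hF0 : F 0 = f)
    (hF : ∀ k : ℕ, F k * (1 - PowerSeries.C (R := K) (a k) *
      PowerSeries.X ^ (b ((k : ℤ) + 1) - b ((k : ℤ) - 1)).toNat * F (k + 1)) = 1)
    (A B : ℕ → Polynomial K)
    (hA0 : A 0 = 0) (hA1 : A 1 = 1) (hB0 : B 0 = 1) (hB1 : B 1 = 1)
    (hArec : ∀ n : ℕ, A (n + 2) = A (n + 1) -
      Polynomial.C (a n) * Polynomial.X ^ (b ((n : ℤ) + 1) - b ((n : ℤ) - 1)).toNat * A n)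
    (hBrec : ∀ n : ℕ, B (n + 2) = B (n + 1) -
      Polynomial.C (a n) * Polynomial.X ^ (b ((n : ℤ) + 1) - b ((n : ℤ) - 1)).toNat * B n) :
    ∀ k : ℕ,
      (∀ n : ℕ, b ((k : ℤ) - 1) < (n : ℤ) → (n : ℤ) ≤ b ((k : ℤ) - 1) + b (k : ℤ) →
        PowerSeries.coeff (R := K) n ((B k : PowerSeries K) * f - (A k : PowerSeries K)) = 0) ∧
      PowerSeries.coeff (R := K) (b ((k : ℤ) - 1) + b (k : ℤ) + 1).toNat
          ((B k : PowerSeries K) * f - (A k : PowerSeries K)) =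
        ∏ i ∈ Finset.range k, a i := by
  classical
  set m : ℕ → ℕ := fun k => (b ((k : ℤ) + 1) - b ((k : ℤ) - 1)).toNat with hmdef
  have hm_pos : ∀ k : ℕ, 1 ≤ b ((k : ℤ) + 1) - b ((k : ℤ) - 1) := by
    intro k
    have h := hgap ((k : ℤ) - 1) (by omega)
    have : (k : ℤ) - 1 + 2 = (k : ℤ) + 1 := by ring
    rwa [this] at h
  have hm_one : ∀ k : ℕ, 1 ≤ m k := by
    intro k
    have h := hm_pos k
    have hh : m k = (b ((k : ℤ) + 1) - b ((k : ℤ) - 1)).toNat := rfl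
    omega
  have hm_cast : ∀ k : ℕ, ((m k : ℤ)) = b ((k : ℤ) + 1) - b ((k : ℤ) - 1) := by
    intro k
    simp only [hmdef]
    exact Int.toNat_of_nonneg (by linarith [hm_pos k])
  -- constant coefficient of each F k is 1
  have hFc : ∀ k : ℕ, PowerSeries.constantCoeff (R := K) (F k) = 1 := by
    intro k
    have h := congrArg (PowerSeries.constantCoeff (R := K)) (hF k)
    simp only [map_mul, map_sub, map_one, map_pow, PowerSeries.constantCoeff_X,
      PowerSeries.constantCoeff_C] at h
    rw [zero_pow (show (b ((k : ℤ) + 1) - b ((k : ℤ) - 1)).toNat ≠ 0 by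
      have := hm_pos k; omega)] at h
    simpa using h
  -- F k - 1 = a_k x^{m k} F k F (k+1)
  have hFm : ∀ k : ℕ, F k - 1 =
      PowerSeries.C (R := K) (a k) * PowerSeries.X ^ (m k) * (F k * F (k + 1)) := by
    intro k
    linear_combination hF k
  -- one-step relation
  have step : ∀ k : ℕ, (B (k + 1) : PowerSeries K) * f - (A (k + 1) : PowerSeries K) =
      PowerSeries.C (R := K) (a k) * PowerSeries.X ^ (m k) * F (k + 1) *
        ((B k : PowerSeries K) * f - (A k : PowerSeries K)) := by
    intro k
    induction k with
    | zero =>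
      rw [hA0, hA1, hB0, hB1]
      push_cast
      have h0 := hFm 0
      rw [hF0] at h0
      linear_combination h0
    | succ k ih =>
      have hAc : ((A (k + 2) : Polynomial K) : PowerSeries K) =
          (A (k + 1) : PowerSeries K) -
            PowerSeries.C (R := K) (a k) * PowerSeries.X ^ (m k) * (A k : PowerSeries K) := by
        rw [hArec k]; push_cast; ring
      have hBc : ((B (k + 2) : Polynomial K) : PowerSeries K) =
          (B (k + 1) : PowerSeries K) -
            PowerSeries.C (R := K) (a k) * PowerSeries.X ^ (m k) * (B k : PowerSeries K) := by
        rw [hBrec k]; push_cast; ring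
      rw [hAc, hBc]
      have h1 := hFm (k + 1)
      linear_combination (PowerSeries.C (R := K) (a k) * PowerSeries.X ^ (m k) *
          ((B k : PowerSeries K) * f - (A k : PowerSeries K))) * h1 +
        (1 - PowerSeries.C (R := K) (a (k + 1)) * PowerSeries.X ^ (m (k + 1)) * F (k + 1 + 1)) * ih
  -- closed form
  have key : ∀ k : ℕ, (B k : PowerSeries K) * f - (A k : PowerSeries K) =
      PowerSeries.C (R := K) (∏ i ∈ Finset.range k, a i) *
        PowerSeries.X ^ (∑ i ∈ Finset.range k, m i) *
        (f * ∏ i ∈ Finset.range k, F (i + 1)) := by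
    intro k
    induction k with
    | zero => simp [hA0, hB0]
    | succ k ih =>
      rw [step k, ih, Finset.prod_range_succ, Finset.sum_range_succ,
        Finset.prod_range_succ, map_mul, pow_add]
      ring
  -- the exponent sum
  have hN : ∀ k : ℕ, ((∑ i ∈ Finset.range k, m i : ℕ) : ℤ) =
      b ((k : ℤ) - 1) + b (k : ℤ) + 1 := by
    intro k
    induction k with
    | zero => simp [hbneg, hb0]
    | succ k ih =>
      rw [Finset.sum_range_succ]
      push_cast
      rw [hm_cast k]
      push_cast at ih
      have e1 : ((k : ℤ) + 1 - 1) = (k : ℤ) := by ring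
      rw [e1]
      linarith [ih]
  -- constant coefficient of the unit part
  have hQc : ∀ k : ℕ,
      PowerSeries.constantCoeff (R := K) (f * ∏ i ∈ Finset.range k, F (i + 1)) = 1 := by
    intro k
    rw [map_mul, map_prod]
    rw [← hF0, hFc 0]
    simp [hFc]
  intro k
  set N : ℕ := ∑ i ∈ Finset.range k, m i with hNdef
  have hNval : (N : ℤ) = b ((k : ℤ) - 1) + b (k : ℤ) + 1 := hN k
  constructor
  · intro n h1 h2
    rw [key k]
    have hlt : n < N := by omega
    have hdvd : (PowerSeries.X : PowerSeries K) ^ N ∣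
        PowerSeries.C (R := K) (∏ i ∈ Finset.range k, a i) * PowerSeries.X ^ N *
          (f * ∏ i ∈ Finset.range k, F (i + 1)) :=
      ⟨PowerSeries.C (R := K) (∏ i ∈ Finset.range k, a i) *
        (f * ∏ i ∈ Finset.range k, F (i + 1)), by ring⟩
    exact (PowerSeries.X_pow_dvd_iff.mp hdvd) n hlt
  · have hidx : (b ((k : ℤ) - 1) + b (k : ℤ) + 1).toNat = N := by omega
    rw [hidx, key k]
    have hcm : PowerSeries.C (R := K) (∏ i ∈ Finset.range k, a i) * PowerSeries.X ^ N *
        (f * ∏ i ∈ Finset.range k, F (i + 1)) =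
        PowerSeries.X ^ N * (PowerSeries.C (R := K) (∏ i ∈ Finset.range k, a i) *
          (f * ∏ i ∈ Finset.range k, F (i + 1))) := by ring
    rw [hcm]
    have := PowerSeries.coeff_X_pow_mul
      (PowerSeries.C (R := K) (∏ i ∈ Finset.range k, a i) *
        (f * ∏ i ∈ Finset.range k, F (i + 1))) N 0
    rw [zero_add] at this
    rw [this, PowerSeries.coeff_zero_eq_constantCoeff, map_mul,
      PowerSeries.constantCoeff_C, hQc k, mul_one]
end

section
/- Let K be a field, (a_k)_{k≥0} a sequence in K, and (b_k)_{k≥−1} a nondecreasing sequence of integers with b_{−1} = −1, b_0 = 0 and b_{k+2} − b_k ≥ 1 for all k ≥ −1. Suppose f = ∑_{n≥0} f_n x^n is a formal power series over K given by the C-fraction with coefficients (a_k) and exponents m_k = b_{k+1} − b_{k−1}, i.e. there exist formal power series (F^{(k)})_{k≥0} with F^{(0)} = f and F^{(k)} · (1 − a_k x^{m_k} F^{(k+1)}) = 1 for all k. Let Λ be the linear functional on K[x] with Λ(x^n) = f_n, and let r_k(x) be the polynomials defined by r_0 = 1, r_1 = x and r_k = x^{b_{k−1}−b_{k−2}} r_{k−1}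 − a_{k−2} r_{k−2} for k ≥ 2. Then for every k ≥ 0: Λ(r_k(x) x^n) = 0 for all integers n with 0 ≤ n < b_k, and Λ(r_k(x) x^{b_k}) = a_0 a_1 ⋯ a_{k−1}. -/
private noncomputable def cfQ {K : Type*} [Field K] (a : ℕ → K) (m : ℕ → ℕ) : ℕ → PowerSeries K
  | 0 => 1
  | 1 => 1
  | k+2 => cfQ a m (k+1) - PowerSeries.C (a k) * PowerSeries.X ^ m k * cfQ a m k

private noncomputable def cfP {K : Type*} [Field K] (a : ℕ → K) (m : ℕ → ℕ) : ℕ → PowerSeries K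
  | 0 => 0
  | 1 => 1
  | k+2 => cfP a m (k+1) - PowerSeries.C (a k) * PowerSeries.X ^ m k * cfP a m k

/-- Generalized orthogonality: if `f` is given by the C-fraction with coefficients `a_k`
and exponents `b_{k+1} − b_{k−1}`, `Λ` is the linear functional with `Λ(xⁿ) = fₙ`, and
`r_k` are the associated polynomials, then `Λ(r_k(x) xⁿ) = 0` for `n < b_k` and
`Λ(r_k(x) x^{b_k}) = a₀ ⋯ a_{k−1}`. -/
theorem cFrac_orthogonality {K : Type*} [Field K] (a : ℕ → K) (b : ℤ → ℤ)
    (hbneg : b (-1) = -1) (hb0 : b 0 = 0)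
    (hmono : ∀ k : ℤ, -1 ≤ k → b k ≤ b (k + 1))
    (hgap : ∀ k : ℤ, -1 ≤ k → 1 ≤ b (k + 2) - b k)
    (f : PowerSeries K) (F : ℕ → PowerSeries K) (hF0 : F 0 = f)
    (hF : ∀ k : ℕ, F k * (1 - PowerSeries.C (a k) *
      PowerSeries.X ^ (b ((k : ℤ) + 1) - b ((k : ℤ) - 1)).toNat * F (k + 1)) = 1)
    (Λ : Polynomial K →ₗ[K] K)
    (hΛ : ∀ n : ℕ, Λ (Polynomial.X ^ n) = PowerSeries.coeff n f)
    (r : ℕ → Polynomial K)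
    (hr0 : r 0 = 1) (hr1 : r 1 = Polynomial.X)
    (hrrec : ∀ k : ℕ, r (k + 2) =
      Polynomial.X ^ (b ((k : ℤ) + 1) - b (k : ℤ)).toNat * r (k + 1) -
        Polynomial.C (a k) * r k) :
    ∀ k : ℕ,
      (∀ n : ℕ, (n : ℤ) < b (k : ℤ) → Λ (r k * Polynomial.X ^ n) = 0) ∧
      Λ (r k * Polynomial.X ^ (b (k : ℤ)).toNat) = ∏ i ∈ Finset.range k, a i := by
  classical
  -- monotonicity of b
  have mono : ∀ i j : ℤ, -1 ≤ i → i ≤ j → b i ≤ b j := by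
    intro i j hi hij
    obtain ⟨n, rfl⟩ : ∃ n : ℕ, j = i + n := ⟨(j - i).toNat, by omega⟩
    clear hij
    induction n with
    | zero => simp
    | succ n ih =>
      have h1 := hmono (i + (n : ℤ)) (by omega)
      have e1 : i + (((n : ℕ) + 1 : ℕ) : ℤ) = i + (n : ℤ) + 1 := by push_cast; ring
      rw [e1]
      exact ih.trans h1
  have hbge : ∀ j : ℤ, -1 ≤ j → -1 ≤ b j := by
    intro j hj
    have := mono (-1) j le_rfl hj
    omega
  -- abstract the exponent functions
  obtain ⟨m, hm⟩ : ∃ m : ℕ → ℕ, ∀ k : ℕ,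
      (b ((k : ℤ) + 1) - b ((k : ℤ) - 1)).toNat = m k := ⟨_, fun _ => rfl⟩
  obtain ⟨e, he⟩ : ∃ e : ℕ → ℕ, ∀ k : ℕ,
      (b ((k : ℤ) + 1) - b (k : ℤ)).toNat = e k := ⟨_, fun _ => rfl⟩
  simp only [hm] at hF
  simp only [he] at hrrec
  -- integer values
  have hmZ : ∀ k : ℕ, (m k : ℤ) = b ((k : ℤ) + 1) - b ((k : ℤ) - 1) := by
    intro k
    have h1 : b ((k : ℤ) - 1) ≤ b ((k : ℤ) + 1) := mono _ _ (by omega) (by omega)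
    rw [← hm k]; omega
  have heZ : ∀ k : ℕ, (e k : ℤ) = b ((k : ℤ) + 1) - b (k : ℤ) := by
    intro k
    have h1 : b (k : ℤ) ≤ b ((k : ℤ) + 1) := hmono _ (by omega)
    rw [← he k]; omega
  have hm1 : ∀ k : ℕ, 1 ≤ m k := by
    intro k
    have h1 := hgap ((k : ℤ) - 1) (by omega)
    have e1 : (k:ℤ) - 1 + 2 = (k:ℤ) + 1 := by ring
    rw [e1] at h1
    have h2 := hmZ k
    omega
  -- D k = b_{k-1} + 1
  obtain ⟨D, hD⟩ : ∃ D : ℕ → ℕ, ∀ k : ℕ,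
      (b ((k : ℤ) - 1) + 1).toNat = D k := ⟨_, fun _ => rfl⟩
  have hDZ : ∀ k : ℕ, (D k : ℤ) = b ((k : ℤ) - 1) + 1 := by
    intro k
    have h1 := hbge ((k : ℤ) - 1) (by omega)
    rw [← hD k]; omega
  -- arithmetic identities
  have hD0 : D 0 = 0 := by have := hDZ 0; rw [show ((0:ℕ):ℤ) - 1 = -1 by norm_num, hbneg] at this; omega
  have hD1 : D 1 = 1 := by have := hDZ 1; rw [show ((1:ℕ):ℤ) - 1 = 0 by norm_num, hb0] at this; omega
  have hDe : ∀ k : ℕ, D (k+2) = e k + D (k+1) := by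
    intro k
    have h1 := hDZ (k+2); have h2 := hDZ (k+1); have h3 := heZ k
    have e1 : ((k:ℤ)+2) - 1 = (k:ℤ) + 1 := by ring
    have e2 : ((k:ℤ)+1) - 1 = (k:ℤ) := by ring
    push_cast at h1 h2
    rw [e1] at h1; rw [e2] at h2
    omega
  have hDm : ∀ k : ℕ, D (k+2) = m k + D k := by
    intro k
    have h1 := hDZ (k+2); have h2 := hDZ k; have h3 := hmZ k
    have e1 : ((k:ℤ)+2) - 1 = (k:ℤ) + 1 := by ring
    push_cast at h1
    rw [e1] at h1
    omega
  -- constant coefficients of F are 1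
  have hFone : ∀ k : ℕ, PowerSeries.constantCoeff (F k) = 1 := by
    intro k
    have hmk := hm1 k
    have h := congrArg (PowerSeries.constantCoeff) (hF k)
    have hx : PowerSeries.constantCoeff (PowerSeries.X ^ m k : PowerSeries K) = 0 := by
      rw [map_pow, PowerSeries.constantCoeff_X, zero_pow (by omega : m k ≠ 0)]
    simp [map_mul, map_sub, hx] at h
    exact h
  have hfone : PowerSeries.constantCoeff f = 1 := by rw [← hF0]; exact hFone 0
  -- sum of exponents
  obtain ⟨M, hMdef⟩ : ∃ M : ℕ → ℕ, ∀ k : ℕ, M k = ∑ i ∈ Finset.range k, m i :=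
    ⟨_, fun _ => rfl⟩
  have hMZ : ∀ k : ℕ, (M k : ℤ) = b (k : ℤ) + b ((k : ℤ) - 1) + 1 := by
    intro k
    induction k with
    | zero =>
      rw [hMdef]
      simp [show ((0:ℕ):ℤ) - 1 = -1 by norm_num, hbneg, hb0]
    | succ n ih =>
      have h1 : M (n+1) = M n + m n := by rw [hMdef, hMdef, Finset.sum_range_succ]
      have h2 := hmZ n
      have e1 : ((n:ℤ)+1) - 1 = (n:ℤ) := by ring
      have e2 : (((n+1:ℕ)):ℤ) = (n:ℤ) + 1 := by push_cast; ring
      rw [e2, e1]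
      have e3 : (M (n+1) : ℤ) = (M n : ℤ) + (m n : ℤ) := by exact_mod_cast congrArg (Nat.cast (R := ℤ)) h1
      omega
  -- coefficients of the numerators cfP vanish in high degree
  have hPkey : ∀ k : ℕ,
      (∀ j : ℕ, D k ≤ j → PowerSeries.coeff j (cfP a m k) = 0) ∧
      (∀ j : ℕ, D (k+1) ≤ j → PowerSeries.coeff j (cfP a m (k+1)) = 0) := by
    intro k
    induction k with
    | zero =>
      constructor
      · intro j hj; simp [cfP]
      · intro j hj
        rw [hD1] at hj
        have hj0 : j ≠ 0 := by omega
        simp [cfP, PowerSeries.coeff_one, hj0]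
    | succ n ih =>
      refine ⟨ih.2, ?_⟩
      intro j hj
      have hDe' : D (n+1+1) = e n + D (n+1) := hDe n
      have hDm' : D (n+1+1) = m n + D n := hDm n
      have hcf : cfP a m (n+1+1) = cfP a m (n+1)
          - PowerSeries.C (a n) * PowerSeries.X ^ m n * cfP a m n := rfl
      rw [hcf, map_sub, ih.2 j (by omega), mul_assoc, PowerSeries.coeff_C_mul,
        PowerSeries.coeff_X_pow_mul']
      split_ifs with h
      · rw [ih.1 (j - m n) (by omega)]; ring
      · ring
  have hPcoeff : ∀ k : ℕ, ∀ j : ℕ, D k ≤ j → PowerSeries.coeff j (cfP a m k) = 0 :=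
    fun k => (hPkey k).1
  -- the fundamental identity  f·Q_k − P_k = (∏ aᵢ X^{mᵢ} F_{i+1}) · f
  have hQPkey : ∀ k : ℕ,
      (f * cfQ a m k - cfP a m k =
        (∏ i ∈ Finset.range k,
          (PowerSeries.C (a i) * PowerSeries.X ^ m i * F (i+1))) * f) ∧
      (f * cfQ a m (k+1) - cfP a m (k+1) =
        (∏ i ∈ Finset.range (k+1),
          (PowerSeries.C (a i) * PowerSeries.X ^ m i * F (i+1))) * f) := by
    intro k
    induction k with
    | zero =>
      constructor
      · simp [cfQ, cfP]
      · have h0 := hF 0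
        rw [hF0] at h0
        have hcq : cfQ a m 1 = 1 := rfl
        have hcp : cfP a m 1 = 1 := rfl
        rw [hcq, hcp, Finset.prod_range_one]
        linear_combination h0
    | succ n ih =>
      obtain ⟨ih1, ih2⟩ := ih
      refine ⟨ih2, ?_⟩
      have hfn := hF (n+1)
      have hcq : cfQ a m (n+1+1) = cfQ a m (n+1)
          - PowerSeries.C (a n) * PowerSeries.X ^ m n * cfQ a m n := rfl
      have hcp : cfP a m (n+1+1) = cfP a m (n+1)
          - PowerSeries.C (a n) * PowerSeries.X ^ m n * cfP a m n := rfl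
      rw [hcq, hcp]
      simp only [Finset.prod_range_succ] at ih2 ⊢
      linear_combination ih2 - (PowerSeries.C (a n) * PowerSeries.X ^ m n) * ih1 +
        ((∏ i ∈ Finset.range n,
          (PowerSeries.C (a i) * PowerSeries.X ^ m i * F (i+1))) *
          (PowerSeries.C (a n) * PowerSeries.X ^ m n) * f) * hfn
  -- the bridge between Λ and power series coefficients
  have hLkey : ∀ k : ℕ,
      (∀ n : ℕ, Λ (r k * Polynomial.X ^ n)
        = PowerSeries.coeff (n + D k) (f * cfQ a m k)) ∧
      (∀ n : ℕ, Λ (r (k+1) * Polynomial.X ^ n)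
        = PowerSeries.coeff (n + D (k+1)) (f * cfQ a m (k+1))) := by
    intro k
    induction k with
    | zero =>
      constructor
      · intro n
        have hcq : cfQ a m 0 = 1 := rfl
        rw [hr0, one_mul, hΛ n, hD0, hcq, mul_one, Nat.add_zero]
      · intro n
        have hcq : cfQ a m 1 = 1 := rfl
        rw [hr1, hD1, hcq, mul_one, ← pow_succ', hΛ (n+1)]
    | succ k ih =>
      obtain ⟨ih1, ih2⟩ := ih
      refine ⟨ih2, ?_⟩
      intro n
      have hDe' : D (k+1+1) = e k + D (k+1) := hDe k
      have hDm' : D (k+1+1) = m k + D k := hDm k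
      have hrw : r (k+1+1) * Polynomial.X ^ n
          = r (k+1) * Polynomial.X ^ (n + e k) - a k • (r k * Polynomial.X ^ n) := by
        rw [hrrec k, Polynomial.smul_eq_C_mul, pow_add]; ring
      rw [hrw, map_sub, map_smul, smul_eq_mul, ih2 (n + e k), ih1 n]
      have hcq : cfQ a m (k+1+1) = cfQ a m (k+1)
          - PowerSeries.C (a k) * PowerSeries.X ^ m k * cfQ a m k := rfl
      rw [hcq, mul_sub, map_sub]
      rw [show n + e k + D (k+1) = n + D (k+1+1) from by omega]
      have hre : f * (PowerSeries.C (a k) * PowerSeries.X ^ m k * cfQ a m k)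
          = PowerSeries.C (a k) * (PowerSeries.X ^ m k * (f * cfQ a m k)) := by ring
      rw [hre, PowerSeries.coeff_C_mul,
        show n + D (k+1+1) = (n + D k) + m k from by omega,
        PowerSeries.coeff_X_pow_mul]
  -- main argument
  intro k
  have hfq : f * cfQ a m k = cfP a m k +
      (∏ i ∈ Finset.range k,
        (PowerSeries.C (a i) * PowerSeries.X ^ m i * F (i+1))) * f := by
    have := (hQPkey k).1
    linear_combination this
  have hTfact : (∏ i ∈ Finset.range k,
        (PowerSeries.C (a i) * PowerSeries.X ^ m i * F (i+1))) * f
      = PowerSeries.C (∏ i ∈ Finset.range k, a i) *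
        (PowerSeries.X ^ M k * ((∏ i ∈ Finset.range k, F (i+1)) * f)) := by
    rw [Finset.prod_mul_distrib, Finset.prod_mul_distrib, ← map_prod,
      Finset.prod_pow_eq_pow_sum, ← hMdef k]
    ring
  have hG : PowerSeries.constantCoeff ((∏ i ∈ Finset.range k, F (i+1)) * f) = 1 := by
    rw [map_mul, map_prod, hfone, mul_one]
    exact Finset.prod_eq_one fun i _ => hFone (i+1)
  have hDk := hDZ k
  have hMk := hMZ k
  constructor
  · intro n hn
    rw [(hLkey k).1 n, hfq, map_add, hPcoeff k _ (by omega), hTfact,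
      PowerSeries.coeff_C_mul, PowerSeries.coeff_X_pow_mul', if_neg (by omega)]
    ring
  · have hbk0 : 0 ≤ b (k:ℤ) := by
      have := mono 0 (k:ℤ) (by omega) (by omega)
      omega
    have hidx : (b (k:ℤ)).toNat + D k = M k := by omega
    rw [(hLkey k).1 _, hfq, map_add, hPcoeff k _ (by omega), hTfact, hidx,
      PowerSeries.coeff_C_mul, PowerSeries.coeff_X_pow_mul', if_pos le_rfl,
      Nat.sub_self, PowerSeries.coeff_zero_eq_constantCoeff, hG]
    ring
end

section
/- (Andrews–Wimp) Let K be a field, let s = ∑_{n≥0} s_n x^n be a formal power series over K with s_0 = 1, and let t = ∑_{n≥0} t_n x^n be its multiplicative inverse, s·t = 1. Then for every n ≥ 1, det(s_{i+j})_{i,j=0}^{n} = (−1)^n · det(t_{i+j+2})_{i,j=0}^{n−1}, where det(s_{i+j})_{i,j=0}^{n} denotes the determinant of the (n+1)×(n+1) matrix with (i,j) entry s_{i+j}. -/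
open Finset

/-- (Andrews–Wimp) If `s` is a formal power series with constant term 1 and `t` is its
multiplicative inverse, then `det(s_{i+j})_{i,j=0}^n = (−1)^n det(t_{i+j+2})_{i,j=0}^{n−1}`
for all `n ≥ 1`. -/
theorem andrews_wimp {K : Type*} [Field K] (s t : PowerSeries K)
    (hs0 : PowerSeries.coeff 0 s = 1) (hst : s * t = 1) :
    ∀ n : ℕ, 1 ≤ n →
      Matrix.det (Matrix.of fun i j : Fin (n + 1) =>
          PowerSeries.coeff ((i : ℕ) + (j : ℕ)) s) =
        (-1) ^ n * Matrix.det (Matrix.of fun i j : Fin n =>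
          PowerSeries.coeff ((i : ℕ) + (j : ℕ) + 2) t) := by
  intro n _
  set S' : ℕ → K := fun m => PowerSeries.coeff m s with hS'
  set T' : ℕ → K := fun m => PowerSeries.coeff m t with hT'
  -- convolution identity
  have hconv : ∀ N : ℕ, ∑ m ∈ range (N + 1), S' m * T' (N - m)
      = if N = 0 then 1 else 0 := by
    intro N
    have h := congrArg (PowerSeries.coeff N) hst
    rw [PowerSeries.coeff_mul, Finset.Nat.sum_antidiagonal_eq_sum_range_succ_mk] at h
    simpa [PowerSeries.coeff_one] using h
  have ht0 : T' 0 = 1 := by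
    have h := hconv 0
    simp [hS', hs0] at h
    simpa using h
  -- key summation identity
  have key : ∀ a b : ℕ, ∑ k ∈ range (a + 1), T' (a - k) * S' (k + b)
      = (if a + b = 0 then 1 else 0) - ∑ m ∈ range b, S' m * T' (a + b - m) := by
    intro a b
    have h := hconv (a + b)
    rw [show a + b + 1 = b + (a + 1) by omega, Finset.sum_range_add] at h
    have h2 : ∑ k ∈ range (a + 1), S' (b + k) * T' (a + b - (b + k))
        = ∑ k ∈ range (a + 1), T' (a - k) * S' (k + b) := by
      refine Finset.sum_congr rfl fun k _ => ?_
      rw [mul_comm, show a + b - (b + k) = a - k by omega, show b + k = k + b by omega]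
    rw [h2] at h
    linear_combination h
  -- the matrices
  set L : Matrix (Fin (n + 1)) (Fin (n + 1)) K :=
    Matrix.of (fun i k => if (k : ℕ) ≤ (i : ℕ) then T' ((i : ℕ) - (k : ℕ)) else 0) with hL
  set S : Matrix (Fin (n + 1)) (Fin (n + 1)) K :=
    Matrix.of (fun i j => S' ((i : ℕ) + (j : ℕ))) with hSm
  have hdetL : L.det = 1 := by
    rw [Matrix.det_of_lowerTriangular L (fun i j hij => by
      have hij' : (i : ℕ) < (j : ℕ) := hij
      simp only [hL, Matrix.of_apply]
      rw [if_neg (by omega)])]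
    simp [hL, ht0]
  -- product entries
  have hLS : ∀ i j : Fin (n + 1), (L * S) i j
      = (if (i : ℕ) + (j : ℕ) = 0 then 1 else 0)
        - ∑ m ∈ range (j : ℕ), S' m * T' ((i : ℕ) + (j : ℕ) - m) := by
    intro i j
    rw [Matrix.mul_apply]
    have h1 : ∑ k : Fin (n + 1), L i k * S k j
        = ∑ k ∈ range (n + 1),
            (if k ≤ (i : ℕ) then T' ((i : ℕ) - k) * S' (k + (j : ℕ)) else 0) := by
      rw [Finset.sum_range fun k => _]
      refine Finset.sum_congr rfl fun k _ => ?_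
      simp only [hL, hSm, Matrix.of_apply, ite_mul, zero_mul]
    have h2 : ∑ k ∈ range ((i : ℕ) + 1),
          (if k ≤ (i : ℕ) then T' ((i : ℕ) - k) * S' (k + (j : ℕ)) else 0)
        = ∑ k ∈ range (n + 1),
          (if k ≤ (i : ℕ) then T' ((i : ℕ) - k) * S' (k + (j : ℕ)) else 0) := by
      refine Finset.sum_subset (Finset.range_subset_range.2 (by omega)) ?_
      intro x hx hnx
      rw [if_neg]
      simp only [Finset.mem_range] at hx hnx
      omega
    have h3 : ∑ k ∈ range ((i : ℕ) + 1),
          (if k ≤ (i : ℕ) then T' ((i : ℕ) - k) * S' (k + (j : ℕ)) else 0)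
        = ∑ k ∈ range ((i : ℕ) + 1), T' ((i : ℕ) - k) * S' (k + (j : ℕ)) := by
      refine Finset.sum_congr rfl fun k hk => ?_
      rw [if_pos (by simp only [Finset.mem_range] at hk; omega)]
    rw [h1, ← h2, h3, key]
  -- first column is e₀
  have hcol : ∀ i : Fin (n + 1), (L * S) i 0 = if i = 0 then 1 else 0 := by
    intro i
    rw [hLS]
    simp only [Fin.val_zero, add_zero, Finset.range_zero, Finset.sum_empty, sub_zero]
    simp only [Fin.val_eq_zero_iff]
  -- determinant expansion along column 0
  have hdet : S.det = ((L * S).submatrix Fin.succ Fin.succ).det := by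
    have h := Matrix.det_succ_column_zero (L * S)
    rw [Matrix.det_mul, hdetL, one_mul] at h
    rw [h, Finset.sum_eq_single 0]
    · simp [hcol 0]
    · intro i _ hi
      rw [hcol i, if_neg hi]
      ring
    · simp
  -- the minor equals (-A) * B
  set A : Matrix (Fin n) (Fin n) K :=
    Matrix.of (fun i k => T' ((i : ℕ) + (k : ℕ) + 2)) with hA
  set B : Matrix (Fin n) (Fin n) K :=
    Matrix.of (fun k j => if (k : ℕ) ≤ (j : ℕ) then S' ((j : ℕ) - (k : ℕ)) else 0) with hB
  have hminor : (L * S).submatrix Fin.succ Fin.succ = (-A) * B := by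
    ext i j
    have h1 : ∑ k : Fin n, (-A) i k * B k j
        = ∑ k ∈ range (n),
            (if k ≤ (j : ℕ) then -(T' ((i : ℕ) + k + 2) * S' ((j : ℕ) - k)) else 0) := by
      rw [Finset.sum_range fun k => _]
      refine Finset.sum_congr rfl fun k _ => ?_
      simp only [hA, hB, Matrix.neg_apply, Matrix.of_apply, mul_ite, mul_zero, neg_mul]
    have h2 : ∑ k ∈ range ((j : ℕ) + 1),
          (if k ≤ (j : ℕ) then -(T' ((i : ℕ) + k + 2) * S' ((j : ℕ) - k)) else 0)
        = ∑ k ∈ range (n),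
          (if k ≤ (j : ℕ) then -(T' ((i : ℕ) + k + 2) * S' ((j : ℕ) - k)) else 0) := by
      refine Finset.sum_subset (Finset.range_subset_range.2 (by omega)) ?_
      intro x hx hnx
      rw [if_neg]
      simp only [Finset.mem_range] at hx hnx
      omega
    have h3 : ∑ k ∈ range ((j : ℕ) + 1),
          (if k ≤ (j : ℕ) then -(T' ((i : ℕ) + k + 2) * S' ((j : ℕ) - k)) else 0)
        = ∑ k ∈ range ((j : ℕ) + 1), -(T' ((i : ℕ) + k + 2) * S' ((j : ℕ) - k)) := by
      refine Finset.sum_congr rfl fun k hk => ?_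
      rw [if_pos (by simp only [Finset.mem_range] at hk; omega)]
    have h4 : ∑ k ∈ range ((j : ℕ) + 1), -(T' ((i : ℕ) + k + 2) * S' ((j : ℕ) - k))
        = ∑ m ∈ range ((j : ℕ) + 1),
            -(S' m * T' ((i : ℕ) + (j : ℕ) + 2 - m)) := by
      rw [← Finset.sum_range_reflect
        (fun m => -(S' m * T' ((i : ℕ) + (j : ℕ) + 2 - m))) ((j : ℕ) + 1)]
      refine Finset.sum_congr rfl fun k hk => ?_
      simp only [Finset.mem_range] at hk
      rw [show (j : ℕ) + 1 - 1 - k = (j : ℕ) - k from by omega,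
        show (i : ℕ) + (j : ℕ) + 2 - ((j : ℕ) - k) = (i : ℕ) + k + 2 from by omega, mul_comm]
    have h5 : (L * S) i.succ j.succ
        = -∑ m ∈ range ((j : ℕ) + 1), S' m * T' ((i : ℕ) + (j : ℕ) + 2 - m) := by
      rw [hLS, Fin.val_succ, Fin.val_succ, if_neg (by omega), zero_sub,
        show (i : ℕ) + 1 + ((j : ℕ) + 1) = (i : ℕ) + (j : ℕ) + 2 from by omega]
    rw [Matrix.submatrix_apply, h5, Matrix.mul_apply, h1, ← h2, h3, h4,
      ← Finset.sum_neg_distrib]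
  have hdetB : B.det = 1 := by
    rw [Matrix.det_of_upperTriangular (M := B) (fun i j hij => by
      have hij' : (j : ℕ) < (i : ℕ) := hij
      simp only [hB, Matrix.of_apply]
      rw [if_neg (by omega)])]
    simp [hB, hS', hs0]
  show S.det = _
  rw [hdet, hminor, Matrix.det_mul, hdetB, mul_one, Matrix.det_neg]
  simp only [Fintype.card_fin]
end

section
/- Let K be a field, a ∈ K, and let c = ∑_{n≥0} c_n x^n be a formal power series over K with c_0 = 1. Let f = ∑_{n≥0} f_n x^n be the formal power series satisfying f · (1 − a x² c) = 1. Then for every n ≥ 1, det(f_{i+j})_{i,j=0}^{n} = a^n · det(c_{i+j})_{i,j=0}^{n−1}. -/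
open Finset PowerSeries

open Finset in
lemma hankel_key_aux {K : Type*} [Field K] (a : K) (fc gc cc : ℕ → K)
    (g0 : gc 0 = 1)
    (g2 : ∀ t, gc (t + 2) = -a * cc t)
    (conv : ∀ N, ∑ l ∈ range (N + 1), fc l * gc (N - l) = if N = 0 then 1 else 0) :
    ∀ i j : ℕ, ∑ l ∈ range (j + 1), fc (i + l) * gc (j - l)
      = ∑ k ∈ range (i + 1), fc (i - k) *
          (if k = 0 then (if j = 0 then (1:K) else 0)
            else if j = 0 then 0 else a * cc ((k - 1) + (j - 1))) := by
  intro i j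
  rcases Nat.eq_zero_or_pos j with hj | hj
  · subst hj
    rw [sum_range_one]
    simp only [Nat.add_zero, Nat.zero_sub, g0, mul_one]
    refine Eq.symm ?_
    rw [Finset.sum_eq_single 0 (fun k _ hk => by rw [if_neg hk]; simp)
      (fun h => absurd (Finset.mem_range.mpr (by omega)) h)]
    simp
  · have hij : i + j ≠ 0 := by omega
    have h1 : ∑ l ∈ range (i + j + 1), fc l * gc (i + j - l) = 0 := by
      rw [conv, if_neg hij]
    have hsplit : ∑ l ∈ Finset.Ico 0 i, fc l * gc (i + j - l)
        + ∑ l ∈ Finset.Ico i (i + j + 1), fc l * gc (i + j - l)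
        = ∑ l ∈ range (i + j + 1), fc l * gc (i + j - l) := by
      rw [Finset.range_eq_Ico]
      exact Finset.sum_Ico_consecutive _ (Nat.zero_le _) (by omega)
    have h2 : ∑ l ∈ Finset.Ico i (i + j + 1), fc l * gc (i + j - l)
        = ∑ l ∈ range (j + 1), fc (i + l) * gc (j - l) := by
      rw [Finset.sum_Ico_eq_sum_range, show i + j + 1 - i = j + 1 from by omega]
      exact Finset.sum_congr rfl fun l _ => by rw [show i + j - (i + l) = j - l from by omega]
    have h3 : ∑ l ∈ range (j + 1), fc (i + l) * gc (j - l)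
        = - ∑ l ∈ range i, fc l * gc (i + j - l) := by
      rw [← Finset.range_eq_Ico] at hsplit
      rw [← h2]
      exact eq_neg_of_add_eq_zero_right (hsplit.trans h1)
    rw [h3]
    have h4 : ∑ l ∈ range i, fc l * gc (i + j - l)
        = ∑ l ∈ range i, fc l * (-a * cc (i + j - l - 2)) := by
      refine Finset.sum_congr rfl fun l hl => ?_
      rw [mem_range] at hl
      rw [show i + j - l = (i + j - l - 2) + 2 from by omega, g2]
      norm_num
    -- RHS
    rw [Finset.sum_range_succ']
    have h5 : ∀ k ∈ range i, fc (i - (k + 1)) *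
          (if k + 1 = 0 then (if j = 0 then (1:K) else 0)
            else if j = 0 then 0 else a * cc ((k + 1 - 1) + (j - 1)))
        = fc (i - 1 - k) * (a * cc ((i - 1 - (i - 1 - k)) + (j - 1))) := by
      intro k hk
      rw [mem_range] at hk
      rw [if_neg (by omega), if_neg (by omega), show i - (k+1) = i - 1 - k from by omega,
        show i - 1 - (i - 1 - k) = k from by omega, Nat.add_sub_cancel]
    rw [Finset.sum_congr rfl h5, Finset.sum_range_reflect (fun m => fc m * (a * cc ((i - 1 - m) + (j - 1)))) i]
    rw [if_pos rfl, if_neg (by omega), mul_zero, add_zero, h4]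
    rw [neg_eq_iff_eq_neg, ← Finset.sum_neg_distrib]
    refine Finset.sum_congr rfl fun m hm => ?_
    rw [mem_range] at hm
    rw [show i - 1 - m + (j - 1) = i + j - m - 2 from by omega]
    ring


/-- If `f = 1/(1 − a x² c(x))` with `c₀ = 1`, then
`det(f_{i+j})_{i,j=0}^n = aⁿ · det(c_{i+j})_{i,j=0}^{n−1}` for all `n ≥ 1`. -/
theorem hankel_det_of_inv_one_sub_aXsq {K : Type*} [Field K] (a : K) (c f : PowerSeries K)
    (hc0 : PowerSeries.coeff 0 c = 1)
    (hf : f * (1 - PowerSeries.C a * PowerSeries.X ^ 2 * c) = 1) :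
    ∀ n : ℕ, 1 ≤ n →
      Matrix.det (Matrix.of fun i j : Fin (n + 1) =>
          PowerSeries.coeff ((i : ℕ) + (j : ℕ)) f) =
        a ^ n * Matrix.det (Matrix.of fun i j : Fin n =>
          PowerSeries.coeff ((i : ℕ) + (j : ℕ)) c) := by
  intro n hn
  set g : PowerSeries K := 1 - PowerSeries.C a * c * PowerSeries.X ^ 2 with hgdef
  have hf' : f * g = 1 := by rw [← hf]; ring
  have g0 : coeff 0 g = 1 := by
    simp [hgdef, coeff_mul_X_pow']
  have g2 : ∀ t, coeff (t + 2) g = -a * coeff t c := by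
    intro t
    simp [hgdef, coeff_mul_X_pow, coeff_one]
  have conv : ∀ N, ∑ l ∈ range (N + 1), coeff l f * coeff (N - l) g
      = if N = 0 then 1 else 0 := by
    intro N
    have h := congrArg (coeff N) hf'
    rw [coeff_mul, Finset.Nat.sum_antidiagonal_eq_sum_range_succ_mk, coeff_one] at h
    exact h
  have f0 : coeff 0 f = 1 := by
    have := conv 0
    simpa [g0] using this
  -- matrices
  set F : Matrix (Fin (n+1)) (Fin (n+1)) K :=
    Matrix.of (fun i j : Fin (n+1) => coeff ((i : ℕ) + (j : ℕ)) f) with hF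
  set U : Matrix (Fin (n+1)) (Fin (n+1)) K :=
    Matrix.of (fun i j : Fin (n+1) =>
      if (i : ℕ) ≤ (j : ℕ) then coeff ((j : ℕ) - (i : ℕ)) g else 0) with hU
  set Lf : Matrix (Fin (n+1)) (Fin (n+1)) K :=
    Matrix.of (fun i j : Fin (n+1) =>
      if (j : ℕ) ≤ (i : ℕ) then coeff ((i : ℕ) - (j : ℕ)) f else 0) with hLf
  set M : Matrix (Fin (n+1)) (Fin (n+1)) K :=
    Matrix.of (fun i j : Fin (n+1) =>
      if (i : ℕ) = 0 then (if (j : ℕ) = 0 then (1:K) else 0)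
      else if (j : ℕ) = 0 then 0
      else a * coeff (((i : ℕ) - 1) + ((j : ℕ) - 1)) c) with hM
  have main : F * U = Lf * M := by
    ext i j
    rw [Matrix.mul_apply, Matrix.mul_apply]
    have lhs1 : ∑ l : Fin (n+1), F i l * U l j
        = ∑ m ∈ range (n+1), (coeff ((i : ℕ) + m) f *
            (if m ≤ (j : ℕ) then coeff ((j : ℕ) - m) g else 0)) := by
      rw [← Fin.sum_univ_eq_sum_range]
      rfl
    have lhs2 : ∑ m ∈ range (n+1), (coeff ((i : ℕ) + m) f *
            (if m ≤ (j : ℕ) then coeff ((j : ℕ) - m) g else 0))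
        = ∑ m ∈ range ((j : ℕ) + 1), coeff ((i : ℕ) + m) f * coeff ((j : ℕ) - m) g := by
      rw [← Finset.sum_subset (Finset.range_subset_range.mpr (by omega : (j : ℕ) + 1 ≤ n + 1))
        (fun x _ hx => by rw [if_neg (by simpa using hx), mul_zero])]
      exact Finset.sum_congr rfl fun m hm => by
        rw [if_pos (by simpa using Nat.lt_succ_iff.mp (Finset.mem_range.mp hm))]
    have rhs1 : ∑ k : Fin (n+1), Lf i k * M k j
        = ∑ m ∈ range (n+1), ((if m ≤ (i : ℕ) then coeff ((i : ℕ) - m) f else 0) *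
            (if m = 0 then (if (j : ℕ) = 0 then (1:K) else 0)
              else if (j : ℕ) = 0 then 0
              else a * coeff ((m - 1) + ((j : ℕ) - 1)) c)) := by
      rw [← Fin.sum_univ_eq_sum_range]
      rfl
    have rhs2 : ∑ m ∈ range (n+1), ((if m ≤ (i : ℕ) then coeff ((i : ℕ) - m) f else 0) *
            (if m = 0 then (if (j : ℕ) = 0 then (1:K) else 0)
              else if (j : ℕ) = 0 then 0
              else a * coeff ((m - 1) + ((j : ℕ) - 1)) c))
        = ∑ m ∈ range ((i : ℕ) + 1), coeff ((i : ℕ) - m) f *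
            (if m = 0 then (if (j : ℕ) = 0 then (1:K) else 0)
              else if (j : ℕ) = 0 then 0
              else a * coeff ((m - 1) + ((j : ℕ) - 1)) c) := by
      rw [← Finset.sum_subset (Finset.range_subset_range.mpr (by omega : (i : ℕ) + 1 ≤ n + 1))
        (fun x _ hx => by rw [if_neg (by simpa using hx), zero_mul])]
      exact Finset.sum_congr rfl fun m hm => by
        rw [if_pos (by simpa using Nat.lt_succ_iff.mp (Finset.mem_range.mp hm))]
    rw [lhs1, lhs2, rhs1, rhs2]
    exact hankel_key_aux a (fun m => coeff m f) (fun m => coeff m g)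
      (fun m => coeff m c) g0 g2 conv (i : ℕ) (j : ℕ)
  have hdetU : U.det = 1 := by
    have ht : U.BlockTriangular id := by
      intro i j hij
      exact if_neg (by simpa using Nat.not_le.mpr (show (j : ℕ) < i from hij))
    rw [Matrix.det_of_upperTriangular ht]
    simp [hU, g0]
  have hdetLf : Lf.det = 1 := by
    have ht : Lf.BlockTriangular OrderDual.toDual := by
      intro i j hij
      exact if_neg (by simpa using Nat.not_le.mpr (show (i : ℕ) < j from hij))
    rw [Matrix.det_of_lowerTriangular Lf ht]
    simp [hLf, f0]
  have hsub : M.submatrix Fin.succ Fin.succ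
      = a • (Matrix.of fun i j : Fin n => coeff ((i : ℕ) + (j : ℕ)) c) := by
    ext i j
    simp only [Matrix.submatrix_apply, hM, Matrix.of_apply, Matrix.smul_apply, Fin.val_succ,
      smul_eq_mul]
    rw [if_neg (by omega), if_neg (by omega)]
    norm_num
  have hdetM : M.det = a ^ n *
      Matrix.det (Matrix.of fun i j : Fin n => coeff ((i : ℕ) + (j : ℕ)) c) := by
    rw [Matrix.det_succ_row_zero]
    rw [Finset.sum_eq_single 0 (fun b _ hb => by
        have hb' : (b : ℕ) ≠ 0 := fun h => hb (Fin.ext (by simp [h]))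
        have : M 0 b = 0 := by
          simp [hM, hb', hb]
        rw [this, mul_zero, zero_mul])
      (fun h => absurd (Finset.mem_univ _) h)]
    have hM00 : M 0 0 = 1 := by simp [hM]
    rw [hM00, Fin.succAbove_zero, hsub, Matrix.det_smul]
    simp
  have hdet := congrArg Matrix.det main
  rw [Matrix.det_mul, Matrix.det_mul, hdetU, hdetLf, mul_one, one_mul] at hdet
  rw [hdet, hdetM]
end

section
/- Let K be a field, let s = ∑_{n≥0} s_n x^n be a formal power series over K with s_0 = 1 and let t = ∑_{n≥0} t_n x^n be its multiplicative inverse. Extend s by setting s_n = 0 for n < 0. Let m ≥ 0. Then: (i) det(s_{i+j−m})_{i,j=0}^{n} = 0 for every n with 0 ≤ n < m; (ii) det(s_{i+j−m})_{i,j=0}^{m} = (−1)^{\binom{m+1}{2}}; and (iii) for every n ≥ 1, det(s_{i+j−m})_{i,j=0}^{n+m} = (−1)^{n+\binom{m+1}{2}} · det(t_{i+j+m+2})_{i,j=0}^{n−1}. -/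
open Finset Matrix PowerSeries

lemma AW_antidiag_det {K : Type*} [Field K] :
    ∀ m : ℕ, Matrix.det (Matrix.of fun i j : Fin (m+1) =>
      if (i:ℕ)+(j:ℕ) = m then (1:K) else 0) = (-1)^(Nat.choose (m+1) 2) := by
  intro m
  induction m with
  | zero => simp [Matrix.det_fin_one]
  | succ m ih =>
    rw [Matrix.det_succ_row_zero]
    rw [Finset.sum_eq_single (Fin.last (m+1))]
    · have h1 : ((Matrix.of fun i j : Fin (m+2) =>
          if (i:ℕ)+(j:ℕ) = m+1 then (1:K) else 0).submatrix Fin.succ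
            (Fin.last (m+1)).succAbove)
          = Matrix.of fun i j : Fin (m+1) => if (i:ℕ)+(j:ℕ) = m then (1:K) else 0 := by
        ext i j
        simp only [Matrix.submatrix_apply, Fin.succAbove_last, Matrix.of_apply,
          Fin.val_succ, Fin.coe_castSucc]
        congr 1
        simp only [eq_iff_iff]
        omega
      rw [h1, ih]
      have h2 : (Matrix.of fun i j : Fin (m+2) =>
          if (i:ℕ)+(j:ℕ) = m+1 then (1:K) else 0) 0 (Fin.last (m+1)) = 1 := by
        simp [Fin.val_last]
      rw [h2]
      have h3 : Nat.choose (m+2) 2 = (m+1) + Nat.choose (m+1) 2 := by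
        rw [Nat.choose_succ_succ (m+1) 1, Nat.choose_one_right]
      rw [h3, pow_add, Fin.val_last, mul_one]
    · intro j _ hj
      have : (Matrix.of fun i j : Fin (m+2) =>
          if (i:ℕ)+(j:ℕ) = m+1 then (1:K) else 0) 0 j = 0 := by
        rw [Matrix.of_apply, if_neg]
        simp only [Fin.val_zero, zero_add]
        intro h
        exact hj (Fin.ext (by rw [Fin.val_last]; omega))
      rw [this, mul_zero, zero_mul]
    · simp

lemma AW_conv {K : Type*} [Field K] (s t : PowerSeries K) (hst : s * t = 1) (r : ℕ) :
    ∑ a ∈ Finset.range (r+1), PowerSeries.coeff a s * PowerSeries.coeff (r - a) t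
      = if r = 0 then 1 else 0 := by
  have h := congrArg (PowerSeries.coeff r) hst
  rw [PowerSeries.coeff_mul, PowerSeries.coeff_one,
    Finset.Nat.sum_antidiagonal_eq_sum_range_succ_mk] at h
  exact h

lemma AW_keySum {K : Type*} [Field K] (s t : PowerSeries K) (hst : s * t = 1)
    (m i j : ℕ) :
    ∑ k ∈ Finset.range (j+1),
        (if m ≤ i + k then PowerSeries.coeff (i+k-m) s else 0)
          * PowerSeries.coeff (j-k) t
      = (if i + j = m then 1 else 0)
        - ∑ a ∈ Finset.range (i-m),
            PowerSeries.coeff a s * PowerSeries.coeff (i+j-m-a) t := by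
  rcases lt_or_ge (i+j) m with hij | hij
  · rw [if_neg (by omega)]
    have h1 : i - m = 0 := by omega
    rw [h1]
    simp only [Finset.range_zero, Finset.sum_empty, sub_zero]
    apply Finset.sum_eq_zero
    intro k hk
    rw [Finset.mem_range] at hk
    rw [if_neg (by omega), zero_mul]
  · -- i + j ≥ m
    have h1 : ∑ k ∈ Finset.range (j+1),
        (if m ≤ i + k then PowerSeries.coeff (i+k-m) s else 0)
          * PowerSeries.coeff (j-k) t
        = ∑ k ∈ Finset.Ico (m-i) (j+1),
            PowerSeries.coeff (i+k-m) s * PowerSeries.coeff (j-k) t := by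
      have hsub : Finset.Ico (m-i) (j+1) ⊆ Finset.range (j+1) := by
        intro k hk
        rw [Finset.mem_Ico] at hk
        rw [Finset.mem_range]
        omega
      rw [← Finset.sum_subset hsub]
      · apply Finset.sum_congr rfl
        intro k hk
        rw [Finset.mem_Ico] at hk
        rw [if_pos (by omega)]
      · intro k hk hk2
        rw [Finset.mem_range] at hk
        rw [Finset.mem_Ico] at hk2
        rw [if_neg (by omega), zero_mul]
    have h2 : ∑ k ∈ Finset.Ico (m-i) (j+1),
            PowerSeries.coeff (i+k-m) s * PowerSeries.coeff (j-k) t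
        = ∑ a ∈ Finset.Ico (i-m) (i+j-m+1),
            PowerSeries.coeff a s * PowerSeries.coeff (i+j-m-a) t := by
      apply Finset.sum_bij' (fun k _ => i + k - m) (fun a _ => m + a - i)
      · intro k hk
        rw [Finset.mem_Ico] at hk ⊢
        omega
      · intro a ha
        rw [Finset.mem_Ico] at ha ⊢
        omega
      · intro k hk
        rw [Finset.mem_Ico] at hk
        omega
      · intro a ha
        rw [Finset.mem_Ico] at ha
        omega
      · intro k hk
        rw [Finset.mem_Ico] at hk
        have : j - k = i + j - m - (i + k - m) := by omega
        rw [this]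
    have h3 : (∑ a ∈ Finset.range (i-m),
            PowerSeries.coeff a s * PowerSeries.coeff (i+j-m-a) t)
        + (∑ a ∈ Finset.Ico (i-m) (i+j-m+1),
            PowerSeries.coeff a s * PowerSeries.coeff (i+j-m-a) t)
        = ∑ a ∈ Finset.range (i+j-m+1),
            PowerSeries.coeff a s * PowerSeries.coeff (i+j-m-a) t := by
      rw [Finset.range_eq_Ico, Finset.range_eq_Ico]
      exact Finset.sum_Ico_consecutive (fun a => PowerSeries.coeff a s * PowerSeries.coeff (i+j-m-a) t) (m := 0) (n := i-m) (k := i+j-m+1) (by omega) (by omega)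
    have h4 := AW_conv s t hst (i+j-m)
    have h5 : (if i + j - m = 0 then (1:K) else 0) = (if i + j = m then 1 else 0) := by
      split_ifs with ha hb hb
      · rfl
      · omega
      · omega
      · rfl
    rw [h1, h2, eq_sub_iff_add_eq, add_comm, h3, h4, h5]

lemma AW_main {K : Type*} [Field K] (s t : PowerSeries K)
    (hs0 : PowerSeries.coeff 0 s = 1) (hst : s * t = 1)
    (s' : ℤ → K)
    (hs' : ∀ n : ℤ, s' n = if 0 ≤ n then PowerSeries.coeff n.toNat s else 0)
    (m n : ℕ) :
    Matrix.det (Matrix.of fun i j : Fin (n + m + 1) =>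
        s' ((i : ℤ) + (j : ℤ) - (m : ℤ))) =
      (-1) ^ (n + Nat.choose (m + 1) 2) *
        Matrix.det (Matrix.of fun i j : Fin n =>
          PowerSeries.coeff ((i : ℕ) + (j : ℕ) + m + 2) t) := by
  have ht0 : PowerSeries.coeff 0 t = 1 := by
    have h := AW_conv s t hst 0
    rw [if_pos rfl, Finset.sum_range_one, hs0, one_mul] at h
    simpa using h
  have hs'' : ∀ a b : ℕ, s' ((a:ℤ) - (b:ℤ))
      = if b ≤ a then PowerSeries.coeff (a - b) s else 0 := by
    intro a b
    rw [hs']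
    rcases le_or_gt b a with h | h
    · rw [if_pos (by omega : (0:ℤ) ≤ (a:ℤ) - (b:ℤ)), if_pos h]
      have hh : ((a:ℤ) - (b:ℤ)).toNat = a - b := by omega
      rw [hh]
    · rw [if_neg (by omega), if_neg (by omega)]
  set A : Matrix (Fin (n+m+1)) (Fin (n+m+1)) K :=
    Matrix.of fun i j => s' ((i:ℤ)+(j:ℤ)-(m:ℤ)) with hA
  set U : Matrix (Fin (n+m+1)) (Fin (n+m+1)) K :=
    Matrix.of fun k j => if (k:ℕ) ≤ (j:ℕ) then PowerSeries.coeff ((j:ℕ)-(k:ℕ)) t else 0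
    with hUdef
  have hU : U.det = 1 := by
    rw [Matrix.det_of_upperTriangular (by
      intro i j hij
      have hij' : (j:ℕ) < (i:ℕ) := hij
      simp only [hUdef, Matrix.of_apply]
      rw [if_neg (by omega)])]
    have : ∀ i : Fin (n+m+1), U i i = 1 := by
      intro i
      simp only [hUdef, Matrix.of_apply]
      rw [if_pos le_rfl, Nat.sub_self, ht0]
    rw [Finset.prod_congr rfl (fun i _ => this i), Finset.prod_const_one]
  have hEntry : ∀ i j : Fin (n+m+1), (A * U) i j
      = (if (i:ℕ)+(j:ℕ) = m then 1 else 0)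
        - ∑ a ∈ Finset.range ((i:ℕ)-m),
            PowerSeries.coeff a s * PowerSeries.coeff ((i:ℕ)+(j:ℕ)-m-a) t := by
    intro i j
    rw [Matrix.mul_apply]
    have step1 : ∑ k : Fin (n+m+1), A i k * U k j
        = ∑ k ∈ Finset.range (n+m+1),
            (if m ≤ (i:ℕ) + k then PowerSeries.coeff ((i:ℕ)+k-m) s else 0)
              * (if k ≤ (j:ℕ) then PowerSeries.coeff ((j:ℕ)-k) t else 0) := by
      rw [← Fin.sum_univ_eq_sum_range (fun k =>
        (if m ≤ (i:ℕ) + k then PowerSeries.coeff ((i:ℕ)+k-m) s else 0)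
          * (if k ≤ (j:ℕ) then PowerSeries.coeff ((j:ℕ)-k) t else 0)) (n+m+1)]
      apply Finset.sum_congr rfl
      intro k _
      simp only [hA, hUdef, Matrix.of_apply]
      congr 1
      have hcast : (i:ℤ) + (k:ℤ) - (m:ℤ) = ((((i:ℕ)+(k:ℕ) : ℕ)) : ℤ) - (m:ℤ) := by
        push_cast; ring
      rw [hcast, hs'']
    rw [step1]
    have hsub : Finset.range ((j:ℕ)+1) ⊆ Finset.range (n+m+1) := by
      apply Finset.range_subset_range.mpr
      have := j.isLt
      omega
    rw [← Finset.sum_subset hsub (by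
      intro k hk hk2
      rw [Finset.mem_range] at hk hk2
      rw [if_neg (show ¬ k ≤ (j:ℕ) by omega), mul_zero])]
    have step2 : ∑ k ∈ Finset.range ((j:ℕ)+1),
        (if m ≤ (i:ℕ) + k then PowerSeries.coeff ((i:ℕ)+k-m) s else 0)
          * (if k ≤ (j:ℕ) then PowerSeries.coeff ((j:ℕ)-k) t else 0)
        = ∑ k ∈ Finset.range ((j:ℕ)+1),
            (if m ≤ (i:ℕ) + k then PowerSeries.coeff ((i:ℕ)+k-m) s else 0)
              * PowerSeries.coeff ((j:ℕ)-k) t := by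
      apply Finset.sum_congr rfl
      intro k hk
      rw [Finset.mem_range] at hk
      rw [if_pos (show k ≤ (j:ℕ) by omega)]
    rw [step2]
    exact AW_keySum s t hst m (i:ℕ) (j:ℕ)
  set e : Fin (m+1) ⊕ Fin n ≃ Fin (n+m+1) :=
    finSumFinEquiv.trans (finCongr (by omega : (m+1)+n = n+m+1)) with he
  have he1 : ∀ i : Fin (m+1), ((e (Sum.inl i)) : ℕ) = (i:ℕ) := by
    intro i; simp [he]
  have he2 : ∀ p : Fin n, ((e (Sum.inr p)) : ℕ) = m+1+(p:ℕ) := by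
    intro p; simp [he]; omega
  set P : Matrix (Fin (m+1)) (Fin (m+1)) K :=
    Matrix.of fun i j => if (i:ℕ)+(j:ℕ) = m then (1:K) else 0 with hP
  set C : Matrix (Fin n) (Fin (m+1)) K :=
    Matrix.of fun p j => (A*U) (e (Sum.inr p)) (e (Sum.inl j)) with hC
  set D : Matrix (Fin n) (Fin n) K :=
    Matrix.of fun p q => - ∑ a ∈ Finset.range ((p:ℕ)+1),
      PowerSeries.coeff a s * PowerSeries.coeff ((p:ℕ)+(q:ℕ)+m+2-a) t with hD
  have hblock : (A*U).submatrix e e = Matrix.fromBlocks P 0 C D := by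
    ext i j
    cases i with
    | inl i =>
      cases j with
      | inl j =>
        rw [Matrix.submatrix_apply, Matrix.fromBlocks_apply₁₁, hEntry, he1, he1]
        have h0 : (i:ℕ) - m = 0 := by have := i.isLt; omega
        rw [h0]
        simp [hP]
      | inr q =>
        rw [Matrix.submatrix_apply, Matrix.fromBlocks_apply₁₂, hEntry, he1, he2]
        have h0 : (i:ℕ) - m = 0 := by have := i.isLt; omega
        rw [h0, if_neg (by omega)]
        simp
    | inr p =>
      cases j with
      | inl j =>
        rw [Matrix.submatrix_apply, Matrix.fromBlocks_apply₂₁, hC]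
        rfl
      | inr q =>
        rw [Matrix.submatrix_apply, Matrix.fromBlocks_apply₂₂, hEntry, he2, he2]
        rw [if_neg (by omega), zero_sub, hD]
        simp only [Matrix.of_apply]
        congr 1
        have hr : m+1+(p:ℕ) - m = (p:ℕ)+1 := by omega
        rw [hr]
        apply Finset.sum_congr rfl
        intro a ha
        rw [Finset.mem_range] at ha
        have e1 : m+1+(p:ℕ)+(m+1+(q:ℕ))-m-a = (p:ℕ)+(q:ℕ)+m+2-a := by omega
        rw [e1]
  set L : Matrix (Fin n) (Fin n) K :=
    Matrix.of fun p a => if (a:ℕ) ≤ (p:ℕ) then PowerSeries.coeff ((p:ℕ)-(a:ℕ)) s else 0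
    with hL
  set H : Matrix (Fin n) (Fin n) K :=
    Matrix.of fun a q => PowerSeries.coeff ((a:ℕ)+(q:ℕ)+m+2) t with hH
  have hDLH : D = (-1 : K) • (L * H) := by
    ext p q
    simp only [hD, Matrix.smul_apply, smul_eq_mul, neg_one_mul, Matrix.of_apply]
    rw [Matrix.mul_apply]
    congr 1
    calc ∑ a ∈ Finset.range ((p:ℕ)+1),
          PowerSeries.coeff a s * PowerSeries.coeff ((p:ℕ)+(q:ℕ)+m+2-a) t
        = ∑ a ∈ Finset.range ((p:ℕ)+1), (fun b =>
            PowerSeries.coeff ((p:ℕ)-b) s * PowerSeries.coeff (b+(q:ℕ)+m+2) t)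
              ((p:ℕ)+1-1-a) := by
          apply Finset.sum_congr rfl
          intro a ha
          rw [Finset.mem_range] at ha
          simp only
          have e1 : (p:ℕ)+1-1-a = (p:ℕ)-a := by omega
          have e2 : (p:ℕ)-((p:ℕ)-a) = a := by omega
          have e3 : ((p:ℕ)-a)+(q:ℕ)+m+2 = (p:ℕ)+(q:ℕ)+m+2-a := by omega
          rw [e1, e2, e3]
      _ = ∑ a ∈ Finset.range ((p:ℕ)+1),
            PowerSeries.coeff ((p:ℕ)-a) s * PowerSeries.coeff (a+(q:ℕ)+m+2) t :=
          Finset.sum_range_reflect (fun b =>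
            PowerSeries.coeff ((p:ℕ)-b) s * PowerSeries.coeff (b+(q:ℕ)+m+2) t)
            ((p:ℕ)+1)
      _ = ∑ a ∈ Finset.range ((p:ℕ)+1),
            (if a ≤ (p:ℕ) then PowerSeries.coeff ((p:ℕ)-a) s else 0)
              * PowerSeries.coeff (a+(q:ℕ)+m+2) t := by
          apply Finset.sum_congr rfl
          intro a ha
          rw [Finset.mem_range] at ha
          rw [if_pos (by omega)]
      _ = ∑ a ∈ Finset.range n,
            (if a ≤ (p:ℕ) then PowerSeries.coeff ((p:ℕ)-a) s else 0)
              * PowerSeries.coeff (a+(q:ℕ)+m+2) t := by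
          apply Finset.sum_subset (Finset.range_subset_range.mpr (by have := p.isLt; omega))
          intro a ha ha2
          rw [Finset.mem_range] at ha ha2
          rw [if_neg (by omega), zero_mul]
      _ = ∑ a : Fin n, L p a * H a q := by
          rw [← Fin.sum_univ_eq_sum_range (fun a =>
            (if a ≤ (p:ℕ) then PowerSeries.coeff ((p:ℕ)-a) s else 0)
              * PowerSeries.coeff (a+(q:ℕ)+m+2) t) n]
          apply Finset.sum_congr rfl
          intro a _
          simp [hL, hH]
  have hdetL : L.det = 1 := by
    rw [Matrix.det_of_lowerTriangular L (by
      intro i j hij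
      have hij' : (i:ℕ) < (j:ℕ) := hij
      simp only [hL, Matrix.of_apply]
      rw [if_neg (by omega)])]
    have : ∀ i : Fin n, L i i = 1 := by
      intro i
      simp only [hL, Matrix.of_apply]
      rw [if_pos le_rfl, Nat.sub_self, hs0]
    rw [Finset.prod_congr rfl (fun i _ => this i), Finset.prod_const_one]
  have hdetD : D.det = (-1:K)^n * H.det := by
    rw [hDLH, Matrix.det_smul, Matrix.det_mul, hdetL, one_mul, Fintype.card_fin]
  have main : A.det = (-1:K)^(n + Nat.choose (m+1) 2) * H.det := by
    calc A.det = A.det * U.det := by rw [hU, mul_one]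
      _ = (A*U).det := (Matrix.det_mul A U).symm
      _ = ((A*U).submatrix e e).det := (Matrix.det_submatrix_equiv_self e (A*U)).symm
      _ = (Matrix.fromBlocks P 0 C D).det := by rw [hblock]
      _ = P.det * D.det := Matrix.det_fromBlocks_zero₁₂ P C D
      _ = (-1:K)^(Nat.choose (m+1) 2) * ((-1:K)^n * H.det) := by
          rw [AW_antidiag_det m, hdetD]
      _ = (-1:K)^(n + Nat.choose (m+1) 2) * H.det := by
          rw [pow_add]; ring
  exact main

/-- Generalized Andrews–Wimp identity: if `s` is a power series with `s₀ = 1`, `t` its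
inverse, `s` extended by zero to negative indices, and `m ≥ 0`, then the shifted Hankel
determinants `det(s_{i+j−m})` vanish for sizes `≤ m`, equal `(−1)^{C(m+1,2)}` at size
`m+1`, and satisfy
`det(s_{i+j−m})_{i,j=0}^{n+m} = (−1)^{n+C(m+1,2)} det(t_{i+j+m+2})_{i,j=0}^{n−1}`. -/
theorem andrews_wimp_shifted {K : Type*} [Field K] (s t : PowerSeries K)
    (hs0 : PowerSeries.coeff 0 s = 1) (hst : s * t = 1)
    (s' : ℤ → K)
    (hs' : ∀ n : ℤ, s' n = if 0 ≤ n then PowerSeries.coeff n.toNat s else 0)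
    (m : ℕ) :
    (∀ n : ℕ, n < m →
      Matrix.det (Matrix.of fun i j : Fin (n + 1) =>
        s' ((i : ℤ) + (j : ℤ) - (m : ℤ))) = 0) ∧
    Matrix.det (Matrix.of fun i j : Fin (m + 1) =>
        s' ((i : ℤ) + (j : ℤ) - (m : ℤ))) = (-1) ^ Nat.choose (m + 1) 2 ∧
    (∀ n : ℕ, 1 ≤ n →
      Matrix.det (Matrix.of fun i j : Fin (n + m + 1) =>
          s' ((i : ℤ) + (j : ℤ) - (m : ℤ))) =
        (-1) ^ (n + Nat.choose (m + 1) 2) *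
          Matrix.det (Matrix.of fun i j : Fin n =>
            PowerSeries.coeff ((i : ℕ) + (j : ℕ) + m + 2) t)) := by
  refine ⟨?_, ?_, ?_⟩
  · intro n hn
    apply Matrix.det_eq_zero_of_row_eq_zero 0
    intro j
    rw [Matrix.of_apply, hs', if_neg]
    have h1 := j.isLt
    simp only [Fin.val_zero, Nat.cast_zero, zero_add]
    omega
  · have h := AW_main s t hs0 hst s' hs' m 0
    rw [Matrix.det_fin_zero, mul_one] at h
    let e2 : Fin (m+1) ≃ Fin (0+m+1) := finCongr (by omega)
    have hsubm : ((Matrix.of fun i j : Fin (0+m+1) =>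
        s' ((i : ℤ) + (j : ℤ) - (m : ℤ))).submatrix e2 e2)
        = Matrix.of fun i j : Fin (m+1) => s' ((i : ℤ) + (j : ℤ) - (m : ℤ)) := rfl
    calc Matrix.det (Matrix.of fun i j : Fin (m+1) => s' ((i : ℤ) + (j : ℤ) - (m : ℤ)))
        = Matrix.det ((Matrix.of fun i j : Fin (0+m+1) =>
            s' ((i : ℤ) + (j : ℤ) - (m : ℤ))).submatrix e2 e2) := by rw [hsubm]
      _ = Matrix.det (Matrix.of fun i j : Fin (0+m+1) =>
            s' ((i : ℤ) + (j : ℤ) - (m : ℤ))) := Matrix.det_submatrix_equiv_self e2 _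
      _ = (-1) ^ (0 + Nat.choose (m + 1) 2) := h
      _ = (-1) ^ Nat.choose (m + 1) 2 := by rw [Nat.zero_add]
  · intro n _
    exact AW_main s t hs0 hst s' hs' m n
end

section
/- Let K be a field, let s = ∑_{n≥0} s_n x^n be a formal power series over K with s_0 = 1, and let t = ∑_{n≥0} t_n x^n be its multiplicative inverse. Then for every n ≥ 0, det(s_{i+j+1})_{i,j=0}^{n} = (−1)^{n+1} · det(t_{i+j+1})_{i,j=0}^{n}. -/
/-- If `s` is a power series with `s₀ = 1` and `t` its multiplicative inverse, then
`det(s_{i+j+1})_{i,j=0}^n = (−1)^{n+1} det(t_{i+j+1})_{i,j=0}^n` for all `n ≥ 0`. -/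
theorem shifted_hankel_inverse {K : Type*} [Field K] (s t : PowerSeries K)
    (hs0 : PowerSeries.coeff 0 s = 1) (hst : s * t = 1) :
    ∀ n : ℕ,
      Matrix.det (Matrix.of fun i j : Fin (n + 1) =>
          PowerSeries.coeff ((i : ℕ) + (j : ℕ) + 1) s) =
        (-1) ^ (n + 1) * Matrix.det (Matrix.of fun i j : Fin (n + 1) =>
          PowerSeries.coeff ((i : ℕ) + (j : ℕ) + 1) t) := by
  have ht0 : PowerSeries.coeff 0 t = 1 := by
    have h := congrArg (PowerSeries.constantCoeff) hst
    rw [map_mul, map_one] at h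
    rw [PowerSeries.coeff_zero_eq_constantCoeff] at hs0 ⊢
    rw [hs0, one_mul] at h
    exact h
  have key : ∀ N : ℕ, 0 < N →
      ∑ m ∈ Finset.range (N + 1), PowerSeries.coeff m s *
        PowerSeries.coeff (N - m) t = 0 := by
    intro N hN
    have h := congrArg (PowerSeries.coeff N) hst
    rw [PowerSeries.coeff_mul, Finset.Nat.sum_antidiagonal_eq_sum_range_succ
      (fun a b => PowerSeries.coeff a s * PowerSeries.coeff b t)] at h
    rw [h]
    simp [PowerSeries.coeff_one, Nat.pos_iff_ne_zero.mp hN]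
  intro n
  set A : Matrix (Fin (n+1)) (Fin (n+1)) K :=
    Matrix.of fun i j => PowerSeries.coeff ((i : ℕ) + (j : ℕ) + 1) s with hA
  set B : Matrix (Fin (n+1)) (Fin (n+1)) K :=
    Matrix.of fun i j => PowerSeries.coeff ((i : ℕ) + (j : ℕ) + 1) t with hB
  set T : Matrix (Fin (n+1)) (Fin (n+1)) K :=
    Matrix.of fun i j => if (j : ℕ) ≤ (i : ℕ) then
      PowerSeries.coeff ((i : ℕ) - (j : ℕ)) t else 0 with hT
  set S : Matrix (Fin (n+1)) (Fin (n+1)) K :=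
    Matrix.of fun i j => if (j : ℕ) ≤ (i : ℕ) then
      PowerSeries.coeff ((i : ℕ) - (j : ℕ)) s else 0 with hS
  have main : T * A = -(B * S.transpose) := by
    ext i j
    have hsplit := key ((i : ℕ) + (j : ℕ) + 1) (by omega)
    rw [show (i : ℕ) + (j : ℕ) + 1 + 1 = ((j : ℕ) + 1) + ((i : ℕ) + 1) by omega,
      Finset.sum_range_add] at hsplit
    have hL : (T * A) i j = ∑ k ∈ Finset.range ((i : ℕ) + 1),
        PowerSeries.coeff ((i : ℕ) - k) t *
          PowerSeries.coeff (k + (j : ℕ) + 1) s := by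
      rw [Matrix.mul_apply]
      simp only [hT, hA, Matrix.of_apply]
      rw [Fin.sum_univ_eq_sum_range (fun k =>
          (if k ≤ (i : ℕ) then PowerSeries.coeff ((i : ℕ) - k) t else 0) *
            PowerSeries.coeff (k + (j : ℕ) + 1) s)]
      rw [← Finset.sum_subset (Finset.range_subset_range.mpr (by omega : (i:ℕ)+1 ≤ n+1))
        (fun x _ hx => by
          rw [if_neg (by simp at hx; omega)]; ring)]
      exact Finset.sum_congr rfl fun k hk => by
        rw [if_pos (by simp at hk; omega)]
    have hR : (B * S.transpose) i j = ∑ k ∈ Finset.range ((j : ℕ) + 1),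
        PowerSeries.coeff ((i : ℕ) + k + 1) t *
          PowerSeries.coeff ((j : ℕ) - k) s := by
      rw [Matrix.mul_apply]
      simp only [hB, hS, Matrix.transpose_apply, Matrix.of_apply]
      rw [Fin.sum_univ_eq_sum_range (fun k =>
          PowerSeries.coeff ((i : ℕ) + k + 1) t *
            (if k ≤ (j : ℕ) then PowerSeries.coeff ((j : ℕ) - k) s else 0))]
      rw [← Finset.sum_subset (Finset.range_subset_range.mpr (by omega : (j:ℕ)+1 ≤ n+1))
        (fun x _ hx => by
          rw [if_neg (by simp at hx; omega)]; ring)]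
      exact Finset.sum_congr rfl fun k hk => by
        rw [if_pos (by simp at hk; omega)]
    have e1 : ∑ k ∈ Finset.range ((i : ℕ) + 1),
        PowerSeries.coeff ((j : ℕ) + 1 + k) s *
          PowerSeries.coeff ((i : ℕ) + (j : ℕ) + 1 - ((j : ℕ) + 1 + k)) t
        = ∑ k ∈ Finset.range ((i : ℕ) + 1),
        PowerSeries.coeff ((i : ℕ) - k) t *
          PowerSeries.coeff (k + (j : ℕ) + 1) s := by
      refine Finset.sum_congr rfl fun k hk => ?_
      simp only [Finset.mem_range] at hk
      rw [show (i : ℕ) + (j : ℕ) + 1 - ((j : ℕ) + 1 + k) = (i : ℕ) - k by omega,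
        show (j : ℕ) + 1 + k = k + (j : ℕ) + 1 by omega, mul_comm]
    have e2 : ∑ m ∈ Finset.range ((j : ℕ) + 1),
        PowerSeries.coeff m s *
          PowerSeries.coeff ((i : ℕ) + (j : ℕ) + 1 - m) t
        = ∑ k ∈ Finset.range ((j : ℕ) + 1),
        PowerSeries.coeff ((i : ℕ) + k + 1) t *
          PowerSeries.coeff ((j : ℕ) - k) s := by
      rw [← Finset.sum_range_reflect (fun m => PowerSeries.coeff m s *
          PowerSeries.coeff ((i : ℕ) + (j : ℕ) + 1 - m) t)]
      refine Finset.sum_congr rfl fun k hk => ?_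
      simp only [Finset.mem_range] at hk
      rw [show (j : ℕ) + 1 - 1 - k = (j : ℕ) - k by omega,
        show (i : ℕ) + (j : ℕ) + 1 - ((j : ℕ) - k) = (i : ℕ) + k + 1 by omega, mul_comm]
    rw [e1, e2] at hsplit
    rw [hL, Matrix.neg_apply, hR]
    linear_combination hsplit
  have hdetT : T.det = 1 := by
    rw [Matrix.det_of_lowerTriangular T (fun i j hij => by
      exact if_neg (by simp at hij ⊢; omega))]
    simp [hT, ht0]
  have hdetS : S.det = 1 := by
    rw [Matrix.det_of_lowerTriangular S (fun i j hij => by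
      exact if_neg (by simp at hij ⊢; omega))]
    simp [hS, hs0]
  have h := congrArg Matrix.det main
  rw [Matrix.det_mul, Matrix.det_neg, Matrix.det_mul, Matrix.det_transpose,
    hdetT, hdetS, one_mul, mul_one, Fintype.card_fin] at h
  exact h
end

section
/- Let K be a field, a ∈ K, and let c = ∑_{n≥0} c_n x^n be a formal power series over K with c_0 = 1. Let f = ∑_{n≥0} f_n x^n satisfy f · (1 − a x c) = 1. Then for every n ≥ 1, det(f_{i+j})_{i,j=0}^{n} = a^n · det(c_{i+j+1})_{i,j=0}^{n−1}, and for every n ≥ 0, det(f_{i+j+1})_{i,j=0}^{n} = a^{n+1} · det(c_{i+j})_{i,j=0}^{n}. -/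
open PowerSeries

noncomputable section HankelAux


variable {K : Type*} [Field K]

def hank (u : PowerSeries K) : PowerSeries (PowerSeries K) :=
  PowerSeries.mk fun i => PowerSeries.mk fun j => PowerSeries.coeff (i + j) u

lemma hankL (u : PowerSeries K) :
    (X - C (X : PowerSeries K)) * hank u
      = X * PowerSeries.map (C (R := K)) u - C (X * u) := by
  apply PowerSeries.ext; intro i
  apply PowerSeries.ext; intro j
  rcases i with _ | i <;> rcases j with _ | j <;>
    simp [hank, sub_mul, coeff_succ_X_mul, coeff_zero_X_mul, coeff_C_mul, coeff_mk, coeff_map,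
      PowerSeries.coeff_C, map_sub]
  rw [show i + (j+1) = i + 1 + j by omega, sub_self]

lemma XsubYne : (X - C (X : PowerSeries K) : PowerSeries (PowerSeries K)) ≠ 0 := by
  intro h
  have h1 := congrArg (coeff (R := PowerSeries K) 1) h
  rw [map_sub] at h1
  simp [PowerSeries.coeff_C] at h1

end HankelAux


section SumAux

variable {K : Type*} [CommRing K]

lemma hank_reflect_succ (n : ℕ) (g : ℕ → K) :
    ∑ p ∈ Finset.range (n+1), g p = ∑ p ∈ Finset.range (n+1), g (n - p) := by
  have h := Finset.sum_range_reflect g (n+1)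
  simpa using h.symm

lemma hank_double_reflect (I J : ℕ) (G : ℕ → ℕ → K) :
    ∑ p ∈ Finset.range (I+1), ∑ q ∈ Finset.range (J+1), G p q
      = ∑ p ∈ Finset.range (I+1), ∑ q ∈ Finset.range (J+1), G (I-p) (J-q) := by
  rw [hank_reflect_succ I (fun p => ∑ q ∈ Finset.range (J+1), G p q)]
  exact Finset.sum_congr rfl fun p _ => hank_reflect_succ J (fun q => G (I-p) q)

lemma hank_fin_double (N : ℕ) (G : ℕ → ℕ → K) :
    ∑ p : Fin N, ∑ q : Fin N, G ↑p ↑q = ∑ p ∈ Finset.range N, ∑ q ∈ Finset.range N, G p q := by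
  rw [Fin.sum_univ_eq_sum_range (fun p => ∑ q : Fin N, G p ↑q) N]
  exact Finset.sum_congr rfl fun p _ => Fin.sum_univ_eq_sum_range _ N

lemma hank_shrink (I N : ℕ) (hI : I < N) (g : ℕ → K) (hg : ∀ p, ¬ p ≤ I → g p = 0) :
    ∑ p ∈ Finset.range N, g p = ∑ p ∈ Finset.range (I+1), g p :=
  (Finset.sum_subset (Finset.range_subset_range.mpr hI)
    (fun x _ hx => hg x (by simp only [Finset.mem_range] at hx; omega))).symm

end SumAux

/-- If `f = 1/(1 − a x c(x))` with `c₀ = 1`, then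
`det(f_{i+j})_{i,j=0}^n = aⁿ det(c_{i+j+1})_{i,j=0}^{n−1}` for `n ≥ 1` and
`det(f_{i+j+1})_{i,j=0}^n = a^{n+1} det(c_{i+j})_{i,j=0}^n` for `n ≥ 0`. -/
theorem hankel_det_of_inv_one_sub_aX {K : Type*} [Field K] (a : K) (c f : PowerSeries K)
    (hc0 : PowerSeries.coeff 0 c = 1)
    (hf : f * (1 - PowerSeries.C a * PowerSeries.X * c) = 1) :
    (∀ n : ℕ, 1 ≤ n →
      Matrix.det (Matrix.of fun i j : Fin (n + 1) =>
          PowerSeries.coeff ((i : ℕ) + (j : ℕ)) f) =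
        a ^ n * Matrix.det (Matrix.of fun i j : Fin n =>
          PowerSeries.coeff ((i : ℕ) + (j : ℕ) + 1) c)) ∧
    (∀ n : ℕ,
      Matrix.det (Matrix.of fun i j : Fin (n + 1) =>
          PowerSeries.coeff ((i : ℕ) + (j : ℕ) + 1) f) =
        a ^ (n + 1) * Matrix.det (Matrix.of fun i j : Fin (n + 1) =>
          PowerSeries.coeff ((i : ℕ) + (j : ℕ)) c)) := by
  classical
  have h1 : (PowerSeries.map (C (R := K)) f) *
      (1 - C (C a) * X * PowerSeries.map (C (R := K)) c) = 1 := by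
    have h := congrArg (PowerSeries.map (C (R := K))) hf
    rw [map_mul, map_sub, map_one, map_mul, map_mul, PowerSeries.map_C, map_X] at h
    exact h
  have h2 : (C f) * (1 - C (C a) * C (X : PowerSeries K) * C c)
      = (1 : PowerSeries (PowerSeries K)) := by
    have h := congrArg (⇑(C (R := PowerSeries K))) hf
    rw [map_mul, map_sub, map_one, map_mul, map_mul] at h
    exact h
  set fx := PowerSeries.map (C (R := K)) f with hfx
  set cx := PowerSeries.map (C (R := K)) c with hcx
  set fy : PowerSeries (PowerSeries K) := C f with hfy
  set cy : PowerSeries (PowerSeries K) := C c with hcy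
  set Y : PowerSeries (PowerSeries K) := C (X : PowerSeries K) with hY
  set Ca : PowerSeries (PowerSeries K) := C (C a) with hCa
  have goal1 : X * cx * fx - Y * cy * fy = fx * fy * (X * cx - Y * cy) := by
    linear_combination (Y * cy * fy) * h1 - (X * cx * fx) * h2
  have goal2 : X * fx - Y * fy = fx * fy * ((X - Y) + Ca * X * Y * (cx - cy)) := by
    linear_combination (Y * fy) * h1 - (X * fx) * h2
  have hankc : (X - Y) * hank c = X * cx - Y * cy := by
    rw [hankL, map_mul, ← hcx, ← hcy, ← hY]
  have master2 : hank (c * f) = fx * (fy * hank c) := by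
    apply mul_left_cancel₀ (XsubYne (K := K))
    rw [hankL, map_mul, map_mul, map_mul, ← hcx, ← hfx, ← hcy, ← hfy, ← hY]
    calc X * (cx * fx) - Y * (cy * fy) = X * cx * fx - Y * cy * fy := by ring
      _ = fx * fy * (X * cx - Y * cy) := goal1
      _ = fx * fy * ((X - Y) * hank c) := by rw [hankc]
      _ = (X - Y) * (fx * (fy * hank c)) := by ring
  set cs : PowerSeries K := PowerSeries.mk fun m => PowerSeries.coeff (m+1) c with hcs
  have hXcs : (X : PowerSeries K) * cs = c - 1 := by
    apply PowerSeries.ext; intro m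
    rcases m with _ | m <;>
      simp [coeff_succ_X_mul, coeff_zero_X_mul, coeff_mk, hc0, PowerSeries.coeff_one, hcs]
    rw [← PowerSeries.coeff_zero_eq_constantCoeff, hc0, sub_self]
  have hankcs : (X - Y) * hank cs = cx - cy := by
    rw [hankL]
    have e1 : X * PowerSeries.map (C (R := K)) cs = cx - 1 := by
      rw [← map_X (f := C (R := K)), ← map_mul, hXcs, map_sub, map_one, hcx]
    have e2 : (C ((X : PowerSeries K) * cs) : PowerSeries (PowerSeries K)) = cy - 1 := by
      rw [hXcs, map_sub, map_one, hcy]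
    rw [e1, e2]; ring
  have master1 : hank f = fx * (fy * (1 + Ca * (X * (Y * hank cs)))) := by
    apply mul_left_cancel₀ (XsubYne (K := K))
    rw [hankL, map_mul, ← hfx, ← hfy, ← hY]
    calc X * fx - Y * fy = fx * fy * ((X - Y) + Ca * X * Y * (cx - cy)) := goal2
      _ = fx * fy * ((X - Y) * (1 + Ca * (X * (Y * hank cs)))) := by
          linear_combination (-(fx * fy * Ca * X * Y)) * hankcs
      _ = (X - Y) * (fx * (fy * (1 + Ca * (X * (Y * hank cs))))) := by ring
  have key2 : ∀ i j : ℕ, PowerSeries.coeff (i+j) (c*f) =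
      ∑ p ∈ Finset.HasAntidiagonal.antidiagonal i, ∑ q ∈ Finset.HasAntidiagonal.antidiagonal j,
        PowerSeries.coeff p.1 f * (PowerSeries.coeff q.1 f * PowerSeries.coeff (p.2+q.2) c) := by
    intro i j
    have hl : PowerSeries.coeff (i+j) (c*f)
        = PowerSeries.coeff j (PowerSeries.coeff i (hank (c*f))) := by
      simp [hank]
    rw [hl, master2, hfx, hfy]
    rw [PowerSeries.coeff_mul, map_sum]
    refine Finset.sum_congr rfl fun p hp => ?_
    rw [coeff_map, coeff_C_mul, coeff_C_mul, PowerSeries.coeff_mul, Finset.mul_sum]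
    refine Finset.sum_congr rfl fun q hq => ?_
    simp [hank, coeff_mk]
  have coeffM : ∀ p q : ℕ, PowerSeries.coeff q (PowerSeries.coeff p
        ((1 : PowerSeries (PowerSeries K)) + Ca * (X * (Y * hank cs))))
      = (if p = 0 then (if q = 0 then (1:K) else 0)
         else (if q = 0 then 0 else a * PowerSeries.coeff (p + q - 1) c)) := by
    intro p q
    rw [map_add, map_add, hCa, coeff_C_mul, hY]
    rcases p with _ | p <;> rcases q with _ | q <;>
      simp [coeff_succ_X_mul, coeff_zero_X_mul, coeff_C_mul, coeff_mk, hank,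
        PowerSeries.coeff_one, PowerSeries.coeff_C, hcs]
    exact Or.inl (by rw [show p + 1 + q = p + q + 1 from by omega])
  have key1 : ∀ i j : ℕ, PowerSeries.coeff (i+j) f =
      ∑ p ∈ Finset.HasAntidiagonal.antidiagonal i, ∑ q ∈ Finset.HasAntidiagonal.antidiagonal j,
        PowerSeries.coeff p.1 f * (PowerSeries.coeff q.1 f *
          (if p.2 = 0 then (if q.2 = 0 then (1:K) else 0)
           else (if q.2 = 0 then 0 else a * PowerSeries.coeff (p.2 + q.2 - 1) c))) := by
    intro i j
    have hl : PowerSeries.coeff (i+j) f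
        = PowerSeries.coeff j (PowerSeries.coeff i (hank f)) := by
      simp [hank]
    rw [hl, master1, hfx, hfy]
    rw [PowerSeries.coeff_mul, map_sum]
    refine Finset.sum_congr rfl fun p hp => ?_
    rw [coeff_map, coeff_C_mul, coeff_C_mul, PowerSeries.coeff_mul, Finset.mul_sum]
    refine Finset.sum_congr rfl fun q hq => ?_
    rw [coeffM]
  have hf0 : PowerSeries.coeff 0 f = 1 := by
    have h := congrArg (PowerSeries.constantCoeff) hf
    simpa using h
  have hfe : f = 1 + PowerSeries.C a * (X * (c * f)) := by linear_combination hf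
  have hfr : ∀ m : ℕ, PowerSeries.coeff (m+1) f = a * PowerSeries.coeff m (c * f) := by
    intro m
    conv_lhs => rw [hfe]
    simp [coeff_succ_X_mul, PowerSeries.coeff_one, coeff_C_mul]
  constructor
  · -- Hankel determinant of f itself
    intro n hn
    obtain ⟨m, rfl⟩ : ∃ m, n = m + 1 := ⟨n - 1, by omega⟩
    set F : Matrix (Fin (m+1+1)) (Fin (m+1+1)) K :=
      fun i p => if (p:ℕ) ≤ (i:ℕ) then PowerSeries.coeff ((i:ℕ)-(p:ℕ)) f else 0 with hFdef
    have hdetF : F.det = 1 := by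
      have ht : F.BlockTriangular ⇑OrderDual.toDual := by
        intro i j hij
        have hij' : (i:ℕ) < (j:ℕ) := hij
        show (if (j:ℕ) ≤ (i:ℕ) then PowerSeries.coeff ((i:ℕ)-(j:ℕ)) f else 0) = 0
        rw [if_neg (by omega)]
      rw [Matrix.det_of_lowerTriangular F ht]
      have hdiag : ∀ i : Fin (m+1+1), F i i = 1 := by
        intro i
        show (if (i:ℕ) ≤ (i:ℕ) then PowerSeries.coeff ((i:ℕ)-(i:ℕ)) f else 0) = 1
        rw [if_pos le_rfl, Nat.sub_self, hf0]
      simp [hdiag]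
    set W : Matrix (Fin (m+1+1)) (Fin (m+1+1)) K :=
      Matrix.of (fun p q : Fin (m+1+1) =>
        (if (p:ℕ) = 0 then (if (q:ℕ) = 0 then (1:K) else 0)
         else (if (q:ℕ) = 0 then 0 else a * PowerSeries.coeff ((p:ℕ)+(q:ℕ)-1) c))) with hWdef
    have entry1 : ∀ i j : Fin (m+1+1),
        PowerSeries.coeff ((i:ℕ)+(j:ℕ)) f = (F * W * F.transpose) i j := by
      intro i j
      have hI : (i:ℕ) < m+1+1 := i.isLt
      have hJ : (j:ℕ) < m+1+1 := j.isLt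
      have s1 : PowerSeries.coeff ((i:ℕ)+(j:ℕ)) f
          = ∑ p ∈ Finset.range ((i:ℕ)+1), ∑ q ∈ Finset.range ((j:ℕ)+1),
              PowerSeries.coeff p f * (PowerSeries.coeff q f *
                (if (i:ℕ)-p = 0 then (if (j:ℕ)-q = 0 then (1:K) else 0)
                 else (if (j:ℕ)-q = 0 then 0
                   else a * PowerSeries.coeff (((i:ℕ)-p)+((j:ℕ)-q)-1) c))) := by
        rw [key1, Finset.Nat.sum_antidiagonal_eq_sum_range_succ_mk]
        exact Finset.sum_congr rfl fun p _ =>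
          Finset.Nat.sum_antidiagonal_eq_sum_range_succ_mk _ _
      have s2 : ∑ p ∈ Finset.range ((i:ℕ)+1), ∑ q ∈ Finset.range ((j:ℕ)+1),
              PowerSeries.coeff p f * (PowerSeries.coeff q f *
                (if (i:ℕ)-p = 0 then (if (j:ℕ)-q = 0 then (1:K) else 0)
                 else (if (j:ℕ)-q = 0 then 0
                   else a * PowerSeries.coeff (((i:ℕ)-p)+((j:ℕ)-q)-1) c)))
          = ∑ p ∈ Finset.range ((i:ℕ)+1), ∑ q ∈ Finset.range ((j:ℕ)+1),
              PowerSeries.coeff ((i:ℕ)-p) f * (PowerSeries.coeff ((j:ℕ)-q) f *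
                (if p = 0 then (if q = 0 then (1:K) else 0)
                 else (if q = 0 then 0 else a * PowerSeries.coeff (p+q-1) c))) := by
        rw [hank_double_reflect]
        refine Finset.sum_congr rfl fun p hp => Finset.sum_congr rfl fun q hq => ?_
        have hp' := Finset.mem_range.mp hp
        have hq' := Finset.mem_range.mp hq
        rw [Nat.sub_sub_self (by omega), Nat.sub_sub_self (by omega)]
      have s3 : ∑ p ∈ Finset.range (m+1+1), ∑ q ∈ Finset.range (m+1+1),
            ((if p ≤ (i:ℕ) then PowerSeries.coeff ((i:ℕ)-p) f else 0) *
              (if p = 0 then (if q = 0 then (1:K) else 0)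
                 else (if q = 0 then 0 else a * PowerSeries.coeff (p+q-1) c)) *
              (if q ≤ (j:ℕ) then PowerSeries.coeff ((j:ℕ)-q) f else 0))
          = ∑ p ∈ Finset.range ((i:ℕ)+1), ∑ q ∈ Finset.range ((j:ℕ)+1),
              PowerSeries.coeff ((i:ℕ)-p) f * (PowerSeries.coeff ((j:ℕ)-q) f *
                (if p = 0 then (if q = 0 then (1:K) else 0)
                 else (if q = 0 then 0 else a * PowerSeries.coeff (p+q-1) c))) := by
        rw [hank_shrink (i:ℕ) (m+1+1) hI _ (fun p hp =>
          Finset.sum_eq_zero fun q _ => by rw [if_neg hp, zero_mul, zero_mul])]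
        refine Finset.sum_congr rfl fun p hp => ?_
        have hp' : p ≤ (i:ℕ) := by have := Finset.mem_range.mp hp; omega
        rw [hank_shrink (j:ℕ) (m+1+1) hJ _ (fun q hq => by rw [if_neg hq, mul_zero])]
        refine Finset.sum_congr rfl fun q hq => ?_
        have hq' : q ≤ (j:ℕ) := by have := Finset.mem_range.mp hq; omega
        rw [if_pos hp', if_pos hq']
        ring
      have s4 : (F * W * F.transpose) i j
          = ∑ p ∈ Finset.range (m+1+1), ∑ q ∈ Finset.range (m+1+1),
            ((if p ≤ (i:ℕ) then PowerSeries.coeff ((i:ℕ)-p) f else 0) *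
              (if p = 0 then (if q = 0 then (1:K) else 0)
                 else (if q = 0 then 0 else a * PowerSeries.coeff (p+q-1) c)) *
              (if q ≤ (j:ℕ) then PowerSeries.coeff ((j:ℕ)-q) f else 0)) := by
        rw [← hank_fin_double (m+1+1) (fun p q =>
            (if p ≤ (i:ℕ) then PowerSeries.coeff ((i:ℕ)-p) f else 0) *
              (if p = 0 then (if q = 0 then (1:K) else 0)
                 else (if q = 0 then 0 else a * PowerSeries.coeff (p+q-1) c)) *
              (if q ≤ (j:ℕ) then PowerSeries.coeff ((j:ℕ)-q) f else 0))]
        simp only [Matrix.mul_apply, Matrix.transpose_apply, Finset.sum_mul]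
        rw [Finset.sum_comm]
        rfl
      rw [s1, s2, ← s3, s4]
    have hmat : (Matrix.of fun i j : Fin (m+1+1) =>
        PowerSeries.coeff ((i : ℕ) + (j : ℕ)) f) = F * W * F.transpose :=
      Matrix.ext entry1
    have hdetW : W.det = a ^ (m+1) * (Matrix.of fun p q : Fin (m+1) =>
        PowerSeries.coeff ((p:ℕ)+(q:ℕ)+1) c).det := by
      rw [Matrix.det_succ_column_zero]
      rw [Fintype.sum_eq_single (0 : Fin (m+1+1)) (fun x hx => by
        have hx' : (x:ℕ) ≠ 0 := fun h => hx (Fin.ext h)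
        have hW0 : W x 0 = 0 := by
          show (if (x:ℕ) = 0 then (if ((0:Fin (m+1+1)):ℕ) = 0 then (1:K) else 0)
            else (if ((0:Fin (m+1+1)):ℕ) = 0 then 0
              else a * PowerSeries.coeff ((x:ℕ)+((0:Fin (m+1+1)):ℕ)-1) c)) = 0
          rw [if_neg hx']
          simp
        rw [hW0, mul_zero, zero_mul])]
      have hsub : W.submatrix (Fin.succAbove 0) Fin.succ
          = a • Matrix.of (fun p q : Fin (m+1) =>
              PowerSeries.coeff ((p:ℕ)+(q:ℕ)+1) c) := by
        ext p q
        have : W.submatrix (Fin.succAbove 0) Fin.succ p q = W p.succ q.succ := by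
          rw [Matrix.submatrix_apply, Fin.succAbove_zero]
        rw [this]
        show (if ((p.succ:Fin (m+1+1)):ℕ) = 0 then (if ((q.succ:Fin (m+1+1)):ℕ) = 0 then (1:K) else 0)
            else (if ((q.succ:Fin (m+1+1)):ℕ) = 0 then 0
              else a * PowerSeries.coeff (((p.succ:Fin (m+1+1)):ℕ)+((q.succ:Fin (m+1+1)):ℕ)-1) c)) = _
        rw [Fin.val_succ, Fin.val_succ, if_neg (by omega), if_neg (by omega)]
        show a * PowerSeries.coeff ((p:ℕ)+1+((q:ℕ)+1)-1) c
          = (a • Matrix.of (fun p q : Fin (m+1) => PowerSeries.coeff ((p:ℕ)+(q:ℕ)+1) c)) p q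
        rw [show (p:ℕ)+1+((q:ℕ)+1)-1 = (p:ℕ)+(q:ℕ)+1 from by omega]
        simp
      have hW00 : W 0 0 = 1 := by simp [hWdef]
      rw [hW00, hsub, Matrix.det_smul, Fintype.card_fin]
      simp
    rw [hmat, Matrix.det_mul, Matrix.det_mul, Matrix.det_transpose, hdetF, one_mul, mul_one,
      hdetW]
  · -- shifted Hankel determinant
    intro n
    set F : Matrix (Fin (n+1)) (Fin (n+1)) K :=
      fun i p => if (p:ℕ) ≤ (i:ℕ) then PowerSeries.coeff ((i:ℕ)-(p:ℕ)) f else 0 with hFdef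
    have hdetF : F.det = 1 := by
      have ht : F.BlockTriangular ⇑OrderDual.toDual := by
        intro i j hij
        have hij' : (i:ℕ) < (j:ℕ) := hij
        show (if (j:ℕ) ≤ (i:ℕ) then PowerSeries.coeff ((i:ℕ)-(j:ℕ)) f else 0) = 0
        rw [if_neg (by omega)]
      rw [Matrix.det_of_lowerTriangular F ht]
      have hdiag : ∀ i : Fin (n+1), F i i = 1 := by
        intro i
        show (if (i:ℕ) ≤ (i:ℕ) then PowerSeries.coeff ((i:ℕ)-(i:ℕ)) f else 0) = 1
        rw [if_pos le_rfl, Nat.sub_self, hf0]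
      simp [hdiag]
    set W : Matrix (Fin (n+1)) (Fin (n+1)) K :=
      Matrix.of (fun p q : Fin (n+1) => a * PowerSeries.coeff ((p:ℕ)+(q:ℕ)) c) with hWdef
    have entry2 : ∀ i j : Fin (n+1),
        PowerSeries.coeff ((i:ℕ)+(j:ℕ)+1) f = (F * W * F.transpose) i j := by
      intro i j
      have hI : (i:ℕ) < n+1 := i.isLt
      have hJ : (j:ℕ) < n+1 := j.isLt
      have s1 : PowerSeries.coeff ((i:ℕ)+(j:ℕ)+1) f
          = a * ∑ p ∈ Finset.range ((i:ℕ)+1), ∑ q ∈ Finset.range ((j:ℕ)+1),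
              PowerSeries.coeff p f * (PowerSeries.coeff q f *
                PowerSeries.coeff (((i:ℕ)-p)+((j:ℕ)-q)) c) := by
        rw [hfr, key2, Finset.Nat.sum_antidiagonal_eq_sum_range_succ_mk]
        congr 1
        exact Finset.sum_congr rfl fun p _ =>
          Finset.Nat.sum_antidiagonal_eq_sum_range_succ_mk _ _
      have s2 : ∑ p ∈ Finset.range ((i:ℕ)+1), ∑ q ∈ Finset.range ((j:ℕ)+1),
              PowerSeries.coeff p f * (PowerSeries.coeff q f *
                PowerSeries.coeff (((i:ℕ)-p)+((j:ℕ)-q)) c)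
          = ∑ p ∈ Finset.range ((i:ℕ)+1), ∑ q ∈ Finset.range ((j:ℕ)+1),
              PowerSeries.coeff ((i:ℕ)-p) f * (PowerSeries.coeff ((j:ℕ)-q) f *
                PowerSeries.coeff (p+q) c) := by
        rw [hank_double_reflect]
        refine Finset.sum_congr rfl fun p hp => Finset.sum_congr rfl fun q hq => ?_
        have hp' := Finset.mem_range.mp hp
        have hq' := Finset.mem_range.mp hq
        rw [Nat.sub_sub_self (by omega), Nat.sub_sub_self (by omega)]
      have s3 : ∑ p ∈ Finset.range (n+1), ∑ q ∈ Finset.range (n+1),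
            ((if p ≤ (i:ℕ) then PowerSeries.coeff ((i:ℕ)-p) f else 0) *
              (a * PowerSeries.coeff (p+q) c) *
              (if q ≤ (j:ℕ) then PowerSeries.coeff ((j:ℕ)-q) f else 0))
          = a * ∑ p ∈ Finset.range ((i:ℕ)+1), ∑ q ∈ Finset.range ((j:ℕ)+1),
              PowerSeries.coeff ((i:ℕ)-p) f * (PowerSeries.coeff ((j:ℕ)-q) f *
                PowerSeries.coeff (p+q) c) := by
        rw [hank_shrink (i:ℕ) (n+1) hI _ (fun p hp =>
          Finset.sum_eq_zero fun q _ => by rw [if_neg hp, zero_mul, zero_mul])]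
        rw [Finset.mul_sum]
        refine Finset.sum_congr rfl fun p hp => ?_
        have hp' : p ≤ (i:ℕ) := by have := Finset.mem_range.mp hp; omega
        rw [hank_shrink (j:ℕ) (n+1) hJ _ (fun q hq => by rw [if_neg hq, mul_zero])]
        rw [Finset.mul_sum]
        refine Finset.sum_congr rfl fun q hq => ?_
        have hq' : q ≤ (j:ℕ) := by have := Finset.mem_range.mp hq; omega
        rw [if_pos hp', if_pos hq']
        ring
      have s4 : (F * W * F.transpose) i j
          = ∑ p ∈ Finset.range (n+1), ∑ q ∈ Finset.range (n+1),
            ((if p ≤ (i:ℕ) then PowerSeries.coeff ((i:ℕ)-p) f else 0) *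
              (a * PowerSeries.coeff (p+q) c) *
              (if q ≤ (j:ℕ) then PowerSeries.coeff ((j:ℕ)-q) f else 0)) := by
        rw [← hank_fin_double (n+1) (fun p q =>
            (if p ≤ (i:ℕ) then PowerSeries.coeff ((i:ℕ)-p) f else 0) *
              (a * PowerSeries.coeff (p+q) c) *
              (if q ≤ (j:ℕ) then PowerSeries.coeff ((j:ℕ)-q) f else 0))]
        simp only [Matrix.mul_apply, Matrix.transpose_apply, Finset.sum_mul]
        rw [Finset.sum_comm]
        rfl
      rw [s1, s2, ← s3, s4]
    have hmat : (Matrix.of fun i j : Fin (n + 1) =>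
        PowerSeries.coeff ((i : ℕ) + (j : ℕ) + 1) f) = F * W * F.transpose :=
      Matrix.ext entry2
    have hWsmul : W = a • Matrix.of (fun p q : Fin (n+1) =>
        PowerSeries.coeff ((p:ℕ)+(q:ℕ)) c) := by
      ext p q
      simp [hWdef]
    rw [hmat, Matrix.det_mul, Matrix.det_mul, Matrix.det_transpose, hdetF, one_mul, mul_one,
      hWsmul, Matrix.det_smul, Fintype.card_fin]
end

section
/- Let K be a field, a ∈ K, m ≥ −1 and p ≥ 1 integers, and let g = ∑_{n≥0} g_n x^n be a formal power series over K with g_0 = 1. Let f = ∑_{n≥0} f_n x^n satisfy f · (1 − a x^p g) = 1, and set f_n = 0 for n < 0 and g_n = 0 for n < 0. Then: (i) det(f_{i+j−m})_{i,j=0}^{n} = 0 for 0 ≤ n < m; (ii) det(f_{i+j−m})_{i,j=0}^{m} = (−1)^{\binom{m+1}{2}} (when m ≥ 0); (iii) for every n ≥ 1, det(f_{i+j−m})_{i,j=0}^{n+m} = (−1)^{\binom{m+1}{2}} · a^n · det(g_{i+j+m−p+2})_{i,j=0}^{n−1}. -/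
lemma det_antidiag {K : Type*} [CommRing K] (k : ℕ) :
    Matrix.det (Matrix.of fun i j : Fin k => if (i:ℕ)+(j:ℕ)+1 = k then (1:K) else 0)
      = (-1)^(k.choose 2) := by
  induction k with
  | zero => simp
  | succ k ih =>
    rw [Matrix.det_succ_row_zero]
    rw [Finset.sum_eq_single (Fin.last k)]
    · have h1 : (Matrix.of fun i j : Fin (k+1) => if (i:ℕ)+(j:ℕ)+1 = k+1 then (1:K) else 0).submatrix
          Fin.succ (Fin.last k).succAbove
          = Matrix.of fun i j : Fin k => if (i:ℕ)+(j:ℕ)+1 = k then (1:K) else 0 := by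
        ext i j
        simp only [Matrix.submatrix_apply, Matrix.of_apply, Fin.succAbove, Fin.lt_iff_val_lt_val,
          Fin.val_succ, Fin.coe_castSucc, Fin.val_last, j.isLt, if_pos]
        congr 1
        · simp [Nat.add_right_cancel_iff]; omega
      rw [h1, ih]
      simp only [Fin.val_last, Fin.val_zero, Matrix.of_apply, Nat.zero_add]
      rw [Nat.choose_succ_succ, Nat.choose_one_right, pow_add]
      simp
    · intro b _ hb
      have hb' : (0:Fin (k+1)).val + (b:ℕ) + 1 ≠ k + 1 := by
        intro h; apply hb; apply Fin.ext; simp at h ⊢; omega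
      simp only [Matrix.of_apply, if_neg hb', zero_mul, mul_zero]
    · simp


lemma key_conv {K : Type*} [Field K] (f u : PowerSeries K)
    (hfu : f * u = 1) (f' : ℤ → K)
    (hf' : ∀ n : ℤ, f' n = if 0 ≤ n then PowerSeries.coeff n.toNat f else 0)
    (k : ℤ) (S : ℕ) (hkS : k ≤ S) :
    (∑ s ∈ Finset.range (S+1), f' (k - s) * PowerSeries.coeff s u)
      = if k = 0 then 1 else 0 := by
  rcases lt_or_ge k 0 with hk | hk
  · rw [if_neg (by omega)]
    apply Finset.sum_eq_zero
    intro s _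
    rw [hf', if_neg (by omega), zero_mul]
  · set k0 := k.toNat with hk0def
    have hk0 : (k0:ℤ) = k := Int.toNat_of_nonneg hk
    have hsub : Finset.range (k0+1) ⊆ Finset.range (S+1) :=
      Finset.range_subset_range.2 (by omega)
    rw [← Finset.sum_subset hsub (by
      intro s hs1 hs2
      simp only [Finset.mem_range] at hs1 hs2
      rw [hf', if_neg (by omega), zero_mul])]
    have hrefl := Finset.sum_range_reflect
      (fun s => f' (k - s) * PowerSeries.coeff s u) (k0+1)
    rw [← hrefl]
    have : ∀ i ∈ Finset.range (k0+1),
        f' (k - ((k0 + 1 - 1 - i : ℕ) : ℤ)) * PowerSeries.coeff (k0 + 1 - 1 - i) u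
          = PowerSeries.coeff i f * PowerSeries.coeff (k0 - i) u := by
      intro i hi
      simp only [Finset.mem_range] at hi
      have h2 : k - ((k0 + 1 - 1 - i : ℕ) : ℤ) = (i : ℤ) := by omega
      rw [h2, hf', if_pos (Int.natCast_nonneg i), Int.toNat_natCast,
        show k0 + 1 - 1 - i = k0 - i from rfl]
    rw [Finset.sum_congr rfl this,
      ← Finset.Nat.sum_antidiagonal_eq_sum_range_succ_mk
        (fun ij => PowerSeries.coeff ij.1 f * PowerSeries.coeff ij.2 u),
      ← PowerSeries.coeff_mul, hfu, PowerSeries.coeff_one]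
    congr 1
    simp only [eq_iff_iff]
    omega

lemma master {K : Type*} [Field K] (a : K) (m : ℤ) (hm : -1 ≤ m)
    (p : ℕ) (hp : 1 ≤ p) (f g : PowerSeries K)
    (hg0 : PowerSeries.coeff 0 g = 1)
    (hf : f * (1 - PowerSeries.C a * PowerSeries.X ^ p * g) = 1)
    (f' g' : ℤ → K)
    (hf' : ∀ n : ℤ, f' n = if 0 ≤ n then PowerSeries.coeff n.toNat f else 0)
    (hg' : ∀ n : ℤ, g' n = if 0 ≤ n then PowerSeries.coeff n.toNat g else 0)
    (n : ℕ) :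
    Matrix.det (Matrix.of fun i j : Fin ((m+1).toNat + n) => f' ((i:ℤ)+(j:ℤ)-m))
      = (-1)^(((m+1).toNat).choose 2) * a^n *
        Matrix.det (Matrix.of fun i j : Fin n => g' ((i:ℤ)+(j:ℤ)+m-(p:ℤ)+2)) := by
  classical
  set M0 : ℕ := (m+1).toNat with hM0def
  have hM0 : (M0:ℤ) = m+1 := Int.toNat_of_nonneg (by omega)
  set N : ℕ := M0 + n with hNdef
  set u : PowerSeries K := 1 - PowerSeries.C a * PowerSeries.X ^ p * g with hudef
  set h : ℕ → K := fun s => PowerSeries.coeff s u with hhdef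
  have hu0 : PowerSeries.constantCoeff u = 1 := by
    simp [hudef, map_mul, map_pow, zero_pow (by omega : p ≠ 0)]
  have hh0 : h 0 = 1 := by
    show PowerSeries.coeff 0 u = 1
    rw [PowerSeries.coeff_zero_eq_constantCoeff, hu0]
  have hf0 : f' 0 = 1 := by
    have h3 := congrArg (PowerSeries.constantCoeff) hf
    rw [map_mul, hu0, mul_one, map_one] at h3
    rw [hf', if_pos le_rfl]
    simpa using h3
  have hneg : ∀ s : ℕ, 1 ≤ s → h s = -a * g' ((s:ℤ) - p) := by
    intro s hs
    have h1 : PowerSeries.C a * PowerSeries.X ^ p * g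
        = (g * PowerSeries.X ^ p) * PowerSeries.C a := by ring
    show PowerSeries.coeff s u = -a * g' ((s:ℤ) - p)
    rw [hudef, map_sub, PowerSeries.coeff_one, if_neg (by omega), h1,
      PowerSeries.coeff_mul_C, PowerSeries.coeff_mul_X_pow', hg']
    split_ifs with h2 h3 h3
    · rw [show ((s:ℤ) - p).toNat = s - p by omega]; ring
    · omega
    · omega
    · ring
  have key : ∀ (k : ℤ) (S : ℕ), k ≤ S →
      (∑ s ∈ Finset.range (S+1), f' (k - s) * h s) = if k = 0 then 1 else 0 :=
    fun k S hkS => key_conv f u hf f' hf' k S hkS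
  -- matrices
  set M : Matrix (Fin N) (Fin N) K :=
    Matrix.of (fun i j : Fin N => f' ((i:ℤ)+(j:ℤ)-m)) with hMdef
  set T : Matrix (Fin N) (Fin N) K :=
    Matrix.of (fun j l : Fin N => if (j:ℕ) ≤ (l:ℕ) then h ((l:ℕ) - (j:ℕ)) else 0) with hTdef
  have detT : T.det = 1 := by
    rw [Matrix.det_of_upperTriangular (by
      intro i j hij
      exact if_neg (by exact Nat.not_le.2 hij))]
    simp [hTdef, hh0]
  have hMT : ∀ i l : Fin N, (M * T) i l
      = ∑ s ∈ Finset.range ((l:ℕ)+1), f' ((i:ℤ)+(l:ℤ)-m-s) * h s := by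
    intro i l
    rw [Matrix.mul_apply]
    have e1 : ∀ j : Fin N, M i j * T j l
        = (fun jj : ℕ => f' ((i:ℤ)+jj-m) *
            (if jj ≤ (l:ℕ) then h ((l:ℕ) - jj) else 0)) (j:ℕ) := fun j => rfl
    have e2 : ∑ j : Fin N, M i j * T j l
        = ∑ jj ∈ Finset.range N, f' ((i:ℤ)+jj-m) *
            (if jj ≤ (l:ℕ) then h ((l:ℕ) - jj) else 0) := by
      rw [Finset.sum_congr rfl (fun j _ => e1 j)]
      exact Fin.sum_univ_eq_sum_range (fun jj => f' ((i:ℤ)+jj-m) * (if jj ≤ (l:ℕ) then h ((l:ℕ) - jj) else 0)) N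
    rw [e2]
    rw [← Finset.sum_subset (Finset.range_subset_range.2 (show (l:ℕ)+1 ≤ N from l.isLt))
      (by
        intro s hs1 hs2
        simp only [Finset.mem_range] at hs1 hs2
        rw [if_neg (by omega), mul_zero])]
    rw [← Finset.sum_range_reflect]
    apply Finset.sum_congr rfl
    intro s hs
    simp only [Finset.mem_range] at hs
    rw [if_pos (by omega)]
    rw [show (l:ℕ) - ((l:ℕ)+1-1-s) = s by omega,
      show (i:ℤ) + (((l:ℕ)+1-1-s : ℕ) : ℤ) - m = (i:ℤ)+(l:ℤ)-m-s by omega]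
  -- block structure
  set A : Matrix (Fin M0) (Fin M0) K :=
    Matrix.of (fun i j => if (i:ℕ)+(j:ℕ)+1 = M0 then 1 else 0) with hAdef
  set C : Matrix (Fin n) (Fin M0) K :=
    Matrix.of (fun r j => ∑ t ∈ Finset.range ((r:ℕ)+1),
      f' ((r:ℤ)-t) * (a * g' ((j:ℤ)+1+t-p))) with hCdef
  set L : Matrix (Fin n) (Fin n) K := Matrix.of (fun r t => f' ((r:ℤ)-(t:ℤ))) with hLdef
  set G : Matrix (Fin n) (Fin n) K :=
    Matrix.of (fun t c => g' ((t:ℤ)+(c:ℤ)+m-(p:ℤ)+2)) with hGdef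
  have htop : ∀ (i : Fin M0) (l : Fin N), (M * T) (finSumFinEquiv (Sum.inl i)) l
      = if (i:ℤ) + ((l:ℕ):ℤ) = m then 1 else 0 := by
    intro i l
    rw [hMT]
    have hiv : ((finSumFinEquiv (Sum.inl i) : Fin N) : ℕ) = (i:ℕ) := by
      simp [finSumFinEquiv_apply_left]
    have hsum : ∑ s ∈ Finset.range ((l:ℕ)+1),
          f' (((finSumFinEquiv (Sum.inl i) : Fin N):ℤ) + ((l:ℕ):ℤ) - m - (s:ℤ)) * h s
        = ∑ s ∈ Finset.range ((l:ℕ)+1), f' (((i:ℤ) + ((l:ℕ):ℤ) - m) - (s:ℤ)) * h s := by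
      apply Finset.sum_congr rfl
      intro s _
      congr 2
      all_goals omega
    rw [hsum, key ((i:ℤ) + ((l:ℕ):ℤ) - m) (l:ℕ) (by
      have := i.isLt
      omega)]
    by_cases hc : (i:ℤ) + ((l:ℕ):ℤ) = m
    · rw [if_pos (by omega), if_pos hc]
    · rw [if_neg (by omega), if_neg hc]
  have hbot : ∀ (r : Fin n) (l : Fin N), (M * T) (finSumFinEquiv (Sum.inr r)) l
      = ∑ t ∈ Finset.range ((r:ℕ)+1),
          f' ((r:ℤ)-(t:ℤ)) * (a * g' (((l:ℕ):ℤ)+1+(t:ℤ)-(p:ℤ))) := by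
    intro r l
    rw [hMT]
    have hiv : ((finSumFinEquiv (Sum.inr r) : Fin N) : ℕ) = M0 + (r:ℕ) := by
      simp [finSumFinEquiv_apply_right]
    have hsum : ∑ s ∈ Finset.range ((l:ℕ)+1),
          f' (((finSumFinEquiv (Sum.inr r) : Fin N):ℤ) + ((l:ℕ):ℤ) - m - (s:ℤ)) * h s
        = ∑ s ∈ Finset.range ((l:ℕ)+1), f' ((((r:ℕ)+(l:ℕ)+1 : ℕ):ℤ) - (s:ℤ)) * h s := by
      apply Finset.sum_congr rfl
      intro s _
      congr 2
      omega
    rw [hsum]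
    have hkey := key (((r:ℕ)+(l:ℕ)+1 : ℕ):ℤ) ((r:ℕ)+(l:ℕ)+1) (by omega)
    rw [if_neg (by omega)] at hkey
    have hsplit := Finset.sum_Ico_consecutive
      (f := fun s : ℕ => f' ((((r:ℕ)+(l:ℕ)+1 : ℕ):ℤ) - (s:ℤ)) * h s)
      (show (0:ℕ) ≤ (l:ℕ)+1 by omega)
      (show (l:ℕ)+1 ≤ (r:ℕ)+(l:ℕ)+1+1 by omega)
    have hkey' : ∑ s ∈ Finset.Ico 0 ((r:ℕ)+(l:ℕ)+1+1),
        f' ((((r:ℕ)+(l:ℕ)+1 : ℕ):ℤ) - (s:ℤ)) * h s = 0 := by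
      rw [← Finset.range_eq_Ico]; exact hkey
    rw [hkey'] at hsplit
    have h2 : ∑ s ∈ Finset.Ico ((l:ℕ)+1) ((r:ℕ)+(l:ℕ)+1+1),
          f' ((((r:ℕ)+(l:ℕ)+1 : ℕ):ℤ) - (s:ℤ)) * h s
        = ∑ t ∈ Finset.range ((r:ℕ)+1),
            -(f' ((r:ℤ)-(t:ℤ)) * (a * g' (((l:ℕ):ℤ)+1+(t:ℤ)-(p:ℤ)))) := by
      rw [Finset.sum_Ico_eq_sum_range]
      rw [show (r:ℕ)+(l:ℕ)+1+1 - ((l:ℕ)+1) = (r:ℕ)+1 by omega]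
      apply Finset.sum_congr rfl
      intro t _
      rw [hneg ((l:ℕ)+1+t) (by omega),
        show (((r:ℕ)+(l:ℕ)+1 : ℕ):ℤ) - (((l:ℕ)+1+t : ℕ):ℤ) = (r:ℤ)-(t:ℤ) by omega,
        show (((l:ℕ)+1+t : ℕ):ℤ) - (p:ℤ) = ((l:ℕ):ℤ)+1+(t:ℤ)-(p:ℤ) by omega]
      ring
    rw [h2, Finset.sum_neg_distrib] at hsplit
    beta_reduce at hsplit
    rw [← Finset.range_eq_Ico] at hsplit
    linear_combination hsplit
  have hblock : (M * T).submatrix (finSumFinEquiv (m := M0) (n := n))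
      (finSumFinEquiv (m := M0) (n := n)) = Matrix.fromBlocks A 0 C (a • (L * G)) := by
    apply Matrix.ext
    rintro (i | r) (j | c) <;>
      simp only [Matrix.submatrix_apply, Matrix.fromBlocks_apply₁₁, Matrix.fromBlocks_apply₁₂,
        Matrix.fromBlocks_apply₂₁, Matrix.fromBlocks_apply₂₂, Matrix.zero_apply]
    · rw [htop, hAdef]
      have hjv : ((finSumFinEquiv (Sum.inl j) : Fin N) : ℕ) = (j:ℕ) := by simp
      simp only [Matrix.of_apply]
      by_cases hc : (i:ℕ)+(j:ℕ)+1 = M0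
      · rw [if_pos (by omega), if_pos hc]
      · rw [if_neg (by omega), if_neg hc]
    · rw [htop]
      have hjv : ((finSumFinEquiv (Sum.inr c) : Fin N) : ℕ) = M0 + (c:ℕ) := by simp
      rw [if_neg (by have := i.isLt; omega)]
    · rw [hbot, hCdef]
      have hjv : ((finSumFinEquiv (Sum.inl j) : Fin N) : ℕ) = (j:ℕ) := by simp
      simp only [Matrix.of_apply]
      apply Finset.sum_congr rfl
      intro t _
      rw [show (((finSumFinEquiv (Sum.inl j) : Fin N):ℕ):ℤ) + 1 + (t:ℤ) - (p:ℤ)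
          = ((j:ℕ):ℤ)+1+(t:ℤ)-(p:ℤ) by omega]
    · rw [hbot]
      have hjv : ((finSumFinEquiv (Sum.inr c) : Fin N) : ℕ) = M0 + (c:ℕ) := by simp
      rw [Matrix.smul_apply, Matrix.mul_apply]
      have e3 : ∑ t : Fin n, L r t * G t c
          = ∑ t ∈ Finset.range n, f' ((r:ℤ)-(t:ℤ)) * g' ((t:ℤ)+(c:ℤ)+m-(p:ℤ)+2) :=
        Fin.sum_univ_eq_sum_range
          (fun tt => f' ((r:ℤ)-(tt:ℤ)) * g' ((tt:ℤ)+(c:ℤ)+m-(p:ℤ)+2)) n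
      rw [e3, ← Finset.sum_subset (Finset.range_subset_range.2 (show (r:ℕ)+1 ≤ n from r.isLt))
        (by
          intro t ht1 ht2
          simp only [Finset.mem_range] at ht1 ht2
          rw [hf', if_neg (by omega), zero_mul]),
        smul_eq_mul, Finset.mul_sum]
      apply Finset.sum_congr rfl
      intro t ht
      rw [show (((finSumFinEquiv (Sum.inr c) : Fin N):ℕ):ℤ) + 1 + (t:ℤ) - (p:ℤ)
          = (t:ℤ)+(c:ℤ)+m-(p:ℤ)+2 by omega]
      ring
  have detL : L.det = 1 := by
    rw [Matrix.det_of_lowerTriangular L (by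
      intro i j hij
      simp only [hLdef, Matrix.of_apply]
      rw [hf', if_neg (by
        simp only [OrderDual.toDual_lt_toDual] at hij
        have : (i:ℕ) < (j:ℕ) := hij
        omega)])]
    simp [hLdef, hf0]
  calc M.det = (M * T).det := by rw [Matrix.det_mul, detT, mul_one]
    _ = ((M * T).submatrix finSumFinEquiv finSumFinEquiv).det :=
        (Matrix.det_submatrix_equiv_self _ _).symm
    _ = (Matrix.fromBlocks A 0 C (a • (L * G))).det := by rw [hblock]
    _ = A.det * (a • (L * G)).det := Matrix.det_fromBlocks_zero₁₂ _ _ _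
    _ = (-1)^(M0.choose 2) * a^n *
        Matrix.det (Matrix.of fun i j : Fin n => g' ((i:ℤ)+(j:ℤ)+m-(p:ℤ)+2)) := by
      rw [hAdef, det_antidiag, Matrix.det_smul, Matrix.det_mul, detL, one_mul,
        Fintype.card_fin, hGdef]
      ring


lemma det_dim_cast {K : Type*} [CommRing K] (f' : ℤ → K) (m : ℤ) {k k' : ℕ} (h : k = k') :
    Matrix.det (Matrix.of fun i j : Fin k => f' ((i:ℤ)+(j:ℤ)-m))
      = Matrix.det (Matrix.of fun i j : Fin k' => f' ((i:ℤ)+(j:ℤ)-m)) := by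
  subst h; rfl

/-- Lemma 2.1: if `f = 1/(1 − a x^p g(x))` with `g₀ = 1`, `p ≥ 1` and `m ≥ −1`, sequences
being extended by zero to negative indices, then the shifted Hankel determinants satisfy
`det(f_{i+j−m})_{i,j=0}^n = 0` for `n < m`, `det(f_{i+j−m})_{i,j=0}^m = (−1)^{C(m+1,2)}`,
and `det(f_{i+j−m})_{i,j=0}^{n+m} = (−1)^{C(m+1,2)} aⁿ det(g_{i+j+m−p+2})_{i,j=0}^{n−1}`
for `n ≥ 1`. -/
theorem hankel_lemma_cfrac_step {K : Type*} [Field K] (a : K) (m : ℤ) (hm : -1 ≤ m)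
    (p : ℕ) (hp : 1 ≤ p) (f g : PowerSeries K)
    (hg0 : PowerSeries.coeff 0 g = 1)
    (hf : f * (1 - PowerSeries.C a * PowerSeries.X ^ p * g) = 1)
    (f' g' : ℤ → K)
    (hf' : ∀ n : ℤ, f' n = if 0 ≤ n then PowerSeries.coeff n.toNat f else 0)
    (hg' : ∀ n : ℤ, g' n = if 0 ≤ n then PowerSeries.coeff n.toNat g else 0) :
    (∀ n : ℕ, (n : ℤ) < m →
      Matrix.det (Matrix.of fun i j : Fin (n + 1) =>
        f' ((i : ℤ) + (j : ℤ) - m)) = 0) ∧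
    (0 ≤ m →
      Matrix.det (Matrix.of fun i j : Fin (m.toNat + 1) =>
        f' ((i : ℤ) + (j : ℤ) - m)) = (-1) ^ Nat.choose (m + 1).toNat 2) ∧
    (∀ n : ℕ, 1 ≤ n →
      Matrix.det (Matrix.of fun i j : Fin (((n : ℤ) + m).toNat + 1) =>
          f' ((i : ℤ) + (j : ℤ) - m)) =
        (-1) ^ Nat.choose (m + 1).toNat 2 * a ^ n *
          Matrix.det (Matrix.of fun i j : Fin n =>
            g' ((i : ℤ) + (j : ℤ) + m - (p : ℤ) + 2))) := by
  refine ⟨?_, ?_, ?_⟩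
  · intro n hn
    apply Matrix.det_eq_zero_of_row_eq_zero 0
    intro j
    simp only [Matrix.of_apply, Fin.val_zero]
    rw [hf', if_neg (by have := j.isLt; omega)]
  · intro hm0
    rw [det_dim_cast f' m (show m.toNat + 1 = (m+1).toNat + 0 by omega),
      master a m hm p hp f g hg0 hf f' g' hf' hg' 0]
    simp [Matrix.det_fin_zero]
  · intro n hn
    rw [det_dim_cast f' m (show ((n:ℤ)+m).toNat + 1 = (m+1).toNat + n by omega),
      master a m hm p hp f g hg0 hf f' g' hf' hg' n]
end

section
/- (Buslaev's theorem) Let K be a field, (a_k)_{k≥0} a sequence in K, and (b_k)_{k≥−1} a nondecreasing sequence of integers with b_{−1} = −1, b_0 = 0 and b_{k+2} − b_k ≥ 1 for all k ≥ −1. Suppose f = ∑_{n≥0} f_n x^n is a formal power series over K for which there exist formal power series (F^{(k)})_{k≥0} with F^{(0)} = f and F^{(k)} · (1 − a_k x^{b_{k+1}−b_{k−1}} F^{(k+1)}) = 1 for all k ≥ 0, and with all a_k ≠ 0. Let d(n) = det(f_{i+j})_{i,j=0}^{n}. Then for every k ≥ 0, d(b_k) = (−1)^{\binom{b_1−b_0}{2}+\binom{b_2−b_1}{2}+⋯+\binom{b_k−b_{k−1}}{2}}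 · a_0^{b_k−b_0} a_1^{b_k−b_1} ⋯ a_{k−1}^{b_k−b_{k−1}}, and d(n) = 0 for every n > 0 that is not of the form b_k for some k. -/
open PowerSeries Matrix Finset

lemma buslaev_det_eq_zero_of_low_support {K : Type*} [Field K] {β γ : ℕ} (hβ : 0 < β)
    (hγ : β ≤ γ) (D : Matrix (Fin β) (Fin β) K)
    (h0 : ∀ i j : Fin β, (i : ℕ) + (j : ℕ) < γ → D i j = 0) : D.det = 0 := by
  rw [Matrix.det_apply]
  refine Finset.sum_eq_zero fun σ _ => ?_
  have hex : ∃ i : Fin β, (σ i : ℕ) + (i : ℕ) < γ := by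
    by_contra hcon
    push_neg at hcon
    have h1 : β * γ ≤ ∑ i : Fin β, ((σ i : ℕ) + (i : ℕ)) := by
      calc β * γ = ∑ _i : Fin β, γ := by simp [Finset.sum_const, mul_comm]
      _ ≤ _ := Finset.sum_le_sum fun i _ => hcon i
    have h2 : ∑ i : Fin β, ((σ i : ℕ) + (i : ℕ)) = β * (β - 1) := by
      rw [Finset.sum_add_distrib]
      have hσ : ∑ i : Fin β, ((σ i : ℕ)) = ∑ i : Fin β, (i : ℕ) :=
        Equiv.sum_comp σ (fun i => (i : ℕ))
      rw [hσ, ← two_mul]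
      have : ∑ i : Fin β, (i : ℕ) = ∑ i ∈ Finset.range β, i := Fin.sum_univ_eq_sum_range (fun i => i) β
      rw [this, ← Finset.sum_range_id_mul_two β]
      ring
    rw [h2] at h1
    have : γ ≤ β - 1 := Nat.le_of_mul_le_mul_left h1 hβ
    omega
  obtain ⟨i, hi⟩ := hex
  rw [Finset.prod_eq_zero (f := fun x => D (σ x) x) (Finset.mem_univ i) (h0 (σ i) i hi)]
  simp

lemma buslaev_det_antitriangular {K : Type*} [Field K] :
    ∀ (β : ℕ) (ε : K) (D : Matrix (Fin β) (Fin β) K),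
    (∀ i j : Fin β, (i : ℕ) + (j : ℕ) + 1 < β → D i j = 0) →
    (∀ i j : Fin β, (i : ℕ) + (j : ℕ) + 1 = β → D i j = ε) →
    D.det = (-1) ^ β.choose 2 * ε ^ β := by
  intro β
  induction β with
  | zero => intro ε D _ _; simp [Matrix.det_fin_zero]
  | succ n ih =>
    intro ε D h0 hd
    rw [Matrix.det_succ_column_zero, Finset.sum_eq_single (Fin.last n)]
    · have hminor : (D.submatrix (Fin.last n).succAbove Fin.succ).det
          = (-1) ^ n.choose 2 * ε ^ n := by
        apply ih
        · intro i j hij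
          rw [Matrix.submatrix_apply, Fin.succAbove_last]
          exact h0 _ _ (by simp [Fin.coe_castSucc, Fin.val_succ]; omega)
        · intro i j hij
          rw [Matrix.submatrix_apply, Fin.succAbove_last]
          exact hd _ _ (by simp [Fin.coe_castSucc, Fin.val_succ]; omega)
      rw [hminor, hd (Fin.last n) 0 (by simp)]
      have hch : (n + 1).choose 2 = n + n.choose 2 := by
        rw [Nat.choose_succ_succ]
        simp [Nat.choose_one_right]
      rw [hch, pow_add, pow_succ]
      simp [Fin.val_last]
      ring
    · intro i _ hne
      have : D i 0 = 0 := by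
        apply h0
        simp only [Fin.val_zero]
        have : (i : ℕ) < n := by
          rcases Fin.lt_last_iff_ne_last.mpr hne with h
          exact h
        omega
      rw [this]; ring
    · intro h; exact absurd (Finset.mem_univ _) h

lemma buslaev_det_block_lower {K : Type*} [Field K] (q β : ℕ)
    (M : Matrix (Fin (q + β)) (Fin (q + β)) K)
    (h : ∀ i j : Fin (q + β), (i : ℕ) < q → q ≤ (j : ℕ) → M i j = 0) :
    M.det = (Matrix.of fun i j : Fin q => M (Fin.castAdd β i) (Fin.castAdd β j)).det *
      (Matrix.of fun i j : Fin β => M (Fin.natAdd q i) (Fin.natAdd q j)).det := by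
  rw [← Matrix.det_submatrix_equiv_self finSumFinEquiv M]
  have heq : M.submatrix finSumFinEquiv finSumFinEquiv =
      Matrix.fromBlocks (Matrix.of fun i j : Fin q => M (Fin.castAdd β i) (Fin.castAdd β j)) 0
        (Matrix.of fun (i : Fin β) (j : Fin q) => M (Fin.natAdd q i) (Fin.castAdd β j))
        (Matrix.of fun i j : Fin β => M (Fin.natAdd q i) (Fin.natAdd q j)) := by
    ext i j
    cases i with
    | inl i =>
      cases j with
      | inl j => simp [Matrix.submatrix_apply, finSumFinEquiv_apply_left]
      | inr j =>
        simp only [Matrix.submatrix_apply, finSumFinEquiv_apply_left, finSumFinEquiv_apply_right,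
          Matrix.fromBlocks_apply₁₂, Matrix.zero_apply]
        exact h _ _ (by simp) (by simp)
    | inr i =>
      cases j with
      | inl j => simp [Matrix.submatrix_apply, finSumFinEquiv_apply_left, finSumFinEquiv_apply_right]
      | inr j => simp [Matrix.submatrix_apply, finSumFinEquiv_apply_right]
  rw [heq, Matrix.det_fromBlocks_zero₁₂]


lemma buslaev_hankel_colop {K : Type*} [Field K] (q β r : ℕ) (f Qp : PowerSeries K)
    (hc0 : PowerSeries.constantCoeff Qp = 1)
    (hdeg : ∀ s : ℕ, q < s → PowerSeries.coeff s Qp = 0)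
    (hwin : ∀ t : ℕ, q ≤ t → t < r → PowerSeries.coeff t (f * Qp) = 0)
    (hr : 2 * q + β ≤ r + 1) :
    (Matrix.of fun i j : Fin (q + β) => PowerSeries.coeff ((i : ℕ) + (j : ℕ)) f).det =
      (Matrix.of fun i j : Fin q => PowerSeries.coeff ((i : ℕ) + (j : ℕ)) f).det *
      (Matrix.of fun i j : Fin β =>
        PowerSeries.coeff ((q + (i : ℕ)) + (q + (j : ℕ))) (f * Qp)).det := by
  classical
  set M : Matrix (Fin (q + β)) (Fin (q + β)) K :=
    Matrix.of fun i j : Fin (q + β) => PowerSeries.coeff ((i : ℕ) + (j : ℕ)) f with hM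
  set U : Matrix (Fin (q + β)) (Fin (q + β)) K :=
    Matrix.of fun t j : Fin (q + β) =>
      if (j : ℕ) < q then (if t = j then (1 : K) else 0)
      else (if (t : ℕ) ≤ (j : ℕ) then PowerSeries.coeff ((j : ℕ) - (t : ℕ)) Qp else 0) with hU
  have hUtri : U.BlockTriangular id := by
    intro i j hij
    have hij' : (j : ℕ) < (i : ℕ) := hij
    simp only [hU, Matrix.of_apply]
    by_cases h1 : (j : ℕ) < q
    · rw [if_pos h1, if_neg (by intro h; rw [h] at hij'; omega)]
    · rw [if_neg h1, if_neg (by omega)]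
  have hUdet : U.det = 1 := by
    rw [Matrix.det_of_upperTriangular hUtri]
    apply Finset.prod_eq_one
    intro i _
    simp only [hU, Matrix.of_apply]
    by_cases h1 : (i : ℕ) < q
    · simp [h1]
    · rw [if_neg h1, if_pos le_rfl, Nat.sub_self, PowerSeries.coeff_zero_eq_constantCoeff, hc0]
  have hMU : ∀ i j : Fin (q + β), (M * U) i j =
      if (j : ℕ) < q then PowerSeries.coeff ((i : ℕ) + (j : ℕ)) f
      else PowerSeries.coeff ((i : ℕ) + (j : ℕ)) (f * Qp) := by
    intro i j
    rw [Matrix.mul_apply]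
    by_cases h1 : (j : ℕ) < q
    · rw [if_pos h1]
      have : ∀ t : Fin (q + β), M i t * U t j = if t = j then PowerSeries.coeff ((i:ℕ)+(j:ℕ)) f else 0 := by
        intro t
        simp only [hM, hU, Matrix.of_apply, if_pos h1]
        by_cases h2 : t = j
        · rw [if_pos h2, if_pos h2, h2, mul_one]
        · rw [if_neg h2, if_neg h2, mul_zero]
      rw [Finset.sum_congr rfl (fun t _ => this t)]
      simp
    · rw [if_neg h1]
      push_neg at h1
      have step1 : ∑ t : Fin (q + β), M i t * U t j =
          ∑ t ∈ Finset.range (q + β), (if t ≤ (j : ℕ) then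
            PowerSeries.coeff ((i : ℕ) + t) f * PowerSeries.coeff ((j : ℕ) - t) Qp else 0) := by
        rw [← Fin.sum_univ_eq_sum_range (fun t => if t ≤ (j : ℕ) then
            PowerSeries.coeff ((i : ℕ) + t) f * PowerSeries.coeff ((j : ℕ) - t) Qp else 0) (q + β)]
        apply Finset.sum_congr rfl
        intro t _
        simp only [hM, hU, Matrix.of_apply, if_neg (by omega : ¬ (j : ℕ) < q)]
        by_cases h2 : (t : ℕ) ≤ (j : ℕ)
        · rw [if_pos h2, if_pos h2]
        · rw [if_neg h2, if_neg h2, mul_zero]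
      have step2 : ∑ t ∈ Finset.range (q + β), (if t ≤ (j : ℕ) then
            PowerSeries.coeff ((i : ℕ) + t) f * PowerSeries.coeff ((j : ℕ) - t) Qp else 0) =
          ∑ t ∈ Finset.range ((j : ℕ) + 1),
            PowerSeries.coeff ((i : ℕ) + t) f * PowerSeries.coeff ((j : ℕ) - t) Qp := by
        rw [← Finset.sum_subset (Finset.range_subset_range.mpr (by omega : (j : ℕ) + 1 ≤ q + β))]
        · apply Finset.sum_congr rfl
          intro t ht
          rw [if_pos (by simp at ht; omega)]
        · intro t _ ht
          rw [if_neg (by simp at ht; omega)]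
      have step3 : PowerSeries.coeff ((i : ℕ) + (j : ℕ)) (f * Qp) =
          ∑ t ∈ Finset.range ((j : ℕ) + 1),
            PowerSeries.coeff ((i : ℕ) + t) f * PowerSeries.coeff ((j : ℕ) - t) Qp := by
        rw [PowerSeries.coeff_mul, Finset.Nat.sum_antidiagonal_eq_sum_range_succ_mk,
          Nat.succ_eq_add_one]
        have hsub : Finset.Ico (i : ℕ) ((i : ℕ) + (j : ℕ) + 1) ⊆
            Finset.range ((i : ℕ) + (j : ℕ) + 1) := by
          intro u hu
          simp only [Finset.mem_Ico] at hu
          simp only [Finset.mem_range]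
          omega
        have hz : ∀ u ∈ Finset.range ((i : ℕ) + (j : ℕ) + 1),
            u ∉ Finset.Ico (i : ℕ) ((i : ℕ) + (j : ℕ) + 1) →
            PowerSeries.coeff u f * PowerSeries.coeff ((i : ℕ) + (j : ℕ) - u) Qp = 0 := by
          intro u hu hu'
          simp only [Finset.mem_range] at hu
          simp only [Finset.mem_Ico, not_and, not_lt] at hu'
          have hult : u < (i : ℕ) := by
            by_contra hcon
            push_neg at hcon
            exact absurd (hu' hcon) (by omega)
          rw [hdeg ((i : ℕ) + (j : ℕ) - u) (by omega), mul_zero]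
        rw [← Finset.sum_subset hsub hz,
          Finset.sum_Ico_eq_sum_range (fun u =>
            PowerSeries.coeff u f * PowerSeries.coeff ((i : ℕ) + (j : ℕ) - u) Qp)
            (i : ℕ) ((i : ℕ) + (j : ℕ) + 1),
          show (i : ℕ) + (j : ℕ) + 1 - (i : ℕ) = (j : ℕ) + 1 from by omega]
        exact Finset.sum_congr rfl fun t _ => by
          rw [show (i : ℕ) + (j : ℕ) - ((i : ℕ) + t) = (j : ℕ) - t from by omega]
      rw [step1, step2, ← step3]
  have hdetMU : M.det = (M * U).det := by rw [Matrix.det_mul, hUdet, mul_one]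
  rw [hdetMU]
  rw [buslaev_det_block_lower q β (M * U) (fun i j hi hj => by
    rw [hMU i j, if_neg (by omega)]
    exact hwin ((i : ℕ) + (j : ℕ)) (by omega) (by omega))]
  congr 1
  · congr 1
    ext i j
    simp only [Matrix.of_apply]
    rw [hMU, if_pos (by rw [Fin.coe_castAdd]; exact j.isLt)]
    rw [Fin.coe_castAdd, Fin.coe_castAdd]
  · congr 1
    ext i j
    simp only [Matrix.of_apply]
    rw [hMU, if_neg (by rw [Fin.coe_natAdd]; omega)]
    rw [Fin.coe_natAdd, Fin.coe_natAdd]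

lemma buslaev_det_hankel_cast {K : Type*} [Field K] (u : PowerSeries K) {N N' : ℕ}
    (h : N = N') :
    (Matrix.of fun i j : Fin N => PowerSeries.coeff ((i : ℕ) + (j : ℕ)) u).det =
    (Matrix.of fun i j : Fin N' => PowerSeries.coeff ((i : ℕ) + (j : ℕ)) u).det := by
  subst h; rfl

lemma buslaev_coeff_C_X_pow_mul {K : Type*} [Field K] (c : K) (d t : ℕ) (u : PowerSeries K) :
    PowerSeries.coeff t (PowerSeries.C c * PowerSeries.X ^ d * u) =
      if d ≤ t then c * PowerSeries.coeff (t - d) u else 0 := by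
  rcases le_or_gt d t with h | h
  · rw [if_pos h]
    have h2 := PowerSeries.coeff_X_pow_mul (PowerSeries.C c * u) d (t - d)
    rw [show t - d + d = t by omega] at h2
    rw [mul_comm (PowerSeries.C c) (PowerSeries.X ^ d), mul_assoc, h2,
      PowerSeries.coeff_C_mul]
  · rw [if_neg (by omega)]
    refine PowerSeries.X_pow_dvd_iff.mp ⟨PowerSeries.C c * u, by ring⟩ t h

noncomputable def buslaevAux {K : Type*} [Field K] (a : ℕ → K) (m : ℕ → ℕ)
    (x0 x1 : PowerSeries K) : ℕ → PowerSeries K × PowerSeries K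
  | 0 => (x0, x1)
  | (k + 1) => ((buslaevAux a m x0 x1 k).2,
      (buslaevAux a m x0 x1 k).2 -
        PowerSeries.C (a k) * PowerSeries.X ^ (m k) * (buslaevAux a m x0 x1 k).1)

lemma buslaevAux_deg {K : Type*} [Field K] (a : ℕ → K) (m : ℕ → ℕ)
    (x0 x1 : PowerSeries K) (d : ℕ → ℤ)
    (hdmono : ∀ k : ℕ, d k ≤ d (k + 1)) (hdm : ∀ k : ℕ, (m k : ℤ) ≤ d (k + 2) - d k)
    (h0 : ∀ t : ℕ, d 0 < (t : ℤ) → PowerSeries.coeff t x0 = 0)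
    (h1 : ∀ t : ℕ, d 1 < (t : ℤ) → PowerSeries.coeff t x1 = 0) :
    ∀ k : ℕ, (∀ t : ℕ, d k < (t : ℤ) → PowerSeries.coeff t (buslaevAux a m x0 x1 k).1 = 0) ∧
      (∀ t : ℕ, d (k + 1) < (t : ℤ) → PowerSeries.coeff t (buslaevAux a m x0 x1 k).2 = 0) := by
  intro k
  induction k with
  | zero => exact ⟨h0, h1⟩
  | succ n ih =>
    refine ⟨ih.2, ?_⟩
    intro t ht
    simp only [buslaevAux, map_sub]
    rw [ih.2 t (lt_of_le_of_lt (hdmono (n + 1)) ht), buslaev_coeff_C_X_pow_mul]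
    by_cases h2 : m n ≤ t
    · rw [if_pos h2, ih.1 (t - m n) (by
        have h3 : d (n + 2) < (t : ℤ) := ht
        have h4 := hdm n
        have hc : ((t - m n : ℕ) : ℤ) = (t : ℤ) - (m n : ℤ) := by omega
        rw [hc]
        omega), mul_zero, sub_zero]
    · rw [if_neg h2, sub_zero]

lemma buslaevAux_const {K : Type*} [Field K] (a : ℕ → K) (m : ℕ → ℕ)
    (x0 x1 : PowerSeries K) (hm1 : ∀ k : ℕ, 1 ≤ m k)
    (h0 : PowerSeries.constantCoeff x0 = 1) (h1 : PowerSeries.constantCoeff x1 = 1) :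
    ∀ k : ℕ, PowerSeries.constantCoeff (buslaevAux a m x0 x1 k).1 = 1 ∧
      PowerSeries.constantCoeff (buslaevAux a m x0 x1 k).2 = 1 := by
  intro k
  induction k with
  | zero => exact ⟨h0, h1⟩
  | succ n ih =>
    refine ⟨ih.2, ?_⟩
    have hz : PowerSeries.constantCoeff
        (PowerSeries.C (a n) * PowerSeries.X ^ m n * (buslaevAux a m x0 x1 n).1) = 0 := by
      rw [_root_.map_mul, _root_.map_mul, map_pow, PowerSeries.constantCoeff_X,
        zero_pow (by have := hm1 n; omega), mul_zero, zero_mul]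
    simp only [buslaevAux, map_sub, hz, ih.2, sub_zero]


/-- (Buslaev's theorem) If `f` is given by the C-fraction with nonzero coefficients `a_k`
and exponents `b_{k+1} − b_{k−1}`, then the Hankel determinants `d(n)` satisfy
`d(b_k) = (−1)^{Σ_j C(b_{j+1}−b_j, 2)} a₀^{b_k−b₀} ⋯ a_{k−1}^{b_k−b_{k−1}}`, and
`d(n) = 0` for every `n > 0` not of the form `b_k`. -/
theorem buslaev_hankel_determinants {K : Type*} [Field K] (a : ℕ → K)
    (ha : ∀ k : ℕ, a k ≠ 0) (b : ℤ → ℤ)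
    (hbneg : b (-1) = -1) (hb0 : b 0 = 0)
    (hmono : ∀ k : ℤ, -1 ≤ k → b k ≤ b (k + 1))
    (hgap : ∀ k : ℤ, -1 ≤ k → 1 ≤ b (k + 2) - b k)
    (f : PowerSeries K) (F : ℕ → PowerSeries K) (hF0 : F 0 = f)
    (hF : ∀ k : ℕ, F k * (1 - PowerSeries.C (a k) *
      PowerSeries.X ^ (b ((k : ℤ) + 1) - b ((k : ℤ) - 1)).toNat * F (k + 1)) = 1) :
    (∀ k : ℕ,
      Matrix.det (Matrix.of fun i j : Fin ((b (k : ℤ)).toNat + 1) =>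
          PowerSeries.coeff ((i : ℕ) + (j : ℕ)) f) =
        (-1) ^ (∑ j ∈ Finset.range k, Nat.choose (b ((j : ℤ) + 1) - b (j : ℤ)).toNat 2) *
          ∏ j ∈ Finset.range k, a j ^ (b (k : ℤ) - b (j : ℤ)).toNat) ∧
    (∀ n : ℕ, 0 < n → (∀ k : ℕ, (n : ℤ) ≠ b (k : ℤ)) →
      Matrix.det (Matrix.of fun i j : Fin (n + 1) =>
        PowerSeries.coeff ((i : ℕ) + (j : ℕ)) f) = 0) := by
  classical
  set m : ℕ → ℕ := fun k => (b ((k : ℤ) + 1) - b ((k : ℤ) - 1)).toNat with hmdef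
  have hFm : ∀ k : ℕ, F k * (1 - PowerSeries.C (a k) *
      PowerSeries.X ^ m k * F (k + 1)) = 1 := hF
  have hbmono : ∀ j k : ℤ, -1 ≤ j → j ≤ k → b j ≤ b k := by
    intro j k hj hjk
    exact Int.le_induction (motive := fun n _ => b j ≤ b n) le_rfl
      (fun n hn ih => le_trans ih (hmono n (by omega))) k hjk
  have hm_int : ∀ k : ℕ, (m k : ℤ) = b ((k : ℤ) + 1) - b ((k : ℤ) - 1) := by
    intro k
    have hg := hgap ((k : ℤ) - 1) (by omega)
    rw [show (k : ℤ) - 1 + 2 = (k : ℤ) + 1 by ring] at hg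
    simp only [hmdef]
    rw [Int.toNat_of_nonneg (by omega)]
  have hm1 : ∀ k : ℕ, 1 ≤ m k := by
    intro k
    have h1 := hm_int k
    have hg := hgap ((k : ℤ) - 1) (by omega)
    rw [show (k : ℤ) - 1 + 2 = (k : ℤ) + 1 by ring] at hg
    omega
  have hb_nonneg : ∀ k : ℕ, 0 ≤ b (k : ℤ) := by
    intro k
    have := hbmono 0 (k : ℤ) (by omega) (by exact_mod_cast Nat.zero_le k)
    omega
  have hbk1 : ∀ k : ℕ, b (k : ℤ) ≤ b ((k : ℤ) + 1) := fun k => hmono (k : ℤ) (by omega)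
  have hconstF : ∀ k : ℕ, PowerSeries.constantCoeff (F k) = 1 := by
    intro k
    have h := congrArg (PowerSeries.constantCoeff) (hFm k)
    have hz : PowerSeries.constantCoeff (PowerSeries.C (a k) *
        PowerSeries.X ^ m k * F (k + 1)) = 0 := by
      rw [_root_.map_mul, _root_.map_mul, map_pow, PowerSeries.constantCoeff_X,
        zero_pow (by have := hm1 k; omega), mul_zero, zero_mul]
    rw [_root_.map_mul, _root_.map_sub, _root_.map_one, hz, sub_zero, mul_one] at h
    exact h
  have hFone : ∀ k : ℕ, F k = 1 + PowerSeries.C (a k) * PowerSeries.X ^ m k *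
      (F (k + 1) * F k) := by
    intro k
    linear_combination (hFm k)
  have hEkey : ∀ k : ℕ, f * (buslaevAux a m 1 1 k).2 - (buslaevAux a m 0 1 k).2 =
      PowerSeries.C (a k) * PowerSeries.X ^ m k *
      (F (k + 1) * (f * (buslaevAux a m 1 1 k).1 - (buslaevAux a m 0 1 k).1)) := by
    intro k
    induction k with
    | zero =>
      simp only [buslaevAux]
      have h := hFone 0
      rw [hF0] at h
      linear_combination h
    | succ n ih =>
      simp only [buslaevAux]
      have h := hFone (n + 1)
      linear_combination (1 - PowerSeries.C (a (n + 1)) * PowerSeries.X ^ m (n + 1) *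
          F (n + 2)) * ih +
        (PowerSeries.C (a n) * PowerSeries.X ^ m n *
          (f * (buslaevAux a m 1 1 n).1 - (buslaevAux a m 0 1 n).1)) * h
  have hEform : ∀ k : ℕ, f * (buslaevAux a m 1 1 k).2 - (buslaevAux a m 0 1 k).2 =
      PowerSeries.C (∏ j ∈ Finset.range (k + 1), a j) *
        PowerSeries.X ^ (∑ j ∈ Finset.range (k + 1), m j) *
        (∏ j ∈ Finset.range (k + 2), F j) := by
    intro k
    induction k with
    | zero =>
      rw [hEkey 0]
      simp only [buslaevAux]
      rw [Finset.prod_range_one, Finset.sum_range_one, Finset.prod_range_succ,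
        Finset.prod_range_one, hF0]
      ring
    | succ n ih =>
      have hstep := hEkey (n + 1)
      simp only [buslaevAux] at hstep
      have hstep' : f * (buslaevAux a m 1 1 (n+1)).2 - (buslaevAux a m 0 1 (n+1)).2 =
          PowerSeries.C (a (n+1)) * PowerSeries.X ^ m (n+1) *
          (F (n + 2) * (f * (buslaevAux a m 1 1 n).2 - (buslaevAux a m 0 1 n).2)) := by
        simp only [buslaevAux]
        linear_combination hstep
      rw [hstep', ih, Finset.prod_range_succ (f := fun j => a j) (n := n + 1),
        Finset.sum_range_succ (f := fun j => m j) (n := n + 1),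
        Finset.prod_range_succ (f := fun j => F j) (n := n + 2), _root_.map_mul, pow_add]
      ring
  have hrr_int : ∀ k : ℕ, ((∑ j ∈ Finset.range (k + 1), m j : ℕ) : ℤ) =
      b (k : ℤ) + b ((k : ℤ) + 1) + 1 := by
    intro k
    induction k with
    | zero =>
      rw [Finset.sum_range_one]
      have h := hm_int 0
      rw [show ((0 : ℕ) : ℤ) - 1 = -1 by norm_num] at h
      rw [show ((0 : ℕ) : ℤ) = (0 : ℤ) by norm_num] at h ⊢
      omega
    | succ n ih =>
      rw [Finset.sum_range_succ]
      have h := hm_int (n + 1)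
      have hc1 : ((n + 1 : ℕ) : ℤ) = (n : ℤ) + 1 := by push_cast; ring
      rw [hc1, show (n : ℤ) + 1 - 1 = (n : ℤ) by ring] at h
      rw [hc1]
      push_cast at ih h ⊢
      omega
  have hcoeffE_lt : ∀ k : ℕ, ∀ t : ℕ, t < ∑ j ∈ Finset.range (k + 1), m j →
      PowerSeries.coeff t (f * (buslaevAux a m 1 1 k).2 - (buslaevAux a m 0 1 k).2) = 0 := by
    intro k t ht
    rw [hEform k]
    exact PowerSeries.X_pow_dvd_iff.mp
      ⟨PowerSeries.C (∏ j ∈ Finset.range (k + 1), a j) * ∏ j ∈ Finset.range (k + 2), F j,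
        by ring⟩ t ht
  have hcoeffE_eq : ∀ k : ℕ,
      PowerSeries.coeff (∑ j ∈ Finset.range (k + 1), m j)
        (f * (buslaevAux a m 1 1 k).2 - (buslaevAux a m 0 1 k).2) =
      ∏ j ∈ Finset.range (k + 1), a j := by
    intro k
    rw [hEform k]
    have harr : PowerSeries.C (∏ j ∈ Finset.range (k + 1), a j) *
        PowerSeries.X ^ (∑ j ∈ Finset.range (k + 1), m j) *
        (∏ j ∈ Finset.range (k + 2), F j) =
        PowerSeries.X ^ (∑ j ∈ Finset.range (k + 1), m j) *
        (PowerSeries.C (∏ j ∈ Finset.range (k + 1), a j) *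
          ∏ j ∈ Finset.range (k + 2), F j) := by ring
    rw [harr]
    have h2 := PowerSeries.coeff_X_pow_mul
      (PowerSeries.C (∏ j ∈ Finset.range (k + 1), a j) * ∏ j ∈ Finset.range (k + 2), F j)
      (∑ j ∈ Finset.range (k + 1), m j) 0
    rw [zero_add] at h2
    rw [h2, PowerSeries.coeff_zero_eq_constantCoeff, _root_.map_mul,
      PowerSeries.constantCoeff_C, map_prod]
    have : ∀ j ∈ Finset.range (k + 2), PowerSeries.constantCoeff (F j) = 1 :=
      fun j _ => hconstF j
    rw [Finset.prod_congr rfl this, Finset.prod_const_one, mul_one]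
  -- degree bounds
  have hdegP : ∀ k : ℕ, ∀ t : ℕ, b (k : ℤ) < (t : ℤ) →
      PowerSeries.coeff t (buslaevAux a m 0 1 k).2 = 0 := by
    intro k t ht
    have key := (buslaevAux_deg a m 0 1 (fun n => b ((n : ℤ) - 1))
      (by
        intro n
        have h := hmono ((n : ℤ) - 1) (by omega)
        rw [show (n : ℤ) - 1 + 1 = ((n + 1 : ℕ) : ℤ) - 1 by push_cast; ring] at h
        exact h)
      (by
        intro n
        have h := hm_int n
        show (m n : ℤ) ≤ b (((n + 2 : ℕ) : ℤ) - 1) - b (((n : ℕ) : ℤ) - 1)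
        rw [show ((n + 2 : ℕ) : ℤ) - 1 = (n : ℤ) + 1 by push_cast; ring]
        omega)
      (by intro t _; simp)
      (by
        intro t ht
        have ht' : b (((1 : ℕ) : ℤ) - 1) < (t : ℤ) := ht
        rw [show ((1 : ℕ) : ℤ) - 1 = 0 by norm_num, hb0] at ht'
        rw [PowerSeries.coeff_one, if_neg (by omega)]) k).2 t
    apply key
    show b (((k + 1 : ℕ) : ℤ) - 1) < (t : ℤ)
    rw [show ((k + 1 : ℕ) : ℤ) - 1 = (k : ℤ) by push_cast; ring]
    exact ht
  have hdegQ : ∀ k : ℕ, ∀ t : ℕ, b (k : ℤ) + 1 < (t : ℤ) →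
      PowerSeries.coeff t (buslaevAux a m 1 1 k).2 = 0 := by
    intro k t ht
    have key := (buslaevAux_deg a m 1 1 (fun n => b ((n : ℤ) - 1) + 1)
      (by
        intro n
        have h := hmono ((n : ℤ) - 1) (by omega)
        rw [show (n : ℤ) - 1 + 1 = ((n + 1 : ℕ) : ℤ) - 1 by push_cast; ring] at h
        show b (((n : ℕ) : ℤ) - 1) + 1 ≤ b (((n + 1 : ℕ) : ℤ) - 1) + 1
        omega)
      (by
        intro n
        have h := hm_int n
        show (m n : ℤ) ≤ (b (((n + 2 : ℕ) : ℤ) - 1) + 1) - (b (((n : ℕ) : ℤ) - 1) + 1)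
        rw [show ((n + 2 : ℕ) : ℤ) - 1 = (n : ℤ) + 1 by push_cast; ring]
        omega)
      (by
        intro t ht
        have ht' : b (((0 : ℕ) : ℤ) - 1) + 1 < (t : ℤ) := ht
        rw [show ((0 : ℕ) : ℤ) - 1 = -1 by norm_num, hbneg] at ht'
        rw [PowerSeries.coeff_one, if_neg (by omega)])
      (by
        intro t ht
        have ht' : b (((1 : ℕ) : ℤ) - 1) + 1 < (t : ℤ) := ht
        rw [show ((1 : ℕ) : ℤ) - 1 = 0 by norm_num, hb0] at ht'
        rw [PowerSeries.coeff_one, if_neg (by omega)]) k).2 t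
    apply key
    show b (((k + 1 : ℕ) : ℤ) - 1) + 1 < (t : ℤ)
    rw [show ((k + 1 : ℕ) : ℤ) - 1 = (k : ℤ) by push_cast; ring]
    exact ht
  have hconstQ : ∀ k : ℕ, PowerSeries.constantCoeff (buslaevAux a m 1 1 k).2 = 1 :=
    fun k => (buslaevAux_const a m 1 1 hm1 (by simp) (by simp) k).2
  -- window vanishing for f * Q k
  have hwin : ∀ k : ℕ, ∀ t : ℕ, b (k : ℤ) < (t : ℤ) → t < ∑ j ∈ Finset.range (k + 1), m j →
      PowerSeries.coeff t (f * (buslaevAux a m 1 1 k).2) = 0 := by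
    intro k t ht1 ht2
    have h1 := hcoeffE_lt k t ht2
    rw [map_sub] at h1
    have h2 := hdegP k t ht1
    rw [h2, sub_zero] at h1
    exact h1
  -- the coefficient at the anti-diagonal
  have hdiag : ∀ k : ℕ,
      PowerSeries.coeff (∑ j ∈ Finset.range (k + 1), m j)
        (f * (buslaevAux a m 1 1 k).2) = ∏ j ∈ Finset.range (k + 1), a j := by
    intro k
    have h1 := hcoeffE_eq k
    rw [map_sub] at h1
    have h2 := hdegP k (∑ j ∈ Finset.range (k + 1), m j) (by
      have := hrr_int k
      have := hbk1 k
      have := hb_nonneg k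
      omega)
    rw [h2, sub_zero] at h1
    exact h1
  constructor
  · -- part 1
    intro k
    induction k with
    | zero =>
      have hsz : (b ((0 : ℕ) : ℤ)).toNat + 1 = 1 := by
        rw [show ((0 : ℕ) : ℤ) = (0 : ℤ) from by norm_num, hb0]
        rfl
      rw [buslaev_det_hankel_cast f hsz, Matrix.det_fin_one]
      simp only [Matrix.of_apply, Fin.val_zero, Nat.add_zero, Finset.range_zero,
        Finset.sum_empty, Finset.prod_empty, pow_zero, mul_one]
      rw [PowerSeries.coeff_zero_eq_constantCoeff, ← hF0]
      exact hconstF 0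
    | succ k ih =>
      have hcast : ((k + 1 : ℕ) : ℤ) = (k : ℤ) + 1 := by push_cast; ring
      have hBk : (((b (k : ℤ)).toNat : ℕ) : ℤ) = b (k : ℤ) :=
        Int.toNat_of_nonneg (hb_nonneg k)
      have hble := hbk1 k
      have hBk1 : (((b ((k : ℤ) + 1)).toNat : ℕ) : ℤ) = b ((k : ℤ) + 1) :=
        Int.toNat_of_nonneg (by have := hb_nonneg k; omega)
      rw [hcast]
      set Bk := (b (k : ℤ)).toNat with hBkdef
      set Bk1 := (b ((k : ℤ) + 1)).toNat with hBk1def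
      have hr := hrr_int k
      have hBkle : Bk ≤ Bk1 := by omega
      have hsz : Bk1 + 1 = (Bk + 1) + (Bk1 - Bk) := by omega
      rw [buslaev_det_hankel_cast f hsz]
      rw [buslaev_hankel_colop (Bk + 1) (Bk1 - Bk) (∑ j ∈ Finset.range (k + 1), m j) f
        ((buslaevAux a m 1 1 k).2) (hconstQ k)
        (fun s hs => hdegQ k s (by omega))
        (fun t ht1 ht2 => hwin k t (by omega) ht2)
        (by omega)]
      rw [ih]
      have hD := buslaev_det_antitriangular (Bk1 - Bk) (∏ j ∈ Finset.range (k + 1), a j)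
        (Matrix.of fun i j : Fin (Bk1 - Bk) => PowerSeries.coeff
          ((Bk + 1 + (i : ℕ)) + (Bk + 1 + (j : ℕ))) (f * (buslaevAux a m 1 1 k).2))
        (fun i j hij => by
          simp only [Matrix.of_apply]
          exact hwin k _ (by omega) (by omega))
        (fun i j hij => by
          simp only [Matrix.of_apply]
          have hidx : (Bk + 1 + (i : ℕ)) + (Bk + 1 + (j : ℕ)) =
              ∑ j ∈ Finset.range (k + 1), m j := by omega
          rw [hidx]
          exact hdiag k)
      rw [hD]
      rw [Finset.sum_range_succ, pow_add]
      have hβ : (b ((k : ℤ) + 1) - b (k : ℤ)).toNat = Bk1 - Bk := by omega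
      rw [hβ]
      have hprod : ∏ j ∈ Finset.range (k + 1), a j ^ (b ((k : ℤ) + 1) - b (j : ℤ)).toNat =
          (∏ j ∈ Finset.range k, a j ^ (b (k : ℤ) - b (j : ℤ)).toNat) *
          (∏ j ∈ Finset.range (k + 1), a j) ^ (Bk1 - Bk) := by
        have hterm : ∀ j ∈ Finset.range (k + 1), a j ^ (b ((k : ℤ) + 1) - b (j : ℤ)).toNat =
            a j ^ (b (k : ℤ) - b (j : ℤ)).toNat * a j ^ (Bk1 - Bk) := by
          intro j hj
          rw [← pow_add]
          congr 1
          have h1 := hbmono (j : ℤ) (k : ℤ) (by omega)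
            (by exact_mod_cast Nat.lt_succ_iff.mp (Finset.mem_range.mp hj))
          have h2 := hb_nonneg j
          omega
        rw [Finset.prod_congr rfl hterm, Finset.prod_mul_distrib, Finset.prod_pow,
          Finset.prod_range_succ (f := fun j => a j ^ (b (k : ℤ) - b (j : ℤ)).toNat),
          show (b (k : ℤ) - b (k : ℤ)).toNat = 0 from by omega, pow_zero, mul_one]
      rw [hprod]
      ring
  · -- part 2
    intro n hn hneq
    have hub : ∀ j : ℕ, (j : ℤ) ≤ b ((2 * j : ℕ) : ℤ) := by
      intro j
      induction j with
      | zero =>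
        rw [show ((2 * 0 : ℕ) : ℤ) = 0 from by norm_num, hb0]
      | succ i ih =>
        have hg := hgap ((2 * i : ℕ) : ℤ) (by omega)
        have hcast2 : ((2 * (i + 1) : ℕ) : ℤ) = ((2 * i : ℕ) : ℤ) + 2 := by push_cast; ring
        rw [hcast2]
        push_cast at ih hg ⊢
        omega
    have hex : ∃ j : ℕ, (n : ℤ) ≤ b (j : ℤ) := ⟨2 * n, le_trans (by exact_mod_cast by omega) (hub n)⟩
    have hj0spec : (n : ℤ) ≤ b ((Nat.find hex : ℕ) : ℤ) := Nat.find_spec hex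
    have hj0pos : 0 < Nat.find hex := by
      rcases Nat.eq_zero_or_pos (Nat.find hex) with h | h
      · exfalso
        rw [h, show ((0 : ℕ) : ℤ) = 0 from by norm_num, hb0] at hj0spec
        omega
      · exact h
    set k := Nat.find hex - 1 with hkdef
    have hk1 : k + 1 = Nat.find hex := by omega
    have hklt : b (k : ℤ) < (n : ℤ) := by
      have h := Nat.find_min hex (show k < Nat.find hex by omega)
      push_neg at h
      exact h
    have hkgt : (n : ℤ) < b ((k : ℤ) + 1) := by
      have h1 : (n : ℤ) ≤ b ((k + 1 : ℕ) : ℤ) := by rw [hk1]; exact hj0spec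
      have h2 := hneq (k + 1)
      rw [show ((k + 1 : ℕ) : ℤ) = (k : ℤ) + 1 from by push_cast; ring] at h1 h2
      omega
    have hBk : (((b (k : ℤ)).toNat : ℕ) : ℤ) = b (k : ℤ) := Int.toNat_of_nonneg (hb_nonneg k)
    set Bk := (b (k : ℤ)).toNat with hBkdef
    have hr := hrr_int k
    have hsz : n + 1 = (Bk + 1) + (n - Bk) := by omega
    rw [buslaev_det_hankel_cast f hsz]
    rw [buslaev_hankel_colop (Bk + 1) (n - Bk) (∑ j ∈ Finset.range (k + 1), m j) f
      ((buslaevAux a m 1 1 k).2) (hconstQ k)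
      (fun s hs => hdegQ k s (by omega))
      (fun t ht1 ht2 => hwin k t (by omega) ht2)
      (by omega)]
    have hD0 : (Matrix.of fun i j : Fin (n - Bk) => PowerSeries.coeff
        ((Bk + 1 + (i : ℕ)) + (Bk + 1 + (j : ℕ))) (f * (buslaevAux a m 1 1 k).2)).det = 0 := by
      apply buslaev_det_eq_zero_of_low_support
        (γ := (∑ j ∈ Finset.range (k + 1), m j) - 2 * (Bk + 1)) (by omega) (by omega)
      intro i j hij
      simp only [Matrix.of_apply]
      exact hwin k _ (by omega) (by omega)
    rw [hD0, mul_zero]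
end

section
/- Let K be a field, (a_k)_{k≥0} a sequence in K with a_k ≠ 0 for all k, and (b_k)_{k≥−1} a nondecreasing sequence of integers with b_{−1} = −1, b_0 = 0 and b_{k+2} − b_k ≥ 1 for all k ≥ −1. Suppose f = ∑_{n≥0} f_n x^n is given by the C-fraction with coefficients (a_k) and exponents b_{k+1} − b_{k−1}, i.e. there exist formal power series (F^{(k)}) with F^{(0)} = f and F^{(k)} · (1 − a_k x^{b_{k+1}−b_{k−1}} F^{(k+1)}) = 1. Let d(n) = det(f_{i+j})_{i,j=0}^{n}, let r_k(x) be the polynomials defined by r_0 = 1, r_1 = x, r_k = x^{b_{k−1}−b_{k−2}} r_{k−1} − a_{k−2} r_{k−2} for k ≥ 2, let p_0(x) = 1 and for n ≥ 1 let p_n(x) = det of the (n+1)×(n+1) matrix whose entry in row i and column j is f_{i+j} for 0 ≤ j ≤ n−1 and x^i for j = n (0 ≤ i ≤ n). Let (B_n)_{n≥0} be the distinct elements of {b_k : k ≥ −1} listed in increasing order. Then: (i) for each n, if k is the largest index such that b_{k−1} = B_n, then p_{B_n+1}(x) = d(B_n) · r_k(x); (ii) p_m(x) = 0 for every m with B_n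 + 1 < m < B_{n+1} − 1. -/
open Polynomial Matrix Finset

noncomputable def cfG {K : Type*} [Field K] (a : ℕ → K) (E : ℕ → ℕ) : ℕ → Polynomial K
  | 0 => 1
  | 1 => 1
  | (k+2) => cfG a E (k+1) - Polynomial.C (a k) * Polynomial.X ^ (E k) * cfG a E k

noncomputable def cfH {K : Type*} [Field K] (a : ℕ → K) (E : ℕ → ℕ) : ℕ → Polynomial K
  | 0 => 0
  | 1 => 1
  | (k+2) => cfH a E (k+1) - Polynomial.C (a k) * Polynomial.X ^ (E k) * cfH a E k

/-- Theorem 3.2: let `f` be given by a C-fraction with nonzero coefficients `a_k` and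
exponents `b_{k+1} − b_{k−1}`, let `r_k` be the associated polynomials, let `p_n` be the
bordered Hankel determinant polynomial, and let `(B_n)` enumerate the distinct values of
`{b_k : k ≥ −1}` in increasing order. Then (i) if `k` is the largest index with
`b_{k−1} = B_n` (equivalently `b_{k−1} = B_n < b_k`), then
`p_{B_n+1}(x) = d(B_n) · r_k(x)`, and (ii) `p_m = 0` for `B_n + 1 < m < B_{n+1} − 1`. -/
theorem bordered_hankel_polynomials {K : Type*} [Field K] (a : ℕ → K)
    (ha : ∀ k : ℕ, a k ≠ 0) (b : ℤ → ℤ)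
    (hbneg : b (-1) = -1) (hb0 : b 0 = 0)
    (hmono : ∀ k : ℤ, -1 ≤ k → b k ≤ b (k + 1))
    (hgap : ∀ k : ℤ, -1 ≤ k → 1 ≤ b (k + 2) - b k)
    (f : PowerSeries K) (F : ℕ → PowerSeries K) (hF0 : F 0 = f)
    (hF : ∀ k : ℕ, F k * (1 - PowerSeries.C (a k) *
      PowerSeries.X ^ (b ((k : ℤ) + 1) - b ((k : ℤ) - 1)).toNat * F (k + 1)) = 1)
    (r : ℕ → Polynomial K)
    (hr0 : r 0 = 1) (hr1 : r 1 = Polynomial.X)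
    (hrrec : ∀ k : ℕ, r (k + 2) =
      Polynomial.X ^ (b ((k : ℤ) + 1) - b (k : ℤ)).toNat * r (k + 1) -
        Polynomial.C (a k) * r k)
    (p : ℕ → Polynomial K) (hp0 : p 0 = 1)
    (hp : ∀ n : ℕ, p (n + 1) =
      Matrix.det (Matrix.of fun i j : Fin (n + 2) =>
        if (j : ℕ) = n + 1 then Polynomial.X ^ (i : ℕ)
        else Polynomial.C (PowerSeries.coeff ((i : ℕ) + (j : ℕ)) f)))
    (B : ℕ → ℤ) (hBmono : StrictMono B)
    (hBrange : Set.range B = {v : ℤ | ∃ k : ℤ, -1 ≤ k ∧ b k = v}) :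
    (∀ n k : ℕ, b ((k : ℤ) - 1) = B n → B n < b (k : ℤ) →
      p ((B n + 1).toNat) =
        Polynomial.C (Matrix.det (Matrix.of fun i j : Fin ((B n + 1).toNat) =>
          PowerSeries.coeff ((i : ℕ) + (j : ℕ)) f)) * r k) ∧
    (∀ n m : ℕ, B n + 1 < (m : ℤ) → (m : ℤ) < B (n + 1) - 1 → p m = 0) := by
  have bmono' : ∀ j j' : ℤ, -1 ≤ j → j ≤ j' → b j ≤ b j' := by
    have aux : ∀ d : ℕ, ∀ j : ℤ, -1 ≤ j → b j ≤ b (j + d) := by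
      intro d
      induction d with
      | zero => intro j _; simp
      | succ d ih =>
        intro j hj
        calc b j ≤ b (j + d) := ih j hj
        _ ≤ b (j + d + 1) := hmono _ (by omega)
        _ = b (j + (d+1 : ℕ)) := by push_cast; ring_nf
    intro j j' hj hjj
    have := aux (j' - j).toNat j hj
    rwa [Int.toNat_of_nonneg (by omega), add_sub_cancel] at this
  have bgrow : ∀ i : ℕ, (i:ℤ) ≤ b (2*(i:ℤ)) := by
    intro i
    induction i with
    | zero => simp [hb0]
    | succ i ih =>
      have h := hgap (2*(i:ℤ)) (by omega)
      rw [show 2*(i:ℤ) + 2 = 2*((i:ℤ)+1) from by ring] at h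
      push_cast at ih ⊢
      omega
  set E : ℕ → ℕ := fun k => (b ((k:ℤ)+1) - b ((k:ℤ)-1)).toNat with hE
  set G := cfG a E with hGdef
  set H := cfH a E with hHdef
  have hF' : ∀ k : ℕ, F k * (1 - PowerSeries.C (a k) *
      PowerSeries.X ^ (E k) * F (k + 1)) = 1 := fun k => hF k
  have hGrec : ∀ k, G (k+2) = G (k+1) - Polynomial.C (a k) * Polynomial.X ^ (E k) * G k := by
    intro k; rw [hGdef, cfG]
  have hHrec : ∀ k, H (k+2) = H (k+1) - Polynomial.C (a k) * Polynomial.X ^ (E k) * H k := by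
    intro k; rw [hHdef, cfH]
  have hG0 : G 0 = 1 := by rw [hGdef, cfG]
  have hG1 : G 1 = 1 := by rw [hGdef, cfG]
  have hH0 : H 0 = 0 := by rw [hHdef, cfH]
  have hH1 : H 1 = 1 := by rw [hHdef, cfH]
  have key1 : ∀ k : ℕ, ((G (k+1) : PowerSeries K) * f - (H (k+1) : PowerSeries K))
      = PowerSeries.C (a k) * PowerSeries.X ^ (E k) * F (k+1)
        * ((G k : PowerSeries K) * f - (H k : PowerSeries K)) := by
    intro k
    induction k with
    | zero =>
      have h0 := hF' 0
      rw [hF0] at h0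
      rw [hG0, hG1, hH0, hH1]
      push_cast
      linear_combination h0
    | succ k ih =>
      have h1 := hF' (k+1)
      rw [hGrec k, hHrec k]
      push_cast
      linear_combination (1 - PowerSeries.C (a (k+1)) * PowerSeries.X ^ (E (k+1)) * F (k+2)) * ih
        + PowerSeries.C (a k) * PowerSeries.X ^ (E k) *
          ((G k : PowerSeries K) * f - (H k : PowerSeries K)) * h1
  -- cast helpers
  have bnat : ∀ k : ℕ, 0 ≤ b (k:ℤ) := fun k => hb0 ▸ bmono' 0 k (by omega) (by omega)
  have hEpos' : ∀ k : ℕ, 1 ≤ b ((k:ℤ) + 1) - b ((k:ℤ) - 1) := by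
    intro k
    have h := hgap ((k:ℤ) - 1) (by have := bnat k; omega)
    rw [show (k:ℤ) - 1 + 2 = (k:ℤ) + 1 from by ring] at h
    omega
  set N : ℕ → ℕ := fun k => (b ((k:ℤ)+1) + b (k:ℤ) + 1).toNat with hN
  have hNsplit : ∀ k : ℕ, N (k+1) = E (k+1) + N k := by
    intro k
    have h1 := hEpos' (k+1)
    have h2 := bnat k
    have h3 := bnat (k+1)
    have h4 := bnat (k+2)
    simp only [hE, hN]
    push_cast at h1 h2 h3 h4 ⊢
    simp only [add_sub_cancel_right] at *
    omega
  have hNE0 : N 0 = E 0 := by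
    have : b ((0:ℤ) - 1) = -1 := by norm_num [hbneg]
    simp only [hE, hN]
    push_cast
    omega
  have key2 : ∀ k : ℕ, (PowerSeries.X : PowerSeries K)^(N k) ∣
      ((G (k+1) : PowerSeries K) * f - (H (k+1) : PowerSeries K)) := by
    intro k
    induction k with
    | zero =>
      rw [key1 0, hNE0, hG0, hH0]
      exact ⟨PowerSeries.C (a 0) * F 1 * ((1:Polynomial K) : PowerSeries K) * f
        - PowerSeries.C (a 0) * F 1 * ((0:Polynomial K) : PowerSeries K), by ring⟩
    | succ k ih =>
      obtain ⟨w, hw⟩ := ih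
      rw [key1 (k+1), hw, hNsplit k, pow_add]
      exact ⟨PowerSeries.C (a (k+1)) * F (k+2) * w, by ring⟩
  have key2' : ∀ k : ℕ, ∀ u : ℕ, u < N k →
      PowerSeries.coeff u ((G (k+1) : PowerSeries K) * f) = (H (k+1)).coeff u := by
    intro k u hu
    have := (PowerSeries.X_pow_dvd_iff.mp (key2 k)) u hu
    rw [map_sub, sub_eq_zero] at this
    rw [this, Polynomial.coeff_coe]
  have key3 : ∀ k : ℕ, ∀ u : ℕ, b (k:ℤ) < (u:ℤ) → (H (k+1)).coeff u = 0 := by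
    intro k
    induction k using Nat.strong_induction_on with
    | _ k ih =>
      match k with
      | 0 =>
        intro u hu
        have h0 : (0:ℤ) < (u:ℤ) := by push_cast at hu; omega
        have : u ≠ 0 := by omega
        simp [hH1, Polynomial.coeff_one, this]
      | 1 =>
        intro u hu
        have hb1 := bnat 1
        have h0 : (0:ℤ) < (u:ℤ) := by push_cast at hu hb1 ⊢; omega
        have : u ≠ 0 := by omega
        simp [hHrec 0, hH0, hH1, Polynomial.coeff_one, this]
      | (k+2) =>
        intro u hu
        rw [hHrec (k+1), Polynomial.coeff_sub]
        have hm : b ((k:ℤ)+1) ≤ b ((k:ℤ)+2) := bmono' _ _ (by have := bnat (k+1); push_cast at this ⊢; omega) (by omega)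
        have h1 : (H (k+2)).coeff u = 0 := by
          apply ih (k+1) (by omega)
          push_cast at hu ⊢
          omega
        have hEc : ((E (k+1) : ℤ)) = b ((k:ℤ)+2) - b (k:ℤ) := by
          have := hEpos' (k+1)
          simp only [hE]
          push_cast at this ⊢
          simp only [add_sub_cancel_right] at *
          rw [show ((k:ℤ)+1+1) = (k:ℤ)+2 from by ring] at this ⊢
          omega
        have h2 : (Polynomial.C (a (k+1)) * Polynomial.X ^ (E (k+1)) * H (k+1)).coeff u = 0 := by
          rw [mul_assoc, mul_comm (Polynomial.X ^ (E (k+1))), ← mul_assoc,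
            Polynomial.coeff_mul_X_pow', Polynomial.coeff_C_mul]
          by_cases hle : E (k+1) ≤ u
          · simp only [hle, if_true]
            have : (H (k+1)).coeff (u - E (k+1)) = 0 := by
              apply ih k (by omega)
              have hcast : ((u - E (k+1) : ℕ) : ℤ) = (u:ℤ) - (E (k+1) : ℤ) := by
                push_cast [hle]; ring
              rw [hcast, hEc]
              push_cast at hu ⊢
              omega
            rw [this, mul_zero]
          · simp [hle]
        rw [h1, h2, sub_zero]
  set D : ℕ → ℕ := fun k => (b ((k:ℤ)-1) + 1).toNat with hD
  have bnat1 : ∀ k : ℕ, -1 ≤ b ((k:ℤ) - 1) := by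
    intro k
    have := bmono' (-1) ((k:ℤ)-1) le_rfl (by omega)
    omega
  have hDcast : ∀ k : ℕ, (D k : ℤ) = b ((k:ℤ)-1) + 1 := by
    intro k
    simp only [hD]
    exact Int.toNat_of_nonneg (by have := bnat1 k; omega)
  have hDcast1 : ∀ k : ℕ, (D (k+1) : ℤ) = b (k:ℤ) + 1 := by
    intro k
    rw [hDcast (k+1), show ((k+1:ℕ):ℤ) - 1 = (k:ℤ) from by push_cast; ring]
  have hDcast2 : ∀ k : ℕ, (D (k+2) : ℤ) = b ((k:ℤ)+1) + 1 := by
    intro k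
    rw [hDcast (k+2), show ((k+2:ℕ):ℤ) - 1 = (k:ℤ)+1 from by push_cast; ring]
  have hEcast : ∀ k : ℕ, (E k : ℤ) = b ((k:ℤ)+1) - b ((k:ℤ)-1) := by
    intro k
    simp only [hE]
    exact Int.toNat_of_nonneg (by have := hEpos' k; omega)
  have hD0 : D 0 = 0 := by
    simp only [hD]
    rw [show ((0:ℕ):ℤ) - 1 = -1 from by norm_num, hbneg]
    decide
  have hD1 : D 1 = 1 := by
    simp only [hD]
    rw [show ((1:ℕ):ℤ) - 1 = 0 from by norm_num, hb0]
    decide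
  have hDE : ∀ k : ℕ, D (k+2) = E k + D k := by
    intro k
    have h1 := hDcast2 k
    have h2 := hEcast k
    have h3 := hDcast k
    omega
  have hmono' : ∀ k : ℕ, b (k:ℤ) ≤ b ((k:ℤ)+1) := fun k => hmono _ (by have := bnat k; omega)
  set δ : ℕ → ℕ := fun k => (b ((k:ℤ)+1) - b (k:ℤ)).toNat with hδ
  have hδcast : ∀ k : ℕ, (δ k : ℤ) = b ((k:ℤ)+1) - b (k:ℤ) := by
    intro k
    simp only [hδ]
    exact Int.toNat_of_nonneg (by have := hmono' k; omega)
  have hDδ : ∀ k : ℕ, D (k+2) = δ k + D (k+1) := by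
    intro k
    have h1 := hDcast2 k
    have h2 := hδcast k
    have h3 := hDcast1 k
    omega
  -- degree of G
  have key4 : ∀ k : ℕ, (G k).natDegree ≤ D k := by
    intro k
    induction k using Nat.strong_induction_on with
    | _ k ih =>
      match k with
      | 0 => rw [hG0]; simp
      | 1 => rw [hG1]; simp
      | (k+2) =>
        rw [hGrec k]
        refine le_trans (Polynomial.natDegree_sub_le _ _) (max_le (le_trans (ih (k+1) (by omega)) ?_) ?_)
        · have h1 := hDcast1 k
          have h2 := hDcast2 k
          have h3 := hmono' k
          omega
        · refine le_trans (Polynomial.natDegree_mul_le) ?_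
          rw [hDE k]
          have h4 := Polynomial.natDegree_C_mul_X_pow_le (a k) (E k)
          have h5 := ih k (by omega)
          omega
  -- r = reflect of G
  have key5 : ∀ k : ℕ, r k = (G k).reflect (D k) := by
    intro k
    induction k using Nat.strong_induction_on with
    | _ k ih =>
      match k with
      | 0 =>
        rw [hr0, hG0, hD0]
        simp [Polynomial.reflect_one]
      | 1 =>
        rw [hr1, hG1, hD1]
        have h := Polynomial.reflect_monomial (R := K) 1 0
        simp only [pow_zero, pow_one] at h
        rw [h]
        simp [Polynomial.revAt_le]
      | (k+2) =>
        rw [hrrec k, hGrec k, ih (k+1) (by omega), ih k (by omega)]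
        have e1 : (G (k+2)).reflect (D (k+2)) = (G (k+1) - Polynomial.C (a k) * (Polynomial.X ^ (E k) * G k)).reflect (D (k+2)) := by
          rw [hGrec k]; ring_nf
        have hsub : ∀ (u v : Polynomial K) (N : ℕ), (u - v).reflect N = u.reflect N - v.reflect N := by
          intro u v N
          rw [sub_eq_add_neg, Polynomial.reflect_add,
            show -v = Polynomial.C (-1:K) * v from by simp, Polynomial.reflect_C_mul]
          simp [sub_eq_add_neg]
        have hrefl1 : ∀ N : ℕ, (1:Polynomial K).reflect N = Polynomial.X ^ N := by
          intro N
          simpa using Polynomial.reflect_monomial N 0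
        have t1 : (G (k+1)).reflect (D (k+2)) = Polynomial.X ^ (δ k) * (G (k+1)).reflect (D (k+1)) := by
          rw [hDδ k, ← one_mul (G (k+1)),
            Polynomial.reflect_mul 1 (G (k+1)) (by simp) (key4 (k+1)), hrefl1, one_mul]
        have t2 : (Polynomial.C (a k) * Polynomial.X ^ (E k) * G k).reflect (D (k+2))
            = Polynomial.C (a k) * (G k).reflect (D k) := by
          rw [mul_assoc, Polynomial.reflect_C_mul, hDE k,
            Polynomial.reflect_mul (Polynomial.X ^ (E k)) (G k) (Polynomial.natDegree_X_pow_le _) (key4 k),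
            Polynomial.reflect_monomial, Polynomial.revAt_le (le_refl (E k))]
          simp
        rw [hsub, t1, t2, show (b ((k:ℤ)+1) - b (k:ℤ)).toNat = δ k from rfl]
  have hEne : ∀ k : ℕ, E k ≠ 0 := by
    intro k
    have h1 := hEcast k
    have h2 := hEpos' k
    omega
  have key6 : ∀ k : ℕ, (G k).coeff 0 = 1 := by
    intro k
    induction k using Nat.strong_induction_on with
    | _ k ih =>
      match k with
      | 0 => rw [hG0]; simp
      | 1 => rw [hG1]; simp
      | (k+2) =>
        rw [hGrec k, Polynomial.coeff_sub, ih (k+1) (by omega), mul_assoc,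
          Polynomial.mul_coeff_zero, Polynomial.mul_coeff_zero, Polynomial.coeff_X_pow]
        simp [hEne k]
        intro h
        exact absurd h.symm (hEne k)
  have hrtop : ∀ k : ℕ, (r k).coeff (D k) = 1 := by
    intro k
    rw [key5 k, Polynomial.coeff_reflect, Polynomial.revAt_le (le_refl (D k)), Nat.sub_self,
      key6 k]
  have hrhi : ∀ k : ℕ, ∀ i : ℕ, D k < i → (r k).coeff i = 0 := by
    intro k i hi
    rw [key5 k, Polynomial.coeff_reflect]
    have hrev : (Polynomial.revAt (D k)) i = i := Polynomial.revAt_eq_self_of_lt hi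
    rw [hrev]
    exact Polynomial.coeff_eq_zero_of_natDegree_lt (lt_of_le_of_lt (key4 k) hi)
  have hrdeg : ∀ k : ℕ, (r k).natDegree ≤ D k := by
    intro k
    exact Polynomial.natDegree_le_iff_coeff_eq_zero.mpr (fun i hi => hrhi k i hi)
  -- orthogonality
  have key8 : ∀ k s M : ℕ, (s:ℤ) < b (k:ℤ) → D k ≤ M →
      ∑ i ∈ Finset.range (M+1), (r k).coeff i * PowerSeries.coeff (i + s) f = 0 := by
    intro k s M hs hM
    match k with
    | 0 =>
      exfalso
      rw [show ((0:ℕ):ℤ) = 0 from rfl, hb0] at hs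
      omega
    | (k+1) =>
      have htrim : ∑ i ∈ Finset.range (M+1), (r (k+1)).coeff i * PowerSeries.coeff (i + s) f
          = ∑ i ∈ Finset.range (D (k+1)+1), (r (k+1)).coeff i * PowerSeries.coeff (i + s) f := by
        symm
        apply Finset.sum_subset
        · exact Finset.range_subset_range.mpr (by omega)
        · intro x _ hx
          rw [hrhi (k+1) x (by simp at hx ⊢; omega), zero_mul]
      rw [htrim]
      have hco : ∀ i : ℕ, i ≤ D (k+1) → (r (k+1)).coeff i = (G (k+1)).coeff (D (k+1) - i) := by
        intro i hi
        rw [key5 (k+1), Polynomial.coeff_reflect, Polynomial.revAt_le hi]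
      have hflip : ∑ i ∈ Finset.range (D (k+1)+1), (r (k+1)).coeff i * PowerSeries.coeff (i + s) f
          = ∑ j ∈ Finset.range (D (k+1)+1), (G (k+1)).coeff j * PowerSeries.coeff ((D (k+1) - j) + s) f := by
        rw [← Finset.sum_range_reflect]
        apply Finset.sum_congr rfl
        intro j hj
        simp only [Finset.mem_range] at hj
        have hj' : j ≤ D (k+1) := by omega
        rw [show D (k+1) + 1 - 1 - j = D (k+1) - j from by omega,
          hco (D (k+1) - j) (by omega), show D (k+1) - (D (k+1) - j) = j from by omega]
      rw [hflip]
      have hsw : ∑ j ∈ Finset.range (D (k+1)+1), (G (k+1)).coeff j * PowerSeries.coeff ((D (k+1) - j) + s) f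
          = ∑ j ∈ Finset.range (D (k+1)+1), (G (k+1)).coeff j * PowerSeries.coeff (D (k+1) + s - j) f := by
        apply Finset.sum_congr rfl
        intro j hj
        simp only [Finset.mem_range] at hj
        rw [show D (k+1) - j + s = D (k+1) + s - j from by omega]
      rw [hsw]
      have hmulco : PowerSeries.coeff (D (k+1) + s) ((G (k+1) : PowerSeries K) * f)
          = ∑ j ∈ Finset.range (D (k+1)+1), (G (k+1)).coeff j * PowerSeries.coeff (D (k+1) + s - j) f := by
        rw [PowerSeries.coeff_mul, Finset.Nat.sum_antidiagonal_eq_sum_range_succ_mk]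
        simp only [Polynomial.coeff_coe]
        symm
        apply Finset.sum_subset
        · exact Finset.range_subset_range.mpr (by omega)
        · intro x _ hx
          simp only [Finset.mem_range, not_lt] at hx
          have : (G (k+1)).coeff x = 0 :=
            Polynomial.coeff_eq_zero_of_natDegree_lt (lt_of_le_of_lt (key4 (k+1)) (by omega))
          rw [this, zero_mul]
      rw [← hmulco]
      have hu : D (k+1) + s < N k := by
        have h1 := hDcast1 k
        have h2 : (N k : ℤ) = b ((k:ℤ)+1) + b (k:ℤ) + 1 := by
          simp only [hN]
          refine Int.toNat_of_nonneg ?_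
          have := bnat k
          have := bnat (k+1)
          push_cast at *
          omega
        push_cast at hs
        omega
      rw [key2' k (D (k+1) + s) hu]
      apply key3 k
      have h1 := hDcast1 k
      push_cast
      omega
  -- the two parts
  constructor
  · -- part (i)
    intro n k hk1 hk2
    have hBn1 : -1 ≤ B n := hk1 ▸ bnat1 k
    by_cases hBn : B n = -1
    · -- degenerate case: the empty determinant
      have hk0 : k = 0 := by
        by_contra hne
        obtain ⟨k', rfl⟩ : ∃ k'', k = k'' + 1 := ⟨k - 1, by omega⟩
        rw [show ((k'+1:ℕ):ℤ) - 1 = (k':ℤ) from by push_cast; ring] at hk1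
        have := bnat k'
        omega
      subst hk0
      have h0 : (B n + 1).toNat = 0 := by omega
      have hie : IsEmpty (Fin ((B n + 1).toNat)) := ⟨fun i => absurd i.isLt (by omega)⟩
      simp only [h0, hp0, hr0]
      rw [Matrix.det_isEmpty]
      simp
    · have hBn0 : 0 ≤ B n := by omega
      have hmD : (B n + 1).toNat = D k := by have := hDcast k; omega
      obtain ⟨n', hn'⟩ : ∃ n', (B n + 1).toNat = n' + 1 := ⟨(B n + 1).toNat - 1, by omega⟩
      rw [hn'] at hmD ⊢
      rw [hp n']
      set A : Matrix (Fin (n'+2)) (Fin (n'+2)) (Polynomial K) :=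
        Matrix.of (fun i j : Fin (n'+2) =>
          if (j : ℕ) = n' + 1 then Polynomial.X ^ (i : ℕ)
          else Polynomial.C (PowerSeries.coeff ((i : ℕ) + (j : ℕ)) f)) with hA
      set c : Fin (n'+2) → Polynomial K := fun i => Polynomial.C ((r k).coeff (i : ℕ)) with hc
      have hclast : c (Fin.last (n'+1)) = 1 := by
        simp only [hc, Fin.val_last]
        rw [hmD, hrtop k, Polynomial.C_1]
      have hdup := Matrix.det_updateRow_sum A (Fin.last (n'+1)) c
      rw [hclast, one_smul] at hdup
      rw [← hdup]
      -- compute the new row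
      have hrowlast : ∀ j : Fin (n'+2), (∑ i : Fin (n'+2), c i • A i) j
          = if (j : ℕ) = n' + 1 then r k else 0 := by
        intro j
        have hsum : (∑ i : Fin (n'+2), c i • A i) j = ∑ i : Fin (n'+2), c i * A i j := by
          simp [Finset.sum_apply]
        rw [hsum]
        by_cases hj : (j : ℕ) = n' + 1
        · simp only [hj, if_true]
          have : ∀ i : Fin (n'+2), c i * A i j
              = Polynomial.C ((r k).coeff (i:ℕ)) * Polynomial.X ^ (i:ℕ) := by
            intro i
            rw [hc, hA]
            simp [hj]
          rw [Finset.sum_congr rfl (fun i _ => this i)]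
          rw [Fin.sum_univ_eq_sum_range (fun i => Polynomial.C ((r k).coeff i) * Polynomial.X ^ i)]
          have hdeg : (r k).natDegree < n' + 2 := by
            have := hrdeg k
            omega
          conv_rhs => rw [Polynomial.as_sum_range' (r k) (n'+2) hdeg]
          apply Finset.sum_congr rfl
          intro i _
          rw [Polynomial.C_mul_X_pow_eq_monomial]
        · simp only [hj, if_false]
          have : ∀ i : Fin (n'+2), c i * A i j
              = Polynomial.C ((r k).coeff (i:ℕ) * PowerSeries.coeff ((i:ℕ) + (j:ℕ)) f) := by
            intro i
            rw [hc, hA]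
            simp only [Matrix.of_apply, smul_eq_mul, if_neg hj]
            rw [← _root_.map_mul]
          rw [Finset.sum_congr rfl (fun i _ => this i)]
          rw [Fin.sum_univ_eq_sum_range
            (fun i => Polynomial.C ((r k).coeff i * PowerSeries.coeff (i + (j:ℕ)) f))]
          rw [← map_sum]
          have hz := key8 k (j:ℕ) (n'+1) ?_ (by omega)
          · rw [hz, map_zero]
          · have hjlt : (j:ℕ) < n' + 1 := by
              have := j.isLt
              omega
            have : ((j:ℕ):ℤ) ≤ B n := by
              have h1 := hDcast k
              push_cast at *
              omega
            omega
      -- Laplace expansion along the last row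
      rw [Matrix.det_succ_row _ (Fin.last (n'+1))]
      have hterm : ∀ j : Fin (n'+2), j ≠ Fin.last (n'+1) →
          (-1:Polynomial K) ^ ((Fin.last (n'+1) : ℕ) + (j:ℕ))
            * (A.updateRow (Fin.last (n'+1)) (∑ i : Fin (n'+2), c i • A i)) (Fin.last (n'+1)) j
            * ((A.updateRow (Fin.last (n'+1)) (∑ i : Fin (n'+2), c i • A i)).submatrix
                (Fin.last (n'+1)).succAbove j.succAbove).det = 0 := by
        intro j hj
        rw [Matrix.updateRow_self, hrowlast j]
        have : (j:ℕ) ≠ n' + 1 := by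
          intro h
          exact hj (Fin.ext h)
        simp [this]
      rw [Finset.sum_eq_single (Fin.last (n'+1)) (fun j _ hj => hterm j hj)
        (fun h => absurd (Finset.mem_univ _) h)]
      rw [Matrix.updateRow_self, hrowlast (Fin.last (n'+1))]
      simp only [Fin.val_last, if_true]
      have hminor : ((A.updateRow (Fin.last (n'+1)) (∑ i : Fin (n'+2), c i • A i)).submatrix
          (Fin.last (n'+1)).succAbove (Fin.last (n'+1)).succAbove)
          = (Polynomial.C (R := K)).mapMatrix
            (Matrix.of fun i j : Fin (n'+1) => PowerSeries.coeff ((i : ℕ) + (j : ℕ)) f) := by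
        ext i j
        rw [Matrix.submatrix_apply, Fin.succAbove_last, Matrix.updateRow_ne
          (by exact (Fin.castSucc_lt_last i).ne)]
        rw [hA]
        have hjj : (j:ℕ) ≠ n' + 1 := by have := j.isLt; omega
        simp [hjj]
      rw [hminor, ← RingHom.map_det]
      ring_nf
      simp [pow_add, mul_comm]
  · -- part (ii)
    intro n m hm1 hm2
    have hBn1 : -1 ≤ B n := by
      have hmem : B n ∈ Set.range B := ⟨n, rfl⟩
      rw [hBrange] at hmem
      obtain ⟨κ, hκ1, hκ2⟩ := hmem
      have := bmono' (-1) κ le_rfl hκ1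
      omega
    -- find k with b (k-1) = B n < b k
    obtain ⟨κ, hκ1, hκ2⟩ : ∃ κ : ℤ, -1 ≤ κ ∧ b κ = B n := by
      have hmem : B n ∈ Set.range B := ⟨n, rfl⟩
      rwa [hBrange] at hmem
    have hex : ∃ j : ℕ, B n < b (j:ℤ) := by
      refine ⟨2 * ((B n).toNat + 1), ?_⟩
      have := bgrow ((B n).toNat + 1)
      push_cast at this ⊢
      omega
    obtain ⟨k, hk2, hkmin⟩ : ∃ k : ℕ, B n < b (k:ℤ) ∧ ∀ j : ℕ, j < k → ¬ (B n < b (j:ℤ)) :=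
      ⟨Nat.find hex, Nat.find_spec hex, fun j hj => Nat.find_min hex hj⟩
    have hκk : κ < (k:ℤ) := by
      by_contra hcon
      push_neg at hcon
      have := bmono' (k:ℤ) κ (by have := bnat k; omega) hcon
      omega
    have hk1 : b ((k:ℤ) - 1) = B n := by
      have hge : B n ≤ b ((k:ℤ) - 1) := hκ2 ▸ bmono' κ ((k:ℤ)-1) hκ1 (by omega)
      have hle : b ((k:ℤ) - 1) ≤ B n := by
        rcases Nat.eq_zero_or_pos k with hk0 | hkpos
        · rw [hk0]
          norm_num [hbneg]
          omega
        · obtain ⟨k', rfl⟩ : ∃ k'', k = k'' + 1 := ⟨k - 1, by omega⟩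
          have := hkmin k' (by omega)
          rw [show ((k'+1:ℕ):ℤ) - 1 = (k':ℤ) from by push_cast; ring]
          omega
      omega
    have hnext : B (n+1) ≤ b (k:ℤ) := by
      have hmem : b (k:ℤ) ∈ Set.range B := by
        rw [hBrange]
        exact ⟨(k:ℤ), by omega, rfl⟩
      obtain ⟨nn, hnn⟩ := hmem
      have hlt : n < nn := by
        rw [← hnn] at hk2
        exact hBmono.lt_iff_lt.mp hk2
      rw [← hnn]
      exact hBmono.monotone (by omega)
    -- now m ≥ 1
    obtain ⟨n', rfl⟩ : ∃ n'', m = n'' + 1 := ⟨m - 1, by omega⟩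
    rw [hp n']
    set A : Matrix (Fin (n'+2)) (Fin (n'+2)) (Polynomial K) :=
      Matrix.of (fun i j : Fin (n'+2) =>
        if (j : ℕ) = n' + 1 then Polynomial.X ^ (i : ℕ)
        else Polynomial.C (PowerSeries.coeff ((i : ℕ) + (j : ℕ)) f)) with hA
    have hDlt : D k < n' + 1 := by
      have h1 := hDcast k
      rw [hk1] at h1
      push_cast at hm1 hm2
      omega
    set j₀ : Fin (n'+2) := ⟨D k, by omega⟩ with hj₀
    set c : Fin (n'+2) → Polynomial K := fun j =>
      if (j:ℕ) = n' + 1 then 0 else Polynomial.C ((r k).coeff (j:ℕ)) with hc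
    have hj₀v : ((j₀ : Fin (n'+2)) : ℕ) = D k := rfl
    have hcj₀ : c j₀ = 1 := by
      simp only [hc, hj₀v]
      rw [if_neg (by omega), hrtop k, Polynomial.C_1]
    have hdup := Matrix.det_updateCol_sum A j₀ c
    rw [hcj₀, one_smul] at hdup
    rw [← hdup]
    apply Matrix.det_eq_zero_of_column_eq_zero j₀
    intro i
    rw [Matrix.updateCol_self]
    -- the combination of columns vanishes
    have hsummand : ∀ j : Fin (n'+2), c j • A i j
        = Polynomial.C ((if (j:ℕ) = n' + 1 then 0 else (r k).coeff (j:ℕ))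
            * PowerSeries.coeff ((j:ℕ) + (i:ℕ)) f) := by
      intro j
      by_cases hj : (j:ℕ) = n' + 1
      · simp [hc, hj]
      · rw [hc, hA]
        simp only [smul_eq_mul, Matrix.of_apply, if_neg hj]
        rw [← _root_.map_mul, Nat.add_comm (i:ℕ) (j:ℕ)]
    rw [Finset.sum_congr rfl (fun j _ => hsummand j)]
    rw [Fin.sum_univ_eq_sum_range
      (fun j => Polynomial.C ((if j = n' + 1 then 0 else (r k).coeff j)
        * PowerSeries.coeff (j + (i:ℕ)) f))]
    rw [← map_sum]
    have hcoefftop : (r k).coeff (n'+1) = 0 := hrhi k (n'+1) (by omega)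
    have hz : ∑ j ∈ Finset.range (n'+2), (if j = n' + 1 then 0 else (r k).coeff j)
        * PowerSeries.coeff (j + (i:ℕ)) f
        = ∑ j ∈ Finset.range (n'+2), (r k).coeff j * PowerSeries.coeff (j + (i:ℕ)) f := by
      apply Finset.sum_congr rfl
      intro j hj
      by_cases h : j = n' + 1
      · rw [h, if_pos rfl, hcoefftop, zero_mul]
      · rw [if_neg h]
    rw [hz]
    have := key8 k (i:ℕ) (n'+1) ?_ (by omega)
    · rw [this, map_zero]
    · have hi : (i:ℕ) < n' + 2 := i.isLt
      push_cast at hm2 ⊢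
      omega
end
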